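/- arXiv:1406.0449 — 9 statements merged into one kernel-verified Lean document; each statement's English description precedes it below -/
import Mathlib

section
/- Consider the fixed-m uniform WARM: for integers n ≥ 3 and 2 ≤ m ≤ n−1, let p(A) = 1/C(n,m) for every A ⊆ [n] with |A| = m, and p(A) = 0 otherwise. Then the equilibrium (1/n, …, 1/n) is linearly stable if and only if α < m(n−1)/(n(m−1)), and critical if and only if α = m(n−1)/(n(m−1)). -/
open Finset

noncomputable section

/-- Membership in the simplex `Δ`. -/
def InSimplex {ι : Type*} [Fintype ι] (v : ι → ℝ) : Prop :=
  (∀ i, 0 ≤ v i) ∧ ∑ i, v i = 1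

/-- A WARM weight: a probability distribution on the subsets of the colour set,
giving no mass to the empty set. -/
def IsWarmWeight {ι : Type*} [Fintype ι] [DecidableEq ι] (p : Finset ι → ℝ) : Prop :=
  p ∅ = 0 ∧ (∀ A, 0 ≤ p A ∧ p A ≤ 1) ∧ ∑ A : Finset ι, p A = 1

/-- The WARM vector field `F`. -/
def warmF {ι : Type*} [Fintype ι] [DecidableEq ι] (α : ℝ) (p : Finset ι → ℝ)
    (v : ι → ℝ) (i : ι) : ℝ :=
  -v i + ∑ A ∈ Finset.univ.filter (fun A : Finset ι => i ∈ A),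
      p A * v i ^ α / (∑ j ∈ A, v j ^ α)

/-- The Jacobian matrix `D(v)`. -/
def warmD {ι : Type*} [Fintype ι] [DecidableEq ι] (α : ℝ) (p : Finset ι → ℝ)
    (v : ι → ℝ) : Matrix ι ι ℝ :=
  Matrix.of fun i k =>
    if i = k then
      -1 + α * v i ^ (α - 1) *
        ∑ A ∈ Finset.univ.filter (fun A : Finset ι => i ∈ A),
          p A * ((∑ j ∈ A, v j ^ α) - v i ^ α) / (∑ j ∈ A, v j ^ α) ^ 2
    else
      -(α * v k ^ (α - 1) * v i ^ α *
        ∑ A ∈ Finset.univ.filter (fun A : Finset ι => i ∈ A ∧ k ∈ A),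
          p A / (∑ j ∈ A, v j ^ α) ^ 2)

/-- `μ ∈ ℂ` is an eigenvalue of the real matrix `M`, i.e. a root of its
characteristic polynomial. -/
def IsEigenvalue {ι : Type*} [Fintype ι] [DecidableEq ι] (M : Matrix ι ι ℝ) (μ : ℂ) : Prop :=
  (M.charpoly.map (algebraMap ℝ ℂ)).IsRoot μ

/-- Linear stability: every complex eigenvalue has negative real part. -/
def LinStable {ι : Type*} [Fintype ι] [DecidableEq ι] (M : Matrix ι ι ℝ) : Prop :=
  ∀ μ : ℂ, IsEigenvalue M μ → μ.re < 0

/-- Linear instability: some eigenvalue has positive real part. -/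
def LinUnstable {ι : Type*} [Fintype ι] [DecidableEq ι] (M : Matrix ι ι ℝ) : Prop :=
  ∃ μ : ℂ, IsEigenvalue M μ ∧ 0 < μ.re

/-- Critical: neither linearly stable nor linearly unstable. -/
def CriticalPt {ι : Type*} [Fintype ι] [DecidableEq ι] (M : Matrix ι ι ℝ) : Prop :=
  ¬ LinStable M ∧ ¬ LinUnstable M


/-- The fixed-`m` uniform WARM weight: uniform over all subsets of size `m`. -/
def unifP (n m : ℕ) : Finset (Fin n) → ℝ :=
  fun A => if A.card = m then 1 / (n.choose m : ℝ) else 0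

/-! ### Auxiliary lemmas -/

lemma card_filter_subset_card {ι : Type*} [Fintype ι] [DecidableEq ι] (s : Finset ι) (m : ℕ)
    (hs : s.card ≤ m) :
    (Finset.univ.filter fun A : Finset ι => s ⊆ A ∧ A.card = m).card =
      (Fintype.card ι - s.card).choose (m - s.card) := by
  have h1 : ((sᶜ : Finset ι).powersetCard (m - s.card)).card
      = (Fintype.card ι - s.card).choose (m - s.card) := by
    rw [Finset.card_powersetCard, Finset.card_compl]
  rw [← h1]
  apply Finset.card_bij (fun A _ => A \ s)
  · rintro A hA
    simp only [Finset.mem_filter] at hA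
    rw [Finset.mem_powersetCard]
    refine ⟨fun x hx => ?_, ?_⟩
    · simp only [Finset.mem_sdiff] at hx
      simp [hx.2]
    · rw [Finset.card_sdiff_of_subset hA.2.1, hA.2.2]
  · rintro A hA B hB h
    simp only [Finset.mem_filter] at hA hB
    rw [← Finset.sdiff_union_of_subset hA.2.1, ← Finset.sdiff_union_of_subset hB.2.1, h]
  · rintro B hB
    rw [Finset.mem_powersetCard] at hB
    have hdisj : Disjoint B s := by
      refine Finset.disjoint_left.2 fun x hx hxs => ?_
      have := hB.1 hx
      simp [hxs] at this
    refine ⟨B ∪ s, ?_, ?_⟩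
    · simp only [Finset.mem_filter, Finset.mem_univ, true_and]
      refine ⟨Finset.subset_union_right, ?_⟩
      rw [Finset.card_union_of_disjoint hdisj, hB.2]
      omega
    · rw [Finset.union_sdiff_distrib, Finset.sdiff_self, Finset.union_empty,
        Finset.sdiff_eq_self_of_disjoint hdisj]

lemma det_smul_one_add_smul_const {K : Type*} [Field K] {ι : Type*} [Fintype ι] [DecidableEq ι]
    (hcard : 2 ≤ Fintype.card ι) (a b : K) :
    Matrix.det (a • (1 : Matrix ι ι K) + b • (Matrix.of fun _ _ => (1 : K))) =
      a ^ (Fintype.card ι - 1) * (a + (Fintype.card ι : K) * b) := by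
  rcases eq_or_ne a 0 with rfl | ha
  · obtain ⟨i, j, hij⟩ := Fintype.exists_pair_of_one_lt_card (by omega : 1 < Fintype.card ι)
    rw [Matrix.det_zero_of_row_eq hij (by ext k; simp)]
    rw [zero_pow (by omega), zero_mul]
  · have key : a • (1 : Matrix ι ι K) + b • (Matrix.of fun _ _ => (1 : K)) =
        a • ((1 : Matrix ι ι K) +
          Matrix.replicateCol (Fin 1) (fun _ : ι => b / a) * Matrix.replicateRow (Fin 1) (fun _ : ι => (1:K))) := by
      ext i j
      by_cases h : i = j <;>
        · simp [h, Matrix.mul_apply, Matrix.one_apply, Matrix.replicateCol, Matrix.replicateRow,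
            Matrix.add_apply, Matrix.smul_apply]
          field_simp
    rw [key, Matrix.det_smul, show ((1 : Matrix ι ι K) + Matrix.replicateCol (Fin 1) (fun _ : ι => b / a) * Matrix.replicateRow (Fin 1) (fun _ : ι => (1:K))).det = 1 + dotProduct (fun _ : ι => (1:K)) (fun _ => b / a) by
      convert Matrix.det_one_add_replicateCol_mul_replicateRow (ι := Fin 1) (fun _ : ι => b / a) (fun _ : ι => (1:K))]
    have hdot : dotProduct (fun _ : ι => (1:K)) (fun _ => b / a) = (Fintype.card ι : K) * (b/a) := by
      simp [dotProduct, Finset.sum_const, nsmul_eq_mul]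
    rw [hdot]
    have hpow : a ^ Fintype.card ι = a ^ (Fintype.card ι - 1) * a := by
      conv_lhs => rw [show Fintype.card ι = (Fintype.card ι - 1) + 1 by omega]
      rw [pow_succ]
    rw [hpow]
    field_simp

lemma warmD_entries (n m : ℕ) (hn : 3 ≤ n) (hm : 2 ≤ m) (hmn : m ≤ n - 1) (α : ℝ)
    (i k : Fin n) :
    (if i = k then
      -1 + α * (1/(n:ℝ)) ^ (α - 1) *
        ∑ A ∈ Finset.univ.filter (fun A : Finset (Fin n) => i ∈ A),
          unifP n m A * ((∑ j ∈ A, (1/(n:ℝ)) ^ α) - (1/(n:ℝ)) ^ α) / (∑ j ∈ A, (1/(n:ℝ)) ^ α) ^ 2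
    else
      -(α * (1/(n:ℝ)) ^ (α - 1) * (1/(n:ℝ)) ^ α *
        ∑ A ∈ Finset.univ.filter (fun A : Finset (Fin n) => i ∈ A ∧ k ∈ A),
          unifP n m A / (∑ j ∈ A, (1/(n:ℝ)) ^ α) ^ 2)) =
    (if i = k then -1 + α * ((m:ℝ)-1)/m else -(α * ((m:ℝ)-1)/((m:ℝ) * ((n:ℝ)-1)))) := by
  have hmn' : m ≤ n := le_trans hmn (Nat.sub_le n 1)
  have hn0 : (0:ℝ) < n := by positivity
  have hm0 : (0:ℝ) < m := by exact_mod_cast Nat.lt_of_lt_of_le (by omega) hm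
  have hch : (0:ℝ) < (n.choose m : ℝ) := by exact_mod_cast Nat.choose_pos hmn'
  have hx : (0:ℝ) < 1/(n:ℝ) := by positivity
  set w : ℝ := (1/(n:ℝ)) ^ α with hw
  have hw0 : 0 < w := Real.rpow_pos_of_pos hx α
  have hsumA : ∀ A : Finset (Fin n), (∑ _j ∈ A, (1/(n:ℝ)) ^ α) = (A.card : ℝ) * w := by
    intro A; rw [Finset.sum_const, nsmul_eq_mul]
  have hrpow : (1/(n:ℝ)) ^ (α - 1) = w * n := by
    rw [Real.rpow_sub hx, Real.rpow_one, ← hw]; field_simp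
  by_cases h : i = k
  · simp only [h, if_pos rfl, if_true, eq_self_iff_true]
    have hterm : ∀ A ∈ Finset.univ.filter (fun A : Finset (Fin n) => k ∈ A),
        unifP n m A * ((∑ j ∈ A, (1/(n:ℝ)) ^ α) - (1/(n:ℝ)) ^ α) / (∑ j ∈ A, (1/(n:ℝ)) ^ α) ^ 2
        = if A.card = m then
            (1/(n.choose m : ℝ)) * (((m:ℝ)*w - w)/((m:ℝ)*w)^2) else 0 := by
      intro A _
      rw [hsumA A]
      unfold unifP
      by_cases hc : A.card = m
      · rw [if_pos hc, if_pos hc, hc]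
        ring
      · rw [if_neg hc, if_neg hc, zero_mul, zero_div]
    rw [Finset.sum_congr rfl hterm, ← Finset.sum_filter, Finset.sum_const, Finset.filter_filter]
    have hcount : (Finset.univ.filter fun A : Finset (Fin n) => k ∈ A ∧ A.card = m).card
        = (n-1).choose (m-1) := by
      have := card_filter_subset_card ({k} : Finset (Fin n)) m (by simpa using by omega)
      simp only [Finset.card_singleton, Fintype.card_fin, Finset.singleton_subset_iff] at this
      exact this
    rw [hcount, nsmul_eq_mul]
    have hna : (n:ℝ) * ((n-1).choose (m-1) : ℝ) = (n.choose m : ℝ) * m := by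
      have h1 : n - 1 + 1 = n := by omega
      have h2 : m - 1 + 1 = m := by omega
      have := Nat.add_one_mul_choose_eq (n-1) (m-1)
      rw [h1, h2] at this
      exact_mod_cast congrArg (Nat.cast : ℕ → ℝ) this
    rw [hrpow]
    field_simp
    linear_combination (α*((m:ℝ)-1)) * hna
  · simp only [if_neg h]
    have hterm2 : ∀ A ∈ Finset.univ.filter (fun A : Finset (Fin n) => i ∈ A ∧ k ∈ A),
        unifP n m A / (∑ j ∈ A, (1/(n:ℝ)) ^ α) ^ 2
        = if A.card = m then (1/(n.choose m : ℝ)) / ((m:ℝ)*w)^2 else 0 := by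
      intro A _
      rw [hsumA A]
      unfold unifP
      by_cases hc : A.card = m
      · rw [if_pos hc, if_pos hc, hc]
      · rw [if_neg hc, if_neg hc, zero_div]
    rw [Finset.sum_congr rfl hterm2, ← Finset.sum_filter, Finset.sum_const, Finset.filter_filter]
    have hpred : (Finset.univ.filter fun A : Finset (Fin n) => (i ∈ A ∧ k ∈ A) ∧ A.card = m)
        = Finset.univ.filter fun A : Finset (Fin n) => ({i, k} : Finset (Fin n)) ⊆ A ∧ A.card = m := by
      apply Finset.filter_congr
      intro A _
      rw [Finset.insert_subset_iff, Finset.singleton_subset_iff]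
    have hcount2 : (Finset.univ.filter fun A : Finset (Fin n) => (i ∈ A ∧ k ∈ A) ∧ A.card = m).card
        = (n-2).choose (m-2) := by
      rw [hpred, card_filter_subset_card _ _
        (by rw [Finset.card_insert_of_notMem (by simp [h]), Finset.card_singleton]; omega)]
      congr 1 <;> rw [Finset.card_insert_of_notMem (by simp [h]), Finset.card_singleton]
      · rw [Fintype.card_fin]
    rw [hcount2, nsmul_eq_mul]
    have h1n : ((n-1 : ℕ):ℝ) = (n:ℝ) - 1 := by
      rw [Nat.cast_sub (by omega)]; norm_num
    have h1m : ((m-1 : ℕ):ℝ) = (m:ℝ) - 1 := by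
      rw [Nat.cast_sub (by omega)]; norm_num
    have hA : (n:ℝ) * ((n-1).choose (m-1) : ℝ) = (n.choose m : ℝ) * m := by
      have h1 : n - 1 + 1 = n := by omega
      have h2 : m - 1 + 1 = m := by omega
      have := Nat.add_one_mul_choose_eq (n-1) (m-1)
      rw [h1, h2] at this
      exact_mod_cast congrArg (Nat.cast : ℕ → ℝ) this
    have hB : ((n:ℝ)-1) * ((n-2).choose (m-2) : ℝ) = ((n-1).choose (m-1) : ℝ) * ((m:ℝ)-1) := by
      have h1 : n - 2 + 1 = n - 1 := by omega
      have h2 : m - 2 + 1 = m - 1 := by omega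
      have := Nat.add_one_mul_choose_eq (n-2) (m-2)
      rw [h1, h2] at this
      have := congrArg (Nat.cast : ℕ → ℝ) this
      push_cast at this
      rw [h1n, h1m] at this
      exact_mod_cast this
    have hna2 : (n:ℝ) * ((n:ℝ)-1) * ((n-2).choose (m-2) : ℝ)
        = (n.choose m : ℝ) * ((m:ℝ) * ((m:ℝ)-1)) := by
      linear_combination (n:ℝ) * hB + ((m:ℝ)-1) * hA
    rw [hrpow]
    have hne1 : (n:ℝ) - 1 ≠ 0 := by
      have : (3:ℝ) ≤ n := by exact_mod_cast hn
      linarith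
    field_simp
    linear_combination (-α) * hna2

lemma eig_char (n : ℕ) (hn : 3 ≤ n) (a₀ b : ℝ)
    (M : Matrix (Fin n) (Fin n) ℝ)
    (hM : M = Matrix.of fun i k => if i = k then a₀ else -b) (μ : ℂ) :
    IsEigenvalue M μ ↔ (μ = ((a₀ + b : ℝ) : ℂ) ∨ μ = ((a₀ - ((n:ℝ)-1) * b : ℝ) : ℂ)) := by
  have hcard : Fintype.card (Fin n) = n := Fintype.card_fin n
  unfold IsEigenvalue
  rw [← Matrix.charpoly_map]
  unfold Matrix.charpoly
  have hdet : Polynomial.eval μ ((Matrix.charmatrix (M.map (algebraMap ℝ ℂ))).det)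
      = ((Polynomial.evalRingHom μ).mapMatrix (Matrix.charmatrix (M.map (algebraMap ℝ ℂ)))).det := by
    rw [← RingHom.map_det]
    rfl
  have hmat : (Polynomial.evalRingHom μ).mapMatrix (Matrix.charmatrix (M.map (algebraMap ℝ ℂ)))
      = (μ - ((a₀ + b : ℝ) : ℂ)) • (1 : Matrix (Fin n) (Fin n) ℂ)
        + ((b:ℝ) : ℂ) • (Matrix.of fun _ _ => (1:ℂ)) := by
    ext i k
    by_cases h : i = k
    · subst h
      simp [hM, Matrix.charmatrix_apply_eq, Matrix.one_apply, Matrix.add_apply]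
      push_cast
      ring
    · simp [hM, Matrix.charmatrix_apply_ne _ _ _ h, Matrix.one_apply_ne h, h, Matrix.add_apply]
  have hroot : (Matrix.charmatrix (M.map (algebraMap ℝ ℂ))).det.IsRoot μ ↔
      ((μ - ((a₀ + b : ℝ) : ℂ)) ^ (n - 1) * ((μ - ((a₀ + b : ℝ) : ℂ)) + (n:ℂ) * ((b:ℝ):ℂ)) = 0) := by
    rw [Polynomial.IsRoot, hdet, hmat,
      det_smul_one_add_smul_const (by omega : 2 ≤ Fintype.card (Fin n))]
    rw [hcard]
  rw [hroot, mul_eq_zero, pow_eq_zero_iff (by omega : n - 1 ≠ 0), sub_eq_zero]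
  constructor
  · rintro (h | h)
    · exact Or.inl h
    · right
      have : μ = ((a₀ + b : ℝ) : ℂ) - (n:ℂ) * ((b:ℝ):ℂ) := by linear_combination h
      rw [this]
      push_cast
      ring
  · rintro (h | h)
    · exact Or.inl h
    · right
      rw [h]
      push_cast
      ring

/-- **Stability of `1/n` for the fixed-`m` uniform WARM.**
The barycentre is linearly stable iff `α < m(n−1)/(n(m−1))`, critical iff equality. -/
theorem fixedm_barycentre_stability (n m : ℕ) (hn : 3 ≤ n) (hm : 2 ≤ m) (hmn : m ≤ n - 1)
    (α : ℝ) (hα : 1 < α) :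
    (LinStable (warmD α (unifP n m) (fun _ => 1 / (n : ℝ))) ↔
      α < (m : ℝ) * ((n : ℝ) - 1) / ((n : ℝ) * ((m : ℝ) - 1))) ∧
    (CriticalPt (warmD α (unifP n m) (fun _ => 1 / (n : ℝ))) ↔
      α = (m : ℝ) * ((n : ℝ) - 1) / ((n : ℝ) * ((m : ℝ) - 1))) := by
  have hn0 : (0:ℝ) < n := by positivity
  have hm0 : (0:ℝ) < m := by exact_mod_cast Nat.lt_of_lt_of_le (by omega) hm
  have hn3 : (3:ℝ) ≤ n := by exact_mod_cast hn
  have hm2 : (2:ℝ) ≤ m := by exact_mod_cast hm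
  have hne1 : (0:ℝ) < (n:ℝ) - 1 := by linarith
  have hme1 : (0:ℝ) < (m:ℝ) - 1 := by linarith
  set a₀ : ℝ := -1 + α * ((m:ℝ)-1)/m with ha₀
  set b : ℝ := α * ((m:ℝ)-1)/((m:ℝ) * ((n:ℝ)-1)) with hb
  set lam : ℝ := a₀ + b with hlam
  set M := warmD α (unifP n m) (fun _ => 1 / (n : ℝ)) with hMdef
  have hMeq : M = Matrix.of fun i k => if i = k then a₀ else -b := by
    ext i k
    simp only [hMdef, warmD, Matrix.of_apply]
    exact warmD_entries n m hn hm hmn α i k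
  have hsec : a₀ - ((n:ℝ)-1) * b = -1 := by
    rw [ha₀, hb]
    field_simp
    ring
  have heig : ∀ μ : ℂ, IsEigenvalue M μ ↔ (μ = ((lam : ℝ) : ℂ) ∨ μ = -1) := by
    intro μ
    rw [eig_char n hn a₀ b M hMeq μ, hsec, ← hlam]
    norm_num
  have hstable : LinStable M ↔ lam < 0 := by
    constructor
    · intro h
      have := h ((lam : ℝ) : ℂ) ((heig _).2 (Or.inl rfl))
      simpa using this
    · intro hl μ hμ
      rcases (heig μ).1 hμ with rfl | rfl
      · simpa using hl
      · norm_num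
  have hunstable : LinUnstable M ↔ 0 < lam := by
    constructor
    · rintro ⟨μ, hμ, hre⟩
      rcases (heig μ).1 hμ with rfl | rfl
      · simpa using hre
      · norm_num at hre
    · intro hl
      exact ⟨((lam : ℝ) : ℂ), (heig _).2 (Or.inl rfl), by simpa⟩
  have hcrit : CriticalPt M ↔ lam = 0 := by
    unfold CriticalPt
    rw [hstable, hunstable]
    constructor
    · rintro ⟨h1, h2⟩
      push_neg at h1 h2
      linarith
    · intro h
      constructor <;> simp [h]
  have hden1 : (0:ℝ) < (m:ℝ) * ((n:ℝ)-1) := by positivity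
  have hden2 : (0:ℝ) < (n:ℝ) * ((m:ℝ)-1) := by positivity
  have hlam_eq : lam = (α*((m:ℝ)-1)*(n:ℝ) - (m:ℝ)*((n:ℝ)-1)) / ((m:ℝ)*((n:ℝ)-1)) := by
    rw [hlam, ha₀, hb]
    field_simp
    ring
  have hr : α*((m:ℝ)-1)*(n:ℝ) = α*((n:ℝ)*((m:ℝ)-1)) := by ring
  have h1 : lam < 0 ↔ α < (m : ℝ) * ((n : ℝ) - 1) / ((n : ℝ) * ((m : ℝ) - 1)) := by
    rw [hlam_eq, div_lt_iff₀ hden1, zero_mul, lt_div_iff₀ hden2]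
    constructor <;> intro <;> linarith
  have h2 : lam = 0 ↔ α = (m : ℝ) * ((n : ℝ) - 1) / ((n : ℝ) * ((m : ℝ) - 1)) := by
    rw [hlam_eq, div_eq_zero_iff, eq_div_iff hden2.ne']
    constructor
    · rintro (h | h)
      · linarith
      · exact absurd h hden1.ne'
    · intro h
      left
      linarith
  exact ⟨hstable.trans h1, hcrit.trans h2⟩

end
end

section
/- Consider the Bernoulli(p) WARM: for n ≥ 2 and a real parameter q ∈ (0,1), let p(A) = q^{|A|}(1−q)^{n−|A|}/(1−(1−q)^n) for every nonempty A ⊆ [n], and p(∅) = 0. Then the equilibrium (1/n, …, 1/n) is linearly stable if and only if α < (1 − (1−q)^n) / (Σ_{m=2}^n q^m (1−q)^{n−m} (n²/m²) C(n−2, m−2)), and critical if and only if equality holds. -/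
open Finset

noncomputable section

/-- The Bernoulli(q) WARM weight. -/
def bernP (n : ℕ) (q : ℝ) : Finset (Fin n) → ℝ :=
  fun A => if A = ∅ then 0 else q ^ A.card * (1 - q) ^ (n - A.card) / (1 - (1 - q) ^ n)

/-! ### Auxiliary lemmas -/

/-- Grouped single-cell weight. -/
def bernG (n : ℕ) (q : ℝ) (m : ℕ) : ℝ := q ^ m * (1 - q) ^ (n - m) / (1 - (1 - q) ^ n)

/-- The key sum `σ`. -/
def bernSigma (n : ℕ) (q : ℝ) : ℝ :=
  ∑ j ∈ Finset.range (n-1), ((n-2).choose j : ℝ) * (bernG n q (j+2) / ((j:ℝ)+2)^2)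

lemma det_ite_add {n : ℕ} (hn : 2 ≤ n) (a b : ℂ) :
    (Matrix.of fun i k : Fin n => (if i = k then a else 0) + b).det
      = a ^ (n - 1) * (a + n * b) := by
  rcases eq_or_ne a 0 with rfl | ha
  · rw [Matrix.det_zero_of_row_eq (i := (⟨0, by omega⟩ : Fin n)) (j := ⟨1, by omega⟩)
      (by simp [Fin.ext_iff]) (by funext k; simp)]
    rw [zero_pow (by omega), zero_mul]
  · have h1 : (Matrix.of fun i k : Fin n => (if i = k then a else 0) + b)
        = a • (1 + Matrix.replicateCol Unit (fun _ => b / a) * Matrix.replicateRow Unit (fun _ => (1:ℂ))) := by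
      ext i k
      simp only [Matrix.of_apply, Matrix.smul_apply, Matrix.add_apply, Matrix.one_apply,
        Matrix.mul_apply, Matrix.replicateCol_apply, Matrix.replicateRow_apply, Finset.sum_const,
        Finset.card_univ, smul_eq_mul]
      by_cases h : i = k <;> simp [h] <;> field_simp
    rw [h1, Matrix.det_smul, Matrix.det_one_add_replicateCol_mul_replicateRow]
    simp only [dotProduct, Finset.sum_const, Finset.card_univ, Fintype.card_fin,
      nsmul_eq_mul]
    have h2 : a ^ n = a^(n-1) * a := by rw [← pow_succ]; congr 1; omega
    rw [h2]; field_simp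

lemma eval_charpoly' {n : ℕ} (M : Matrix (Fin n) (Fin n) ℂ) (μ : ℂ) :
    M.charpoly.eval μ
      = (Matrix.of fun i k => (if i = k then μ else 0) - M i k).det := by
  have h := RingHom.map_det (Polynomial.evalRingHom μ) (Matrix.charmatrix M)
  rw [Matrix.charpoly]
  rw [show (Matrix.charmatrix M).det.eval μ
      = (Polynomial.evalRingHom μ) (Matrix.charmatrix M).det from rfl, h]
  congr 1
  ext i k
  by_cases h : i = k
  · subst h; simp [Matrix.charmatrix_apply_eq]
  · simp [Matrix.charmatrix_apply_ne _ _ _ h, h]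

lemma sum_filter_mem {n : ℕ} (i : Fin n) (f : ℕ → ℝ) :
    ∑ A ∈ univ.filter (fun A : Finset (Fin n) => i ∈ A), f A.card
      = ∑ m ∈ Finset.range n, ((n-1).choose m : ℝ) * f (m+1) := by
  have hb : ∑ B ∈ (univ.erase i).powerset, f (B.card + 1)
      = ∑ A ∈ univ.filter (fun A : Finset (Fin n) => i ∈ A), f A.card := by
    refine Finset.sum_bij' (fun B _ => insert i B) (fun A _ => A.erase i) ?_ ?_ ?_ ?_ ?_
    · intro B _; simp only [mem_filter, mem_univ, true_and]; exact mem_insert_self i B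
    · intro A _; simp only [mem_powerset]
      intro x hx; simp only [mem_erase] at hx ⊢; exact ⟨hx.1, mem_univ x⟩
    · intro B hB
      exact Finset.erase_insert (fun hiB => by
        have := mem_powerset.mp hB hiB; simp at this)
    · intro A hA
      simp only [mem_filter, mem_univ, true_and] at hA
      exact Finset.insert_erase hA
    · intro B hB
      have hiB : i ∉ B := fun hiB => by have := mem_powerset.mp hB hiB; simp at this
      rw [Finset.card_insert_of_notMem hiB]
  rw [← hb, Finset.sum_powerset_apply_card (fun m => f (m+1))]
  have hc : #(univ.erase i) = n - 1 := by
    rw [Finset.card_erase_of_mem (mem_univ i), Finset.card_univ, Fintype.card_fin]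
  rw [hc, show (n-1)+1 = n from by have := i.pos; omega]
  refine Finset.sum_congr rfl fun m _ => ?_
  rw [nsmul_eq_mul]

lemma sum_filter_pair {n : ℕ} {i k : Fin n} (hik : i ≠ k) (f : ℕ → ℝ) :
    ∑ A ∈ univ.filter (fun A : Finset (Fin n) => i ∈ A ∧ k ∈ A), f A.card
      = ∑ m ∈ Finset.range (n-1), ((n-2).choose m : ℝ) * f (m+2) := by
  have hki : k ∈ univ.erase i := by simp [Ne.symm hik]
  have hb : ∑ B ∈ ((univ.erase i).erase k).powerset, f (B.card + 2)
      = ∑ A ∈ univ.filter (fun A : Finset (Fin n) => i ∈ A ∧ k ∈ A), f A.card := by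
    refine Finset.sum_bij' (fun B _ => insert i (insert k B)) (fun A _ => (A.erase i).erase k)
      ?_ ?_ ?_ ?_ ?_
    · intro B _; simp only [mem_filter, mem_univ, true_and]
      exact ⟨mem_insert_self i _, mem_insert_of_mem (mem_insert_self k B)⟩
    · intro A _; simp only [mem_powerset]
      intro x hx; simp only [mem_erase] at hx ⊢
      exact ⟨hx.1, hx.2.1, mem_univ x⟩
    · intro B hB
      have hB' := mem_powerset.mp hB
      have hkB : k ∉ B := fun h => by have := hB' h; simp at this
      have hiB : i ∉ insert k B := by
        simp only [mem_insert]; rintro (rfl | h)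
        · exact hik rfl
        · have := hB' h; simp at this
      show ((insert i (insert k B)).erase i).erase k = B
      rw [Finset.erase_insert hiB, Finset.erase_insert hkB]
    · intro A hA
      simp only [mem_filter, mem_univ, true_and] at hA
      have hkA : k ∈ A.erase i := by simp [Ne.symm hik, hA.2]
      show insert i (insert k ((A.erase i).erase k)) = A
      rw [Finset.insert_erase hkA, Finset.insert_erase hA.1]
    · intro B hB
      have hB' := mem_powerset.mp hB
      have hkB : k ∉ B := fun h => by have := hB' h; simp at this
      have hiB : i ∉ insert k B := by
        simp only [mem_insert]; rintro (rfl | h)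
        · exact hik rfl
        · have := hB' h; simp at this
      rw [Finset.card_insert_of_notMem hiB, Finset.card_insert_of_notMem hkB]
  rw [← hb, Finset.sum_powerset_apply_card (fun m => f (m+2))]
  have hn2 : 2 ≤ n := by
    by_contra h
    push_neg at h
    interval_cases n
    · exact i.elim0
    · exact hik (Subsingleton.elim i k)
  have hc : #((univ.erase i).erase k) = n - 2 := by
    rw [Finset.card_erase_of_mem hki, Finset.card_erase_of_mem (mem_univ i),
      Finset.card_univ, Fintype.card_fin]
    omega
  rw [hc, show (n-2)+1 = n-1 from by omega]
  refine Finset.sum_congr rfl fun m _ => ?_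
  rw [nsmul_eq_mul]

lemma warmD_apply {n : ℕ} (hn : 2 ≤ n) (q α : ℝ) :
    warmD α (bernP n q) (fun _ => 1/(n:ℝ)) = Matrix.of (fun i j : Fin n =>
      if i = j then -1 + α * n * ((n:ℝ)-1) * bernSigma n q
      else -(α * n * bernSigma n q)) := by
  have hn0 : (0:ℝ) < n := by
    have : (0:ℕ) < n := by omega
    exact_mod_cast this
  obtain ⟨t, ht⟩ : ∃ t, (1/(n:ℝ)) ^ α = t := ⟨_, rfl⟩
  have htpos : 0 < t := ht ▸ Real.rpow_pos_of_pos (by positivity) α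
  have ht0 : t ≠ 0 := ne_of_gt htpos
  have hsum : ∀ A : Finset (Fin n), (∑ _l ∈ A, (1/(n:ℝ)) ^ α) = (A.card : ℝ) * t := by
    intro A; rw [Finset.sum_const, nsmul_eq_mul, ht]
  have hpow : (1/(n:ℝ)) ^ (α - 1) = n * t := by
    rw [Real.rpow_sub (by positivity), Real.rpow_one, ht]
    field_simp
  ext i j
  simp only [warmD, Matrix.of_apply]
  by_cases h : i = j
  · subst h
    rw [if_pos rfl, if_pos rfl]
    have hstep : ∑ A ∈ univ.filter (fun A : Finset (Fin n) => i ∈ A),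
          bernP n q A * ((∑ _l ∈ A, (1/(n:ℝ)) ^ α) - (1/(n:ℝ)) ^ α)
            / (∑ _l ∈ A, (1/(n:ℝ)) ^ α) ^ 2
        = ∑ A ∈ univ.filter (fun A : Finset (Fin n) => i ∈ A),
            (fun m : ℕ => bernG n q m * ((m:ℝ) * t - t) / ((m:ℝ) * t)^2) A.card := by
      refine Finset.sum_congr rfl fun A hA => ?_
      have hiA : i ∈ A := (mem_filter.mp hA).2
      have hAne : A ≠ ∅ := Finset.ne_empty_of_mem hiA
      rw [hsum A, ht, bernP, if_neg hAne]
      rfl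
    rw [hstep,
      sum_filter_mem i (fun m : ℕ => bernG n q m * ((m:ℝ) * t - t) / ((m:ℝ) * t)^2), hpow]
    rw [show Finset.range n = Finset.range ((n-1)+1) from by congr 1; omega,
      Finset.sum_range_succ']
    have hzero : ((n-1).choose 0 : ℝ) *
        (bernG n q (0+1) * (((0+1 : ℕ):ℝ) * t - t) / (((0+1 : ℕ):ℝ) * t)^2) = 0 := by
      norm_num
    rw [hzero, add_zero]
    have hmain : α * ((n:ℝ) * t) * ∑ m ∈ Finset.range (n-1), ((n-1).choose (m+1) : ℝ) *
          (bernG n q (m+1+1) * (((m+1+1 : ℕ):ℝ) * t - t) / (((m+1+1 : ℕ):ℝ) * t)^2)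
        = α * n * ((n:ℝ)-1) * bernSigma n q := by
      rw [bernSigma, Finset.mul_sum, Finset.mul_sum]
      refine Finset.sum_congr rfl fun m _ => ?_
      have hcast : ((n-1).choose (m+1) : ℝ) * ((m:ℝ)+1)
          = ((n:ℝ)-1) * ((n-2).choose m : ℝ) := by
        have hnat : (n-1) * (n-2).choose m = (n-1).choose (m+1) * (m+1) := by
          have h0 := Nat.add_one_mul_choose_eq (n-2) m
          rwa [show n-2+1 = n-1 from by omega] at h0
        have hcc := congrArg (Nat.cast : ℕ → ℝ) hnat
        push_cast at hcc
        rw [Nat.cast_sub (by omega : 1 ≤ n), Nat.cast_one] at hcc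
        linarith [hcc]
      have hx2 : ((m:ℝ)+2) ≠ 0 := by positivity
      calc α * ((n:ℝ) * t) * (((n-1).choose (m+1) : ℝ) *
            (bernG n q (m+1+1) * (((m+1+1 : ℕ):ℝ) * t - t) / (((m+1+1 : ℕ):ℝ) * t)^2))
          = α * (n:ℝ) * (((n-1).choose (m+1) : ℝ) * ((m:ℝ)+1)) *
              (bernG n q (m+2) / ((m:ℝ)+2)^2) := by
            push_cast
            rw [show m+1+1 = m+2 from rfl]
            field_simp
            ring
        _ = α * n * ((n:ℝ)-1) * (((n-2).choose m : ℝ)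
              * (bernG n q (m+2) / ((m:ℝ)+2)^2)) := by
            rw [hcast]; ring
    rw [hmain]
  · rw [if_neg h, if_neg h]
    have hstep : ∑ A ∈ univ.filter (fun A : Finset (Fin n) => i ∈ A ∧ j ∈ A),
          bernP n q A / (∑ _l ∈ A, (1/(n:ℝ)) ^ α) ^ 2
        = ∑ A ∈ univ.filter (fun A : Finset (Fin n) => i ∈ A ∧ j ∈ A),
            (fun m : ℕ => bernG n q m / ((m:ℝ) * t)^2) A.card := by
      refine Finset.sum_congr rfl fun A hA => ?_
      have hiA : i ∈ A := ((mem_filter.mp hA).2).1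
      have hAne : A ≠ ∅ := Finset.ne_empty_of_mem hiA
      rw [hsum A, bernP, if_neg hAne]
      rfl
    rw [hstep, sum_filter_pair h (fun m : ℕ => bernG n q m / ((m:ℝ) * t)^2), hpow, ht]
    have hmain : α * ((n:ℝ) * t) * t * ∑ m ∈ Finset.range (n-1), ((n-2).choose m : ℝ) *
          (bernG n q (m+2) / (((m+2 : ℕ):ℝ) * t)^2)
        = α * n * bernSigma n q := by
      rw [bernSigma, Finset.mul_sum, Finset.mul_sum]
      refine Finset.sum_congr rfl fun m _ => ?_
      have hx2 : ((m:ℝ)+2) ≠ 0 := by positivity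
      push_cast
      field_simp
    rw [hmain]

/-- eigenvalues of the matrix with `lam - d` on the diagonal and `-d` off it. -/
lemma eigen_char {n : ℕ} (hn : 2 ≤ n) (lam d : ℝ) (hld : lam = -1 + n * d) (μ : ℂ) :
    IsEigenvalue (Matrix.of (fun i j : Fin n => if i = j then lam - d else -d)) μ
      ↔ (μ = (lam:ℂ) ∨ μ = -1) := by
  have hlamC : (lam:ℂ) = -1 + (n:ℂ) * (d:ℂ) := by
    rw [hld]; push_cast; ring
  rw [IsEigenvalue, ← Matrix.charpoly_map, Polynomial.IsRoot, eval_charpoly']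
  have hdet : (Matrix.of fun i k : Fin n => (if i = k then μ else 0) -
        ((Matrix.of (fun i j : Fin n => if i = j then lam - d else -d)).map
          (algebraMap ℝ ℂ)) i k)
      = Matrix.of fun i k : Fin n => (if i = k then (μ - (lam:ℂ)) else 0) + (d:ℂ) := by
    ext i k
    by_cases h : i = k <;>
      simp [h, Matrix.map_apply] <;> push_cast <;> ring
  rw [hdet, det_ite_add hn]
  constructor
  · intro h
    rcases mul_eq_zero.mp h with h | h
    · left
      have := pow_eq_zero_iff (by omega : n-1 ≠ 0) |>.mp h
      exact sub_eq_zero.mp this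
    · right
      linear_combination h + hlamC
  · rintro (rfl | rfl)
    · rw [sub_self, zero_pow (by omega : n-1 ≠ 0), zero_mul]
    · apply mul_eq_zero.mpr
      right
      linear_combination -hlamC

/-- **Stability of `1/n` for the Bernoulli(q) WARM.**
The barycentre is linearly stable iff
`α < (1−(1−q)ⁿ)/(Σ_{m=2}^n qᵐ(1−q)^{n−m} (n²/m²) C(n−2,m−2))`, critical iff equality. -/
theorem bernoulli_barycentre_stability (n : ℕ) (hn : 2 ≤ n) (q : ℝ) (hq0 : 0 < q)
    (hq1 : q < 1) (α : ℝ) (hα : 1 < α) :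
    (LinStable (warmD α (bernP n q) (fun _ => 1 / (n : ℝ))) ↔
      α < (1 - (1 - q) ^ n) /
        ∑ m ∈ Finset.Icc 2 n,
          q ^ m * (1 - q) ^ (n - m) * ((n : ℝ) ^ 2 / (m : ℝ) ^ 2) *
            ((n - 2).choose (m - 2) : ℝ)) ∧
    (CriticalPt (warmD α (bernP n q) (fun _ => 1 / (n : ℝ))) ↔
      α = (1 - (1 - q) ^ n) /
        ∑ m ∈ Finset.Icc 2 n,
          q ^ m * (1 - q) ^ (n - m) * ((n : ℝ) ^ 2 / (m : ℝ) ^ 2) *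
            ((n - 2).choose (m - 2) : ℝ)) := by
  have hn0 : (0:ℝ) < n := by
    have : (0:ℕ) < n := by omega
    exact_mod_cast this
  have hc1 : (0:ℝ) < 1 - (1-q)^n := by
    have h1 : (1-q)^n < 1 := pow_lt_one₀ (by linarith) (by linarith) (by omega)
    linarith
  have hσ : 0 < bernSigma n q := by
    apply Finset.sum_pos
    · intro j hj
      have hj' : j < n - 1 := mem_range.mp hj
      have hch : 0 < ((n-2).choose j : ℝ) := by
        exact_mod_cast Nat.choose_pos (by omega : j ≤ n - 2)
      have hG : 0 < bernG n q (j+2) := by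
        apply div_pos (mul_pos (pow_pos hq0 _) (pow_pos (by linarith) _)) hc1
      exact mul_pos hch (div_pos hG (by positivity))
    · exact ⟨0, mem_range.mpr (by omega)⟩
  have hS : (∑ m ∈ Finset.Icc 2 n,
        q ^ m * (1 - q) ^ (n - m) * ((n : ℝ) ^ 2 / (m : ℝ) ^ 2) *
          ((n - 2).choose (m - 2) : ℝ))
      = (n:ℝ)^2 * (1 - (1-q)^n) * bernSigma n q := by
    rw [show Finset.Icc 2 n = Finset.Ico 2 (n+1) from (Finset.Ico_add_one_right_eq_Icc 2 n).symm,
      Finset.sum_Ico_eq_sum_range, show n+1-2 = n-1 from by omega,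
      bernSigma, Finset.mul_sum]
    refine Finset.sum_congr rfl fun j _ => ?_
    rw [show 2+j = j+2 from Nat.add_comm 2 j, show j+2-2 = j from by omega, bernG]
    push_cast
    field_simp
  have hMD : warmD α (bernP n q) (fun _ => 1/(n:ℝ))
      = Matrix.of (fun i j : Fin n =>
          if i = j then (-1 + α * (n:ℝ)^2 * bernSigma n q) - α * (n:ℝ) * bernSigma n q
          else -(α * (n:ℝ) * bernSigma n q)) := by
    rw [warmD_apply hn q α]
    ext i j
    by_cases h : i = j <;> simp only [Matrix.of_apply, h, if_true, if_false]
    · ring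
  have hkey : ∀ μ : ℂ, IsEigenvalue (warmD α (bernP n q) (fun _ => 1/(n:ℝ))) μ
      ↔ (μ = ((-1 + α * (n:ℝ)^2 * bernSigma n q : ℝ) : ℂ) ∨ μ = -1) := by
    intro μ
    rw [hMD]
    exact eigen_char hn _ _ (by push_cast; ring) μ
  set lam : ℝ := -1 + α * (n:ℝ)^2 * bernSigma n q with hlam
  have hstab : LinStable (warmD α (bernP n q) (fun _ => 1/(n:ℝ))) ↔ lam < 0 := by
    constructor
    · intro hs
      have := hs (lam:ℂ) ((hkey _).mpr (Or.inl rfl))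
      simpa using this
    · intro hl μ hμ
      rcases (hkey μ).mp hμ with rfl | rfl
      · simpa using hl
      · norm_num
  have hunst : LinUnstable (warmD α (bernP n q) (fun _ => 1/(n:ℝ))) ↔ 0 < lam := by
    constructor
    · rintro ⟨μ, hμ, hre⟩
      rcases (hkey μ).mp hμ with rfl | rfl
      · simpa using hre
      · norm_num at hre
    · intro hl
      exact ⟨(lam:ℂ), (hkey _).mpr (Or.inl rfl), by simpa using hl⟩
  have hcrit : CriticalPt (warmD α (bernP n q) (fun _ => 1/(n:ℝ))) ↔ lam = 0 := by
    rw [CriticalPt, hstab, hunst]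
    constructor
    · rintro ⟨h1, h2⟩
      have := not_lt.mp h1
      have := not_lt.mp h2
      linarith
    · rintro h
      constructor <;> simp [h]
  have hP : (0:ℝ) < (n:ℝ)^2 * (1 - (1-q)^n) * bernSigma n q := by positivity
  constructor
  · rw [hstab, hS, lt_div_iff₀ hP]
    constructor
    · intro h
      have h1 : α * (n:ℝ)^2 * bernSigma n q < 1 := by
        rw [hlam] at h; linarith
      nlinarith
    · intro h
      rw [hlam]
      nlinarith
  · rw [hcrit, hS, eq_div_iff (ne_of_gt hP)]
    constructor
    · intro h
      have h1 : α * (n:ℝ)^2 * bernSigma n q = 1 := by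
        rw [hlam] at h; linarith
      nlinarith
    · intro h
      rw [hlam]
      nlinarith
end
end

section
/- For the WARM star graph with n ≥ 2 edges, the equilibrium (1/n, …, 1/n) is linearly stable if and only if α < n+1, and critical if and only if α = n+1. -/
open Finset

noncomputable section

/-- The WARM star graph weight on `n` edges: each singleton and the full set get mass
`1/(n+1)`. -/
def starP (n : ℕ) : Finset (Fin n) → ℝ :=
  fun A =>
    if A = Finset.univ then 1 / ((n : ℝ) + 1)
    else if A.card = 1 then 1 / ((n : ℝ) + 1)
    else 0

/-- Determinant of a matrix with constant diagonal `a + b` and constant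
off-diagonal entries `b`. -/
lemma det_const_aux (n : ℕ) (hn : 2 ≤ n) (a b : ℂ) :
    (Matrix.of fun i k : Fin n => if i = k then a + b else b).det
      = a ^ (n - 1) * (a + n * b) := by
  rcases eq_or_ne a 0 with ha | ha
  · subst ha
    have h0 : (Matrix.of fun i k : Fin n => if i = k then (0:ℂ) + b else b).det = 0 := by
      apply Matrix.det_zero_of_row_eq (i := ⟨0, by omega⟩) (j := ⟨1, by omega⟩)
      · simp [Fin.ext_iff]
      · funext k; simp only [Matrix.of_apply]
        by_cases h1 : (⟨0, by omega⟩ : Fin n) = k <;> by_cases h2 : (⟨1, by omega⟩ : Fin n) = k <;>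
          simp [h1, h2]
    rw [h0, zero_pow (by omega), zero_mul]
  · have key : (Matrix.of fun i k : Fin n => if i = k then a + b else b)
        = a • (1 + Matrix.replicateCol (Fin 1) (fun _ : Fin n => b / a) *
            Matrix.replicateRow (Fin 1) (fun _ : Fin n => (1:ℂ))) := by
      ext i k
      simp only [Matrix.of_apply, Matrix.smul_apply, Matrix.add_apply, Matrix.mul_apply,
        Matrix.replicateCol_apply, Matrix.replicateRow_apply, Finset.sum_const, Finset.card_univ,
        Fintype.card_fin, one_smul, smul_eq_mul]
      by_cases h : i = k
      · subst h; rw [Matrix.one_apply_eq, if_pos rfl]; field_simp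
      · rw [Matrix.one_apply_ne h, if_neg h]; field_simp; ring
    rw [key, Matrix.det_smul]
    erw [Matrix.det_one_add_replicateCol_mul_replicateRow (ι := Fin 1)
      (fun _ : Fin n => b / a) (fun _ : Fin n => (1:ℂ))]
    simp only [dotProduct, Finset.sum_const, Finset.card_univ, Fintype.card_fin,
      nsmul_eq_mul, one_mul, smul_eq_mul]
    have : a ^ n = a ^ (n - 1) * a := by
      rw [← pow_succ]; congr 1; omega
    rw [this]
    field_simp

/-- The Jacobian of the star-graph WARM system at the barycentre is the matrix
with constant diagonal and constant off-diagonal entries. -/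
lemma warmD_star (n : ℕ) (hn : 2 ≤ n) (α : ℝ) :
    warmD α (starP n) (fun _ => 1 / (n : ℝ)) =
      Matrix.of fun i k : Fin n =>
        if i = k then -1 + α * ((n:ℝ) - 1) / (((n:ℝ) + 1) * n)
        else -(α / (((n:ℝ) + 1) * n)) := by
  have hn0 : (0:ℝ) < (n:ℝ) := by exact_mod_cast (by omega : 0 < n)
  have hn1 : ((n:ℝ) + 1) ≠ 0 := by positivity
  have hu : (0:ℝ) < 1 / (n:ℝ) := by positivity
  have ht : (0:ℝ) < (1 / (n:ℝ)) ^ α := Real.rpow_pos_of_pos hu α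
  have h1 : (1 / (n:ℝ)) ^ (α - 1) = (1 / (n:ℝ)) ^ α * n := by
    rw [show α - 1 = α + (-1) by ring, Real.rpow_add hu, Real.rpow_neg_one, one_div, inv_inv]
  have hsumu : (∑ _j : Fin n, (1 / (n:ℝ)) ^ α) = (n:ℝ) * (1 / (n:ℝ)) ^ α := by
    rw [Finset.sum_const, Finset.card_univ, Fintype.card_fin, nsmul_eq_mul]
  ext i k
  simp only [warmD, Matrix.of_apply]
  by_cases hik : i = k
  · rw [if_pos hik, if_pos hik]
    have hzero : ∀ A ∈ Finset.univ.filter (fun A : Finset (Fin n) => i ∈ A),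
        A ∉ ({({i} : Finset (Fin n)), Finset.univ} : Finset (Finset (Fin n))) →
        starP n A * ((∑ j ∈ A, (1 / (n:ℝ)) ^ α) - (1 / (n:ℝ)) ^ α)
          / (∑ j ∈ A, (1 / (n:ℝ)) ^ α) ^ 2 = 0 := by
      intro A hA hA'
      simp only [Finset.mem_filter, Finset.mem_univ, true_and] at hA
      simp only [Finset.mem_insert, Finset.mem_singleton, not_or] at hA'
      have hp : starP n A = 0 := by
        rw [starP, if_neg hA'.2, if_neg]
        intro hcard
        obtain ⟨a, rfl⟩ := Finset.card_eq_one.mp hcard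
        rw [Finset.mem_singleton] at hA
        exact hA'.1 (by rw [hA])
      rw [hp, zero_mul, zero_div]
    have hsub : ({({i} : Finset (Fin n)), Finset.univ} : Finset (Finset (Fin n))) ⊆
        Finset.univ.filter (fun A : Finset (Fin n) => i ∈ A) := by
      intro A hA
      simp only [Finset.mem_insert, Finset.mem_singleton] at hA
      rcases hA with rfl | rfl <;> simp
    have hne : ({i} : Finset (Fin n)) ≠ Finset.univ := by
      intro h
      have := congrArg Finset.card h
      rw [Finset.card_singleton, Finset.card_univ, Fintype.card_fin] at this
      omega
    rw [← Finset.sum_subset hsub hzero, Finset.sum_pair hne, Finset.sum_singleton, hsumu]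
    have hpuniv : starP n Finset.univ = 1 / ((n:ℝ) + 1) := by rw [starP, if_pos rfl]
    rw [hpuniv, sub_self, mul_zero, zero_div, zero_add, h1]
    field_simp
  · rw [if_neg hik, if_neg hik]
    have hmem : Finset.univ ∈ Finset.univ.filter
        (fun A : Finset (Fin n) => i ∈ A ∧ k ∈ A) := by simp
    have hz : ∀ A ∈ Finset.univ.filter (fun A : Finset (Fin n) => i ∈ A ∧ k ∈ A),
        A ≠ Finset.univ → starP n A / (∑ j ∈ A, (1 / (n:ℝ)) ^ α) ^ 2 = 0 := by
      intro A hA hA'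
      simp only [Finset.mem_filter, Finset.mem_univ, true_and] at hA
      have hp : starP n A = 0 := by
        rw [starP, if_neg hA', if_neg]
        intro hcard
        obtain ⟨a, rfl⟩ := Finset.card_eq_one.mp hcard
        simp only [Finset.mem_singleton] at hA
        exact hik (hA.1.trans hA.2.symm)
      rw [hp, zero_div]
    rw [Finset.sum_eq_single_of_mem Finset.univ hmem hz, hsumu]
    have hpuniv : starP n Finset.univ = 1 / ((n:ℝ) + 1) := by rw [starP, if_pos rfl]
    rw [hpuniv, h1]
    field_simp

/-- The eigenvalues of the star-graph Jacobian at the barycentre are exactly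
`α/(n+1) - 1` and `-1`. -/
lemma star_eig (n : ℕ) (hn : 2 ≤ n) (α : ℝ) (μ : ℂ) :
    IsEigenvalue (warmD α (starP n) (fun _ => 1 / (n : ℝ))) μ ↔
      μ = ((α / ((n:ℝ) + 1) - 1 : ℝ) : ℂ) ∨ μ = -1 := by
  have hstar := warmD_star n hn α
  have hn0 : (0:ℝ) < (n:ℝ) := by exact_mod_cast (by omega : 0 < n)
  have hn1 : ((n:ℝ) + 1) ≠ 0 := by positivity
  set D : ℝ := -1 + α * ((n:ℝ) - 1) / (((n:ℝ) + 1) * n) with hD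
  set C : ℝ := -(α / (((n:ℝ) + 1) * n)) with hC
  set Mc : Matrix (Fin n) (Fin n) ℂ :=
    (warmD α (starP n) (fun _ => 1 / (n : ℝ))).map (algebraMap ℝ ℂ) with hMc
  have hdet : Polynomial.eval μ Mc.charpoly
      = (μ - (D:ℂ) + (C:ℂ)) ^ (n - 1) * ((μ - (D:ℂ) + (C:ℂ)) + (n:ℂ) * (-(C:ℂ))) := by
    rw [← det_const_aux n hn (μ - (D:ℂ) + (C:ℂ)) (-(C:ℂ))]
    rw [Matrix.charpoly]
    simp only [← Polynomial.coe_evalRingHom]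
    rw [RingHom.map_det]
    congr 1
    ext i k
    simp only [RingHom.mapMatrix_apply, Matrix.map_apply, Matrix.of_apply, hMc, hstar]
    by_cases h : i = k
    · subst h
      simp [Matrix.charmatrix_apply_eq]
    · simp [Matrix.charmatrix_apply_ne _ _ _ h, h]
  have haR : D - C = α / ((n:ℝ) + 1) - 1 := by
    rw [hD, hC]; field_simp; ring
  have hbR : D + ((n:ℝ) - 1) * C = -1 := by
    rw [hD, hC]; field_simp; ring
  have ha : μ - (D:ℂ) + (C:ℂ) = μ - ((α / ((n:ℝ) + 1) - 1 : ℝ) : ℂ) := by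
    have := congrArg (Complex.ofReal) haR
    push_cast at this ⊢
    linear_combination -this
  have hb : (μ - (D:ℂ) + (C:ℂ)) + (n:ℂ) * (-(C:ℂ)) = μ + 1 := by
    have := congrArg (Complex.ofReal) hbR
    push_cast at this ⊢
    linear_combination -this
  unfold IsEigenvalue
  rw [← Matrix.charpoly_map _ (algebraMap ℝ ℂ), ← hMc]
  unfold Polynomial.IsRoot
  rw [hdet, hb, ha, mul_eq_zero, pow_eq_zero_iff (by omega : n - 1 ≠ 0), sub_eq_zero,
    add_eq_zero_iff_eq_neg]

/-- **Stability of `1/n` for the WARM star graph.**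
The barycentre is linearly stable iff `α < n + 1`, critical iff `α = n + 1`. -/
theorem star_barycentre_stability (n : ℕ) (hn : 2 ≤ n) (α : ℝ) (hα : 1 < α) :
    (LinStable (warmD α (starP n) (fun _ => 1 / (n : ℝ))) ↔ α < (n : ℝ) + 1) ∧
    (CriticalPt (warmD α (starP n) (fun _ => 1 / (n : ℝ))) ↔ α = (n : ℝ) + 1) := by
  have hn0 : (0:ℝ) < (n:ℝ) := by exact_mod_cast (by omega : 0 < n)
  have hpos : (0:ℝ) < (n:ℝ) + 1 := by positivity
  have hstab : LinStable (warmD α (starP n) (fun _ => 1 / (n : ℝ))) ↔ α < (n : ℝ) + 1 := by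
    constructor
    · intro h
      have h2 := h ((α / ((n:ℝ) + 1) - 1 : ℝ) : ℂ) ((star_eig n hn α _).mpr (Or.inl rfl))
      rw [Complex.ofReal_re] at h2
      have h3 : α / ((n:ℝ) + 1) < 1 := by linarith
      calc α = α / ((n:ℝ) + 1) * ((n:ℝ) + 1) := by field_simp
        _ < 1 * ((n:ℝ) + 1) := by apply mul_lt_mul_of_pos_right h3 hpos
        _ = (n:ℝ) + 1 := one_mul _
    · intro h μ hμ
      rcases (star_eig n hn α μ).mp hμ with rfl | rfl
      · rw [Complex.ofReal_re]
        have : α / ((n:ℝ) + 1) < 1 := (div_lt_one hpos).mpr h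
        linarith
      · simp
  have hunst : LinUnstable (warmD α (starP n) (fun _ => 1 / (n : ℝ))) ↔ (n : ℝ) + 1 < α := by
    constructor
    · rintro ⟨μ, hμ, hre⟩
      rcases (star_eig n hn α μ).mp hμ with rfl | rfl
      · rw [Complex.ofReal_re] at hre
        have : 1 < α / ((n:ℝ) + 1) := by linarith
        calc (n:ℝ) + 1 = 1 * ((n:ℝ) + 1) := (one_mul _).symm
          _ < α / ((n:ℝ) + 1) * ((n:ℝ) + 1) := by apply mul_lt_mul_of_pos_right this hpos
          _ = α := by field_simp
      · simp at hre; linarith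
    · intro h
      refine ⟨((α / ((n:ℝ) + 1) - 1 : ℝ) : ℂ), (star_eig n hn α _).mpr (Or.inl rfl), ?_⟩
      rw [Complex.ofReal_re]
      have : 1 < α / ((n:ℝ) + 1) := (one_lt_div hpos).mpr h
      linarith
  refine ⟨hstab, ?_⟩
  unfold CriticalPt
  rw [hstab, hunst]
  constructor
  · rintro ⟨h1, h2⟩
    exact le_antisymm (not_lt.mp h2) (not_lt.mp h1)
  · rintro rfl
    exact ⟨lt_irrefl _, lt_irrefl _⟩

end
end

section
/- For the WARM cycle graph with n ≥ 3 edges, the eigenvalues of the Jacobian D(1/n,…,1/n) are λ_j = −1 + (α/2)(1 − cos(2πj/n)) for j = 0,…,n−1. Consequently, the equilibrium (1/n, …, 1/n) is linearly stable if and only if n is odd and α < 1/cos(π/(2n))², it is critical if and only if n is odd and α = 1/cos(π/(2n))², and if n is even it is linearly unstable for every α > 1 (since α − 1 is then an eigenvalue). -/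
open Finset

noncomputable section

/-- The WARM cycle graph weight on `n` edges: the `n` sets `{i, i+1 (mod n)}` each get
mass `1/n`. -/
def cycleP (n : ℕ) : Finset (Fin n) → ℝ :=
  fun A => if ∃ i : Fin n, A = {i, finRotate n i} then 1 / (n : ℝ) else 0

namespace CycleWarm

variable (m : ℕ)

def E (k : Fin (m + 3)) : Finset (Fin (m + 3)) := {k, k + 1}

lemma one_ne_zero' : (1 : Fin (m + 3)) ≠ 0 := by
  simp [Fin.ext_iff]

lemma two_ne_zero' : (1 + 1 : Fin (m + 3)) ≠ 0 := by
  rw [Ne, Fin.ext_iff, Fin.val_add, Fin.val_one, Fin.val_zero, Nat.mod_eq_of_lt (by omega)]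
  omega

lemma add_one_ne (i : Fin (m + 3)) : i + 1 ≠ i := by
  intro h
  exact one_ne_zero' m (add_left_cancel (a := i) (by simpa using h))

lemma add_two_ne (i : Fin (m + 3)) : i + 1 + 1 ≠ i := by
  intro h
  exact two_ne_zero' m (add_left_cancel (a := i) (by rw [← add_assoc]; simpa using h))

lemma mem_E {i k : Fin (m + 3)} : i ∈ E m k ↔ i = k ∨ i = k + 1 := by
  simp [E]

lemma E_inj : Function.Injective (E m) := by
  intro k l h
  have hk : k = l ∨ k = l + 1 := by
    rw [← mem_E, ← h, mem_E]; left; rfl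
  have hl : l = k ∨ l = k + 1 := by
    rw [← mem_E, h, mem_E]; left; rfl
  rcases hk with hk | hk
  · exact hk
  rcases hl with hl | hl
  · exact hl.symm
  · exfalso; exact add_two_ne m k (by rw [← hl, ← hk])

lemma cycleP_E (k : Fin (m + 3)) : cycleP (m + 3) (E m k) = 1 / ((m + 3 : ℕ) : ℝ) := by
  rw [cycleP, if_pos]
  exact ⟨k, by simp [E]⟩

lemma sum_cycleP (Q : Finset (Fin (m + 3)) → Prop) [DecidablePred Q]
    (g : Finset (Fin (m + 3)) → ℝ) :
    ∑ A ∈ univ.filter Q, cycleP (m + 3) A * g A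
      = ∑ k : Fin (m + 3), if Q (E m k) then (1 / ((m + 3 : ℕ) : ℝ)) * g (E m k) else 0 := by
  have hzero : ∀ A ∈ univ.filter Q, A ∉ (univ.image (E m)).filter Q →
      cycleP (m + 3) A * g A = 0 := by
    intro A hA hA'
    have hni : ¬ ∃ i : Fin (m + 3), A = {i, finRotate (m + 3) i} := by
      rintro ⟨i, rfl⟩
      exact hA' (Finset.mem_filter.2 ⟨Finset.mem_image.2 ⟨i, Finset.mem_univ i, by
        simp [E]⟩, (Finset.mem_filter.1 hA).2⟩)
    rw [cycleP, if_neg hni, zero_mul]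
  rw [← Finset.sum_subset (Finset.filter_subset_filter _ (Finset.subset_univ _)) hzero,
    Finset.filter_image, Finset.sum_image (fun a _ b _ h => E_inj m h), Finset.sum_filter]
  refine Finset.sum_congr rfl fun k _ => ?_
  rw [cycleP_E]


variable (α : ℝ)

/-- The circulant matrix that `warmD` equals at the barycentre. -/
def Mc : Matrix (Fin (m + 3)) (Fin (m + 3)) ℝ :=
  Matrix.of fun i k =>
    if i = k then -1 + α / 2 else if k = i + 1 ∨ i = k + 1 then -(α / 4) else 0

lemma warmD_eq :
    warmD α (cycleP (m + 3)) (fun _ => 1 / ((m + 3 : ℕ) : ℝ)) = Mc m α := by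
  set w : ℝ := 1 / ((m + 3 : ℕ) : ℝ) with hwdef
  have hw : 0 < w := by positivity
  have ha : (0 : ℝ) < w ^ α := Real.rpow_pos_of_pos hw α
  have hb : w ^ (α - 1) * w = w ^ α := by
    rw [show w ^ α = w ^ (α - 1 + 1) by ring_nf, Real.rpow_add hw, Real.rpow_one]
  have sumE : ∀ k : Fin (m + 3), ∑ j ∈ E m k, w ^ α = 2 * w ^ α := by
    intro k
    rw [E, Finset.sum_pair (Ne.symm (add_one_ne m k))]
    ring
  ext i k
  rw [warmD, Mc]
  simp only [Matrix.of_apply]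
  split_ifs with h h2
  · -- diagonal
    subst h
    simp only [mul_div_assoc]
    rw [sum_cycleP m (fun A => i ∈ A)
      (fun A => ((∑ j ∈ A, w ^ α) - w ^ α) / (∑ j ∈ A, w ^ α) ^ 2)]
    simp only [sumE, mem_E]
    rw [← Finset.sum_filter]
    have hset : (univ.filter fun k' : Fin (m + 3) => i = k' ∨ i = k' + 1) = {i, i - 1} := by
      ext x
      simp only [Finset.mem_filter, Finset.mem_univ, true_and, Finset.mem_insert,
        Finset.mem_singleton]
      constructor
      · rintro (h | h)
        · exact Or.inl h.symm
        · right; rw [h]; abel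
      · rintro (h | h)
        · exact Or.inl h.symm
        · right; rw [h]; abel
    have hii : i ≠ i - 1 := by
      intro h
      have : i + 1 = i := by conv_lhs => rw [h]; rw [sub_add_cancel]
      exact add_one_ne m i this
    rw [hset, Finset.sum_pair hii]
    have : w * ((2 * w ^ α - w ^ α) / (2 * w ^ α) ^ 2) = w / (4 * w ^ α) := by
      field_simp
      ring
    rw [this]
    have key : α * w ^ (α - 1) * (w / (4 * w ^ α) + w / (4 * w ^ α)) = α / 2 := by
      rw [← add_div,
        show α * w ^ (α - 1) * ((w + w) / (4 * w ^ α))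
          = α * ((w ^ (α - 1) * w + w ^ (α - 1) * w) / (4 * w ^ α)) by ring, hb]
      field_simp
      ring
    rw [key]
  all_goals
    have hsum : ∑ A ∈ univ.filter (fun A : Finset (Fin (m+3)) => i ∈ A ∧ k ∈ A),
        cycleP (m + 3) A / (∑ j ∈ A, w ^ α) ^ 2
        = ∑ k' : Fin (m + 3),
            if (i = k' ∨ i = k' + 1) ∧ (k = k' ∨ k = k' + 1) then w * ((2 * w ^ α) ^ 2)⁻¹
            else 0 := by
      calc ∑ A ∈ univ.filter (fun A : Finset (Fin (m+3)) => i ∈ A ∧ k ∈ A),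
            cycleP (m + 3) A / (∑ j ∈ A, w ^ α) ^ 2
          = ∑ A ∈ univ.filter (fun A : Finset (Fin (m+3)) => i ∈ A ∧ k ∈ A),
            cycleP (m + 3) A * ((∑ j ∈ A, w ^ α) ^ 2)⁻¹ := by
            simp only [div_eq_mul_inv]
        _ = _ := by
            rw [sum_cycleP m (fun A => i ∈ A ∧ k ∈ A) (fun A => ((∑ j ∈ A, w ^ α) ^ 2)⁻¹)]
            simp only [sumE, mem_E]
            rw [← hwdef]
    rw [hsum]
  · -- adjacent
    rcases h2 with hk | hk
    · subst hk
      have hcond : ∀ k' : Fin (m+3),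
          ((i = k' ∨ i = k' + 1) ∧ (i + 1 = k' ∨ i + 1 = k' + 1)) ↔ k' = i := by
        intro k'
        constructor
        · rintro ⟨h1 | h1, h3 | h3⟩
          · exfalso; rw [← h1] at h3; exact add_one_ne m i h3
          · exact h1.symm
          · exfalso; apply add_two_ne m k'; rw [← h1]; exact h3
          · exfalso
            have h4 : i = k' := add_right_cancel h3
            rw [h4] at h1
            exact add_one_ne m k' h1.symm
        · rintro rfl
          exact ⟨Or.inl rfl, Or.inr rfl⟩
      simp only [hcond]
      rw [Finset.sum_ite_eq' Finset.univ i (fun _ => w * ((2 * w ^ α) ^ 2)⁻¹),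
        if_pos (Finset.mem_univ i)]
      rw [show α * w ^ (α - 1) * w ^ α * (w * ((2 * w ^ α) ^ 2)⁻¹)
        = α * ((w ^ (α - 1) * w) * (w ^ α * ((2 * w ^ α) ^ 2)⁻¹)) by ring, hb]
      have hval : w ^ α * (w ^ α * ((2 * w ^ α) ^ 2)⁻¹) = 4⁻¹ := by
        field_simp
        ring
      rw [hval]
      ring
    · subst hk
      have hcond : ∀ k' : Fin (m+3),
          ((k + 1 = k' ∨ k + 1 = k' + 1) ∧ (k = k' ∨ k = k' + 1)) ↔ k' = k := by
        intro k'
        constructor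
        · rintro ⟨h1 | h1, h3 | h3⟩
          · exfalso; rw [← h3] at h1; exact add_one_ne m k h1
          · exfalso; apply add_two_ne m k'; rw [← h3]; exact h1
          · exact (add_right_cancel h1).symm
          · exfalso
            have h4 : k = k' := add_right_cancel h1
            rw [h4] at h3
            exact add_one_ne m k' h3.symm
        · rintro rfl
          exact ⟨Or.inr rfl, Or.inl rfl⟩
      simp only [hcond]
      rw [Finset.sum_ite_eq' Finset.univ k (fun _ => w * ((2 * w ^ α) ^ 2)⁻¹),
        if_pos (Finset.mem_univ k)]
      rw [show α * w ^ (α - 1) * w ^ α * (w * ((2 * w ^ α) ^ 2)⁻¹)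
        = α * ((w ^ (α - 1) * w) * (w ^ α * ((2 * w ^ α) ^ 2)⁻¹)) by ring, hb]
      have hval : w ^ α * (w ^ α * ((2 * w ^ α) ^ 2)⁻¹) = 4⁻¹ := by
        field_simp
        ring
      rw [hval]
      ring
  · -- non-adjacent
    push_neg at h2
    obtain ⟨h2a, h2b⟩ := h2
    have hcond : ∀ k' : Fin (m+3),
        ¬ ((i = k' ∨ i = k' + 1) ∧ (k = k' ∨ k = k' + 1)) := by
      rintro k' ⟨h1 | h1, h3 | h3⟩
      · exact h (h1.trans h3.symm)
      · apply h2a; rw [h3, ← h1]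
      · apply h2b; rw [h1, ← h3]
      · exact h (h1.trans h3.symm)
    have hz : ∀ k' : Fin (m+3),
        (if ((i = k' ∨ i = k' + 1) ∧ (k = k' ∨ k = k' + 1)) then w * ((2 * w ^ α) ^ 2)⁻¹
         else 0) = 0 := fun k' => if_neg (hcond k')
    simp only [hz, Finset.sum_const_zero, mul_zero, neg_zero]

/-! ### Complex eigenvalue computation -/

lemma charpoly_eval {R : Type*} [CommRing R] {nn : Type*} [Fintype nn] [DecidableEq nn]
    (M : Matrix nn nn R) (μ : R) :
    M.charpoly.eval μ = (Matrix.diagonal (fun _ => μ) - M).det := by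
  rw [Matrix.charpoly, show Polynomial.eval μ ((Matrix.charmatrix M).det)
      = Polynomial.evalRingHom μ ((Matrix.charmatrix M).det) from rfl,
    RingHom.map_det]
  congr 1
  ext i j
  by_cases h : i = j
  · subst h
    simp [Matrix.charmatrix_apply_eq, Matrix.sub_apply, Matrix.diagonal_apply_eq]
  · simp [Matrix.charmatrix_apply_ne M i j h, Matrix.sub_apply, Matrix.diagonal_apply_ne _ h]

def omg : ℂ := Complex.exp (2 * Real.pi * Complex.I / ((m + 3 : ℕ) : ℂ))

def zeta (j : Fin (m + 3)) : ℂ := omg m ^ (j : ℕ)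

lemma omg_prim : IsPrimitiveRoot (omg m) (m + 3) :=
  Complex.isPrimitiveRoot_exp (m + 3) (by omega)

lemma zeta_pow_card (j : Fin (m + 3)) : zeta m j ^ (m + 3) = 1 := by
  rw [zeta, ← pow_mul, mul_comm, pow_mul, (omg_prim m).pow_eq_one, one_pow]

lemma pow_mod_card (z : ℂ) (hz : z ^ (m + 3) = 1) (a : ℕ) : z ^ (a % (m + 3)) = z ^ a := by
  conv_rhs => rw [← Nat.div_add_mod a (m + 3)]
  rw [pow_add, pow_mul, hz, one_pow, one_mul]

lemma zeta_pow_add (j x y : Fin (m + 3)) :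
    zeta m j ^ ((x + y : Fin (m + 3)) : ℕ) = zeta m j ^ (x : ℕ) * zeta m j ^ (y : ℕ) := by
  rw [Fin.val_add, pow_mod_card m _ (zeta_pow_card m j), pow_add]

lemma zeta_inj : Function.Injective (zeta m) := by
  intro a b h
  exact Fin.ext ((omg_prim m).pow_inj a.isLt b.isLt h)

def Pmat : Matrix (Fin (m + 3)) (Fin (m + 3)) ℂ :=
  Matrix.of fun i j => zeta m j ^ (i : ℕ)

lemma Pmat_det_ne_zero : (Pmat m).det ≠ 0 := by
  have hP : Pmat m = (Matrix.vandermonde (zeta m)).transpose := by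
    ext i j
    rfl
  intro h
  rw [hP, Matrix.det_transpose, Matrix.det_vandermonde_eq_zero_iff] at h
  obtain ⟨i, j, hij, hne⟩ := h
  exact hne (zeta_inj m hij)

lemma lamb_eq (j : Fin (m + 3)) :
    ((-1 + α / 2 : ℝ) : ℂ) + ((-(α / 4) : ℝ) : ℂ) * zeta m j ^ (m + 2)
      + ((-(α / 4) : ℝ) : ℂ) * zeta m j
      = (((-1 + α / 2 * (1 - Real.cos (2 * Real.pi * ((j : ℕ) : ℝ) / ((m + 3 : ℕ) : ℝ)))) : ℝ) : ℂ) := by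
  set θ : ℝ := 2 * Real.pi * ((j : ℕ) : ℝ) / ((m + 3 : ℕ) : ℝ) with hθ
  have hm : ((m : ℂ) + 3) ≠ 0 := by
    have h0 : ((m + 3 : ℕ) : ℂ) ≠ 0 := Nat.cast_ne_zero.2 (by omega)
    push_cast at h0
    exact h0
  have hz : zeta m j = Complex.exp ((θ : ℂ) * Complex.I) := by
    rw [zeta, omg, ← Complex.exp_nat_mul]
    congr 1
    push_cast [hθ]
    field_simp
  have hz2 : zeta m j ^ (m + 2) = Complex.exp (((-θ : ℝ) : ℂ) * Complex.I) := by
    have h1 : zeta m j ^ (m + 2) * zeta m j = 1 := by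
      rw [← pow_succ, zeta_pow_card]
    have h2 : zeta m j ^ (m + 2) = (zeta m j)⁻¹ := eq_inv_of_mul_eq_one_left h1
    rw [h2, hz, ← Complex.exp_neg]
    congr 1
    push_cast
    ring
  rw [hz2, hz, Complex.exp_mul_I, Complex.exp_mul_I]
  simp only [← Complex.ofReal_cos, ← Complex.ofReal_sin, Real.cos_neg, Real.sin_neg]
  push_cast
  ring

lemma Mc_mul_P :
    ((Mc m α).map (algebraMap ℝ ℂ)) * Pmat m
      = Pmat m * Matrix.diagonal (fun j : Fin (m + 3) =>
          (((-1 + α / 2 * (1 - Real.cos (2 * Real.pi * ((j : ℕ) : ℝ) / ((m + 3 : ℕ) : ℝ)))) : ℝ) : ℂ)) := by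
  ext i j
  rw [Matrix.mul_apply, Matrix.mul_diagonal]
  have hmap : ∀ k, ((Mc m α).map (algebraMap ℝ ℂ)) i k
      = if i = k then ((-1 + α / 2 : ℝ) : ℂ)
        else if k = i + 1 ∨ i = k + 1 then ((-(α / 4) : ℝ) : ℂ) else 0 := by
    intro k
    simp only [Matrix.map_apply, Mc, Matrix.of_apply, apply_ite (algebraMap ℝ ℂ)]
    norm_num
  simp only [hmap]
  have d3 : i ≠ i + 1 := fun h => add_one_ne m i h.symm
  have d1 : i - 1 ≠ i := by
    intro h
    apply add_one_ne m i
    conv_lhs => rw [← h]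
    rw [sub_add_cancel]
  have d2 : i - 1 ≠ i + 1 := by
    intro h
    apply add_two_ne m (i - 1)
    rw [sub_add_cancel, h]
  have hvanish : ∀ k ∈ (univ : Finset (Fin (m + 3))),
      k ∉ ({i - 1, i, i + 1} : Finset (Fin (m + 3))) →
      (if i = k then ((-1 + α / 2 : ℝ) : ℂ)
        else if k = i + 1 ∨ i = k + 1 then ((-(α / 4) : ℝ) : ℂ) else 0) * Pmat m k j = 0 := by
    intro k _ hk
    simp only [Finset.mem_insert, Finset.mem_singleton, not_or] at hk
    obtain ⟨hk1, hk2, hk3⟩ := hk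
    rw [if_neg (fun h => hk2 h.symm), if_neg, zero_mul]
    rintro (h | h)
    · exact hk3 h
    · apply hk1
      rw [h]
      abel
  rw [← Finset.sum_subset (Finset.subset_univ ({i - 1, i, i + 1} : Finset (Fin (m + 3)))) hvanish]
  have hne1 : (i - 1) ∉ ({i, i + 1} : Finset (Fin (m + 3))) := by simp [d1, d2]
  have hne2 : i ∉ ({i + 1} : Finset (Fin (m + 3))) := by simp [d3]
  rw [Finset.sum_insert hne1, Finset.sum_insert hne2, Finset.sum_singleton]
  rw [if_neg (fun h => d1 h.symm), if_pos (Or.inr (sub_add_cancel i 1).symm),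
    if_pos rfl, if_neg d3, if_pos (Or.inl rfl)]
  have e0 : Pmat m i j = zeta m j ^ (i : ℕ) := rfl
  have e1 : Pmat m (i + 1) j = zeta m j ^ (i : ℕ) * zeta m j := by
    show zeta m j ^ ((i + 1 : Fin (m + 3)) : ℕ) = _
    rw [zeta_pow_add, Fin.val_one, pow_one]
  have e2 : Pmat m (i - 1) j = zeta m j ^ (i : ℕ) * zeta m j ^ (m + 2) := by
    show zeta m j ^ ((i - 1 : Fin (m + 3)) : ℕ) = _
    rw [sub_eq_add_neg, zeta_pow_add, Fin.coe_neg_one]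
  rw [e0, e1, e2, ← lamb_eq m α j]
  ring

lemma eigen_iff (μ : ℂ) :
    ((Mc m α).charpoly.map (algebraMap ℝ ℂ)).IsRoot μ ↔
      ∃ j : Fin (m + 3), μ =
        (((-1 + α / 2 * (1 - Real.cos (2 * Real.pi * ((j : ℕ) : ℝ) / ((m + 3 : ℕ) : ℝ)))) : ℝ) : ℂ) := by
  set lam : Fin (m + 3) → ℂ := fun j =>
    (((-1 + α / 2 * (1 - Real.cos (2 * Real.pi * ((j : ℕ) : ℝ) / ((m + 3 : ℕ) : ℝ)))) : ℝ) : ℂ)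
    with hlamdef
  have hdiag : Matrix.diagonal (fun _ : Fin (m + 3) => μ) - Matrix.diagonal lam
      = Matrix.diagonal (fun j => μ - lam j) := by
    ext a b
    by_cases h : a = b
    · subst h; simp
    · simp [Matrix.diagonal_apply_ne _ h]
  have h1 : (Matrix.diagonal (fun _ : Fin (m + 3) => μ) - (Mc m α).map (algebraMap ℝ ℂ)) * Pmat m
      = Pmat m * Matrix.diagonal (fun j => μ - lam j) := by
    rw [Matrix.sub_mul, Mc_mul_P]
    have hcomm : Matrix.diagonal (fun _ : Fin (m + 3) => μ) * Pmat m
        = Pmat m * Matrix.diagonal (fun _ : Fin (m + 3) => μ) := by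
      ext a b
      rw [Matrix.diagonal_mul, Matrix.mul_diagonal]
      ring
    rw [hcomm, ← Matrix.mul_sub, hdiag]
  have hdet : (Matrix.diagonal (fun _ : Fin (m + 3) => μ) - (Mc m α).map (algebraMap ℝ ℂ)).det
      = ∏ j, (μ - lam j) := by
    have h2 := congrArg Matrix.det h1
    rw [Matrix.det_mul, Matrix.det_mul, mul_comm] at h2
    have h3 := mul_left_cancel₀ (Pmat_det_ne_zero m) h2
    rw [h3, Matrix.det_diagonal]
  rw [← Matrix.charpoly_map, Polynomial.IsRoot.def, charpoly_eval, hdet,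
    Finset.prod_eq_zero_iff]
  constructor
  · rintro ⟨j, _, hj⟩
    exact ⟨j, by rw [← sub_eq_zero]; exact hj⟩
  · rintro ⟨j, hj⟩
    exact ⟨j, Finset.mem_univ j, by rw [sub_eq_zero]; exact hj⟩


/-! ### Real analysis of the eigenvalues -/

lemma Nr_pos : (0 : ℝ) < ((m + 3 : ℕ) : ℝ) := by positivity

lemma cos_bound_aux (t : ℕ) (ht : 2 * t ≤ m + 2) :
    Real.cos (Real.pi - Real.pi / ((m + 3 : ℕ) : ℝ))
      ≤ Real.cos (2 * Real.pi * (t : ℝ) / ((m + 3 : ℕ) : ℝ)) := by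
  have hNr : (0 : ℝ) < ((m + 3 : ℕ) : ℝ) := Nr_pos m
  apply Real.cos_le_cos_of_nonneg_of_le_pi
  · positivity
  · have h0 : 0 ≤ Real.pi / ((m + 3 : ℕ) : ℝ) := by positivity
    linarith
  · rw [div_le_iff₀ hNr, sub_mul, div_mul_cancel₀ _ hNr.ne']
    have hc : 2 * (t : ℝ) ≤ (m : ℝ) + 2 := by exact_mod_cast ht
    have hNr' : ((m + 3 : ℕ) : ℝ) = (m : ℝ) + 3 := by push_cast; ring
    rw [hNr']
    nlinarith [Real.pi_pos]

lemma cos_bound (hodd : Odd (m + 3)) (j : Fin (m + 3)) :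
    Real.cos (Real.pi - Real.pi / ((m + 3 : ℕ) : ℝ))
      ≤ Real.cos (2 * Real.pi * ((j : ℕ) : ℝ) / ((m + 3 : ℕ) : ℝ)) := by
  rcases le_or_gt (2 * (j : ℕ)) (m + 2) with h | h
  · exact cos_bound_aux m _ h
  · have h4 : m + 4 ≤ 2 * (j : ℕ) := by
      obtain ⟨k, hk⟩ := hodd
      have := j.isLt
      omega
    have hle : (j : ℕ) ≤ m + 3 := le_of_lt j.isLt
    have hid : 2 * Real.pi * ((j : ℕ) : ℝ) / ((m + 3 : ℕ) : ℝ)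
        = 2 * Real.pi - 2 * Real.pi * (((m + 3 - (j : ℕ)) : ℕ) : ℝ) / ((m + 3 : ℕ) : ℝ) := by
      have hNr : (0 : ℝ) < ((m + 3 : ℕ) : ℝ) := Nr_pos m
      push_cast [Nat.cast_sub hle]
      field_simp
      ring
    rw [hid, Real.cos_two_pi_sub]
    exact cos_bound_aux m (m + 3 - (j : ℕ)) (by omega)

/-- The half-angle identity specialised to our constant. -/
lemma cos_sq_eq :
    Real.cos (Real.pi / (2 * ((m + 3 : ℕ) : ℝ))) ^ 2
      = (1 + Real.cos (Real.pi / ((m + 3 : ℕ) : ℝ))) / 2 := by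
  rw [Real.cos_sq]
  rw [show 2 * (Real.pi / (2 * ((m + 3 : ℕ) : ℝ))) = Real.pi / ((m + 3 : ℕ) : ℝ) by ring]
  ring

lemma cos_half_pos : 0 < Real.cos (Real.pi / (2 * ((m + 3 : ℕ) : ℝ))) := by
  have hNr : (0 : ℝ) < ((m + 3 : ℕ) : ℝ) := Nr_pos m
  have h3 : (3 : ℝ) ≤ ((m + 3 : ℕ) : ℝ) := by
    push_cast
    linarith [Nat.cast_nonneg (α := ℝ) m]
  apply Real.cos_pos_of_mem_Ioo
  constructor
  · have : 0 < Real.pi / (2 * ((m + 3 : ℕ) : ℝ)) := by positivity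
    linarith [Real.pi_pos]
  · rw [div_lt_div_iff₀ (by positivity) (by norm_num)]
    nlinarith [Real.pi_pos]


lemma rr_val_even (heven : Even (m + 3)) :
    -1 + α / 2 * (1 - Real.cos (2 * Real.pi * ((((m + 3) / 2 : ℕ)) : ℝ) / ((m + 3 : ℕ) : ℝ)))
      = α - 1 := by
  have hk : 2 * ((m + 3) / 2) = m + 3 := by
    obtain ⟨k, hk⟩ := heven; omega
  have hc : 2 * ((((m + 3) / 2 : ℕ)) : ℝ) = ((m + 3 : ℕ) : ℝ) := by exact_mod_cast hk
  have hNr := Nr_pos m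
  have hid : 2 * Real.pi * ((((m + 3) / 2 : ℕ)) : ℝ) / ((m + 3 : ℕ) : ℝ) = Real.pi := by
    rw [div_eq_iff hNr.ne']
    linear_combination Real.pi * hc
  rw [hid, Real.cos_pi]
  ring

lemma theta_odd (hodd : Odd (m + 3)) :
    2 * Real.pi * ((((m + 2) / 2 : ℕ)) : ℝ) / ((m + 3 : ℕ) : ℝ)
      = Real.pi - Real.pi / ((m + 3 : ℕ) : ℝ) := by
  have hk : 2 * ((m + 2) / 2) = m + 2 := by
    obtain ⟨k, hk⟩ := hodd; omega
  have hc : 2 * ((((m + 2) / 2 : ℕ)) : ℝ) = (m : ℝ) + 2 := by exact_mod_cast hk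
  have hNr := Nr_pos m
  have h32 : ((m + 3 : ℕ) : ℝ) = (m : ℝ) + 3 := by push_cast; ring
  rw [div_eq_iff hNr.ne', sub_mul, div_mul_cancel₀ _ hNr.ne']
  linear_combination Real.pi * hc - Real.pi * h32

lemma rr_j0_val (hodd : Odd (m + 3)) :
    -1 + α / 2 * (1 - Real.cos (2 * Real.pi * ((((m + 2) / 2 : ℕ)) : ℝ) / ((m + 3 : ℕ) : ℝ)))
      = -1 + α * Real.cos (Real.pi / (2 * ((m + 3 : ℕ) : ℝ))) ^ 2 := by
  rw [theta_odd m hodd, Real.cos_pi_sub, cos_sq_eq]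
  ring

end CycleWarm

/-- **Stability of `1/n` for the WARM cycle graph.**
The eigenvalues of the Jacobian at the barycentre are
`λ_j = −1 + (α/2)(1 − cos(2πj/n))`, `j = 0,…,n−1`; the barycentre is linearly stable
iff `n` is odd and `α < cos(π/(2n))⁻²`, critical iff `n` is odd with equality, and for
even `n` it is linearly unstable (with `α − 1` an eigenvalue). -/
theorem cycle_barycentre_stability (n : ℕ) (hn : 3 ≤ n) (α : ℝ) (hα : 1 < α) :
    (∀ μ : ℂ, IsEigenvalue (warmD α (cycleP n) (fun _ => 1 / (n : ℝ))) μ ↔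
      ∃ j : Fin n, μ =
        ((-1 + α / 2 * (1 - Real.cos (2 * Real.pi * ((j : ℕ) : ℝ) / (n : ℝ))) : ℝ) : ℂ)) ∧
    (LinStable (warmD α (cycleP n) (fun _ => 1 / (n : ℝ))) ↔
      Odd n ∧ α < 1 / Real.cos (Real.pi / (2 * (n : ℝ))) ^ 2) ∧
    (CriticalPt (warmD α (cycleP n) (fun _ => 1 / (n : ℝ))) ↔
      Odd n ∧ α = 1 / Real.cos (Real.pi / (2 * (n : ℝ))) ^ 2) ∧
    (Even n →
      IsEigenvalue (warmD α (cycleP n) (fun _ => 1 / (n : ℝ))) ((α - 1 : ℝ) : ℂ) ∧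
      LinUnstable (warmD α (cycleP n) (fun _ => 1 / (n : ℝ)))) := by
  obtain ⟨m, rfl⟩ : ∃ m, n = m + 3 := ⟨n - 3, by omega⟩
  clear hn
  have hD : warmD α (cycleP (m + 3)) (fun _ => 1 / ((m + 3 : ℕ) : ℝ)) = CycleWarm.Mc m α :=
    CycleWarm.warmD_eq m α
  have heig : ∀ μ : ℂ,
      IsEigenvalue (warmD α (cycleP (m + 3)) (fun _ => 1 / ((m + 3 : ℕ) : ℝ))) μ ↔
      ∃ j : Fin (m + 3), μ =
        ((-1 + α / 2 * (1 - Real.cos (2 * Real.pi * ((j : ℕ) : ℝ) / ((m + 3 : ℕ) : ℝ))) : ℝ) : ℂ) := by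
    intro μ
    rw [IsEigenvalue, hD]
    exact CycleWarm.eigen_iff m α μ
  set rr : Fin (m + 3) → ℝ := fun j =>
    -1 + α / 2 * (1 - Real.cos (2 * Real.pi * ((j : ℕ) : ℝ) / ((m + 3 : ℕ) : ℝ))) with hrr
  have hstab : LinStable (warmD α (cycleP (m + 3)) (fun _ => 1 / ((m + 3 : ℕ) : ℝ)))
      ↔ ∀ j, rr j < 0 := by
    constructor
    · intro hs j
      have := hs ((rr j : ℝ) : ℂ) ((heig _).2 ⟨j, rfl⟩)
      simpa only [Complex.ofReal_re] using this
    · intro h μ hμ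
      obtain ⟨j, rfl⟩ := (heig μ).1 hμ
      simpa only [Complex.ofReal_re] using h j
  have hunst : LinUnstable (warmD α (cycleP (m + 3)) (fun _ => 1 / ((m + 3 : ℕ) : ℝ)))
      ↔ ∃ j, 0 < rr j := by
    constructor
    · rintro ⟨μ, hμ, hre⟩
      obtain ⟨j, rfl⟩ := (heig μ).1 hμ
      exact ⟨j, by simpa only [Complex.ofReal_re] using hre⟩
    · rintro ⟨j, hj⟩
      exact ⟨((rr j : ℝ) : ℂ), (heig _).2 ⟨j, rfl⟩, by simpa only [Complex.ofReal_re] using hj⟩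
  set A := Real.cos (Real.pi / (2 * ((m + 3 : ℕ) : ℝ))) ^ 2 with hA
  have hApos : 0 < A := pow_pos (CycleWarm.cos_half_pos m) 2
  by_cases hoe : Odd (m + 3)
  · -- odd case
    set j0 : Fin (m + 3) := ⟨(m + 2) / 2, by omega⟩ with hj0def
    have hj0 : rr j0 = -1 + α * A := CycleWarm.rr_j0_val m α hoe
    have hmax : ∀ j, rr j ≤ rr j0 := by
      intro j
      have hcb := CycleWarm.cos_bound m hoe j
      have h0 : rr j0 = -1 + α / 2 * (1 - Real.cos (Real.pi - Real.pi / ((m + 3 : ℕ) : ℝ))) := by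
        show -1 + α / 2 * (1 - Real.cos (2 * Real.pi * ((((m + 2) / 2 : ℕ)) : ℝ) / ((m + 3 : ℕ) : ℝ))) = _
        rw [CycleWarm.theta_odd m hoe]
      have hrj : rr j = -1 + α / 2 * (1 - Real.cos (2 * Real.pi * ((j : ℕ) : ℝ) / ((m + 3 : ℕ) : ℝ))) := rfl
      rw [h0, hrj]
      have hα2 : (0 : ℝ) ≤ α / 2 := by linarith
      have hmul := mul_le_mul_of_nonneg_left hcb hα2
      linarith
    refine ⟨heig, ?_, ?_, ?_⟩
    · rw [hstab]
      constructor
      · intro h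
        refine ⟨hoe, ?_⟩
        have hlt := h j0
        rw [hj0] at hlt
        rw [lt_div_iff₀ hApos]
        linarith
      · rintro ⟨-, hlt⟩ j
        rw [lt_div_iff₀ hApos] at hlt
        have := hmax j
        rw [hj0] at this
        linarith
    · constructor
      · intro hc
        refine ⟨hoe, ?_⟩
        have h1 : ¬ (∀ j, rr j < 0) := fun h => hc.1 (hstab.2 h)
        have h2 : ¬ (∃ j, 0 < rr j) := fun h => hc.2 (hunst.2 h)
        push_neg at h2
        have hle : rr j0 ≤ 0 := h2 j0
        have hge : 0 ≤ rr j0 := by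
          by_contra hlt
          push_neg at hlt
          exact h1 (fun j => lt_of_le_of_lt (hmax j) hlt)
        have h0 : rr j0 = 0 := le_antisymm hle hge
        rw [hj0] at h0
        rw [eq_div_iff hApos.ne']
        linarith
      · rintro ⟨-, heq⟩
        have hαA : α * A = 1 := by
          rw [heq]
          field_simp
        have h0 : rr j0 = 0 := by rw [hj0]; linarith
        constructor
        · intro hs
          have hlt := hstab.1 hs j0
          rw [h0] at hlt
          exact lt_irrefl 0 hlt
        · intro hu
          obtain ⟨j, hj⟩ := hunst.1 hu
          have := hmax j
          linarith
    · intro he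
      exact absurd hoe (Nat.not_odd_iff_even.2 he)
  · -- even case
    have he : Even (m + 3) := Nat.not_odd_iff_even.1 hoe
    set j1 : Fin (m + 3) := ⟨(m + 3) / 2, by omega⟩ with hj1def
    have hj1 : rr j1 = α - 1 := by
      show -1 + α / 2 * (1 - Real.cos (2 * Real.pi * ((((m + 3) / 2 : ℕ)) : ℝ) / ((m + 3 : ℕ) : ℝ))) = _
      exact CycleWarm.rr_val_even m α he
    have hun : LinUnstable (warmD α (cycleP (m + 3)) (fun _ => 1 / ((m + 3 : ℕ) : ℝ))) :=
      hunst.2 ⟨j1, by rw [hj1]; linarith⟩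
    refine ⟨heig, ?_, ?_, ?_⟩
    · constructor
      · intro hs
        have hlt := hstab.1 hs j1
        rw [hj1] at hlt
        exact absurd hlt (by linarith)
      · rintro ⟨ho', -⟩
        exact absurd ho' hoe
    · constructor
      · rintro ⟨-, hnu⟩
        exact absurd hun hnu
      · rintro ⟨ho', -⟩
        exact absurd ho' hoe
    · intro _
      refine ⟨(heig _).2 ⟨j1, ?_⟩, hun⟩
      rw [show ((α - 1 : ℝ) : ℂ) = ((rr j1 : ℝ) : ℂ) by rw [hj1]]


end
end

section
/- Consider the WARM complete graph on n_v ≥ 3 vertices, with n = n_v(n_v−1)/2 colours. The point (1/n, …, 1/n) is an equilibrium; it is linearly stable if and only if n_v = 3 and α < 4/3, critical if and only if n_v = 3 and α = 4/3, and linearly unstable in all other cases. In particular, for every n_v ≥ 4, the value α − 1 > 0 is an eigenvalue of D(1/n,…,1/n) of multiplicity at least n − n_v, so (1/n,…,1/n) is linearly unstable. -/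
open Finset

noncomputable section

/-- The edges of the complete graph on `nv` vertices. -/
abbrev CompleteEdge (nv : ℕ) := {e : Sym2 (Fin nv) // ¬ e.IsDiag}

/-- The set of edges incident to the vertex `x`. -/
def incidentEdges (nv : ℕ) (x : Fin nv) : Finset (CompleteEdge nv) :=
  Finset.univ.filter (fun e => x ∈ e.1)

/-- The WARM weight of the complete graph on `nv` vertices: each vertex `x` contributes
mass `1/nv` to the set `A_x` of edges incident to `x`. -/
def completeP (nv : ℕ) : Finset (CompleteEdge nv) → ℝ :=
  fun A =>
    ((Finset.univ.filter (fun x : Fin nv => A = incidentEdges nv x)).card : ℝ) / (nv : ℝ)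


open Matrix Polynomial

/-! ### Auxiliary lemmas for the WARM complete graph -/

section Aux

lemma card_edge (nv : ℕ) : Fintype.card (CompleteEdge nv) = nv * (nv - 1) / 2 := by
  rw [Sym2.card_subtype_not_diag, Fintype.card_fin, Nat.choose_two_right]

lemma two_mul_card (nv : ℕ) : 2 * Fintype.card (CompleteEdge nv) = nv * (nv - 1) := by
  rw [card_edge]
  rcases nv with _ | m
  · simp
  · obtain ⟨k, hk⟩ := Nat.even_mul_succ_self m
    rw [Nat.mul_comm] at hk
    simp only [Nat.succ_sub_one]
    generalize hgen : (m+1) * m = t at hk ⊢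
    omega

lemma ncast {nv : ℕ} (hnv : 3 ≤ nv) :
    2 * (Fintype.card (CompleteEdge nv) : ℝ) = (nv : ℝ) * ((nv : ℝ) - 1) := by
  have h := two_mul_card nv
  have h1 : (1:ℕ) ≤ nv := by omega
  have h2 : ((2 * Fintype.card (CompleteEdge nv) : ℕ) : ℝ) = ((nv * (nv - 1) : ℕ) : ℝ) := by
    rw [h]
  push_cast [Nat.cast_sub h1] at h2
  linarith

lemma card_pos {nv : ℕ} (hnv : 3 ≤ nv) : 0 < Fintype.card (CompleteEdge nv) := by
  have h := two_mul_card nv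
  have h6 : 3 * 2 ≤ nv * (nv - 1) := Nat.mul_le_mul hnv (by omega)
  generalize hgen : nv * (nv - 1) = t at h h6
  omega

lemma npos {nv : ℕ} (hnv : 3 ≤ nv) : 0 < (Fintype.card (CompleteEdge nv) : ℝ) := by
  exact_mod_cast card_pos hnv

lemma card_ge {nv : ℕ} (hnv : 3 ≤ nv) : nv ≤ Fintype.card (CompleteEdge nv) := by
  have h := two_mul_card nv
  have h2 : nv * 2 ≤ nv * (nv - 1) := Nat.mul_le_mul_left nv (by omega)
  generalize hgen : nv * (nv - 1) = t at h h2
  omega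

lemma card_sub_eq_zero_iff {nv : ℕ} (hnv : 3 ≤ nv) :
    Fintype.card (CompleteEdge nv) - nv = 0 ↔ nv = 3 := by
  have h := two_mul_card nv
  constructor
  · intro h0
    by_contra hne
    have h2 : nv * 3 ≤ nv * (nv - 1) := Nat.mul_le_mul_left nv (by omega)
    generalize hgen : nv * (nv - 1) = t at h h2
    omega
  · rintro rfl
    have h6 : 2 * Fintype.card (CompleteEdge 3) = 6 := h.trans (by norm_num)
    omega

lemma mem_incident {nv : ℕ} {x : Fin nv} {e : CompleteEdge nv} :
    e ∈ incidentEdges nv x ↔ x ∈ e.1 := by simp [incidentEdges]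

lemma card_incident {nv : ℕ} (x : Fin nv) : (incidentEdges nv x).card = nv - 1 := by
  classical
  have h : (univ.erase x).card = (incidentEdges nv x).card := by
    apply Finset.card_bij
      (fun y hy => (⟨s(x,y), by
        rw [Sym2.mk_isDiag_iff]; exact fun hh => (Finset.mem_erase.1 hy).1 hh.symm⟩ :
        CompleteEdge nv))
    · intro y hy; simp [incidentEdges]
    · intro y hy y' hy' hyy
      have h2 := Subtype.ext_iff.1 hyy
      rw [Sym2.eq_iff] at h2
      rcases h2 with ⟨-, h⟩ | ⟨h1, h2⟩
      · exact h
      · exact h2.trans h1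
    · intro e he
      simp only [incidentEdges, mem_filter, mem_univ, true_and] at he
      obtain ⟨z, hz⟩ := e
      induction z using Sym2.ind with
      | _ a b =>
        rw [Sym2.mk_isDiag_iff] at hz
        rw [Sym2.mem_iff] at he
        rcases he with rfl | rfl
        · exact ⟨b, Finset.mem_erase.2 ⟨fun hh => hz hh.symm, mem_univ b⟩,
            by simp⟩
        · exact ⟨a, Finset.mem_erase.2 ⟨fun hh => hz hh, mem_univ a⟩,
            by simp [Subtype.ext_iff, Sym2.eq_swap]⟩
  rw [← h, Finset.card_erase_of_mem (mem_univ x), Finset.card_univ, Fintype.card_fin]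

lemma edge_card_pair {nv : ℕ} {x y : Fin nv} (h : x ≠ y) :
    (univ.filter fun e : CompleteEdge nv => x ∈ e.1 ∧ y ∈ e.1).card = 1 := by
  classical
  have : (univ.filter fun e : CompleteEdge nv => x ∈ e.1 ∧ y ∈ e.1)
      = {⟨s(x,y), by simp [h]⟩} := by
    ext e
    simp only [mem_filter, mem_univ, true_and, mem_singleton, Subtype.ext_iff]
    exact Sym2.mem_and_mem_iff h
  rw [this, card_singleton]

lemma edge_card_two' {nv : ℕ} (z : Sym2 (Fin nv)) (hz : ¬ z.IsDiag) :
    (univ.filter fun x : Fin nv => x ∈ z).card = 2 := by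
  classical
  induction z using Sym2.ind with
  | _ a b =>
    rw [Sym2.mk_isDiag_iff] at hz
    have : (univ.filter fun x : Fin nv => x ∈ s(a,b)) = {a, b} := by
      ext x; simp [Sym2.mem_iff]
    rw [this, card_insert_of_notMem (by simpa using hz), card_singleton]

lemma edge_card_two {nv : ℕ} (e : CompleteEdge nv) :
    (univ.filter fun x : Fin nv => x ∈ e.1).card = 2 := edge_card_two' e.1 e.2

lemma sum_completeP {nv : ℕ} (P : Finset (CompleteEdge nv) → Prop) [DecidablePred P]
    (g : Finset (CompleteEdge nv) → ℝ) :
    ∑ A ∈ univ.filter P, completeP nv A * g A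
      = ∑ x ∈ univ.filter (fun x : Fin nv => P (incidentEdges nv x)),
          g (incidentEdges nv x) / nv := by
  classical
  have key : ∀ A, completeP nv A * g A
      = ∑ x : Fin nv, if A = incidentEdges nv x then g A / nv else 0 := by
    intro A
    have : (completeP nv A) = ∑ x : Fin nv, (if A = incidentEdges nv x then (1:ℝ) else 0) / nv := by
      rw [completeP, Finset.card_filter]
      push_cast
      rw [Finset.sum_div]
    rw [this, Finset.sum_mul]
    congr 1; ext x
    split <;> simp [div_eq_mul_inv, mul_comm]
  rw [Finset.sum_filter, Finset.sum_filter]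
  calc ∑ A : Finset (CompleteEdge nv), (if P A then completeP nv A * g A else 0)
      = ∑ A : Finset (CompleteEdge nv), ∑ x : Fin nv,
          (if P A then if A = incidentEdges nv x then g A / nv else 0 else 0) := by
        apply Finset.sum_congr rfl; intro A _
        split
        · rw [key]
        · simp
    _ = ∑ x : Fin nv, ∑ A : Finset (CompleteEdge nv),
          (if A = incidentEdges nv x then (if P A then g A / nv else 0) else 0) := by
        rw [Finset.sum_comm]
        apply Finset.sum_congr rfl; intro x _
        apply Finset.sum_congr rfl; intro A _
        split <;> split <;> simp_all
    _ = ∑ x : Fin nv, (if P (incidentEdges nv x) then g (incidentEdges nv x) / nv else 0) := by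
        apply Finset.sum_congr rfl; intro x _
        rw [Finset.sum_ite_eq' Finset.univ (incidentEdges nv x)
          (fun A => if P A then g A / nv else 0)]
        simp

lemma sum_incident {nv : ℕ} (hnv : 3 ≤ nv) (α : ℝ) (x : Fin nv) :
    (∑ _j ∈ incidentEdges nv x, (1 / (Fintype.card (CompleteEdge nv) : ℝ)) ^ α)
      = ((nv:ℝ) - 1) * (1 / (Fintype.card (CompleteEdge nv) : ℝ)) ^ α := by
  rw [Finset.sum_const, card_incident, nsmul_eq_mul]
  congr 1
  have h1 : (1:ℕ) ≤ nv := by omega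
  push_cast [Nat.cast_sub h1]
  ring

lemma warmF_zero {nv : ℕ} (hnv : 3 ≤ nv) (α : ℝ) (i : CompleteEdge nv) :
    warmF α (completeP nv) (fun _ => 1 / (Fintype.card (CompleteEdge nv) : ℝ)) i = 0 := by
  classical
  set n : ℝ := (Fintype.card (CompleteEdge nv) : ℝ) with hn
  have hnpos : 0 < n := npos hnv
  set c : ℝ := (1/n) ^ α with hc
  have hcpos : 0 < c := Real.rpow_pos_of_pos (by positivity) _
  have hnv1 : (0:ℝ) < (nv:ℝ) - 1 := by
    have : (3:ℝ) ≤ (nv:ℝ) := by exact_mod_cast hnv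
    linarith
  have hnvpos : (0:ℝ) < (nv:ℝ) := by linarith
  rw [warmF]
  have : ∀ A ∈ univ.filter (fun A : Finset (CompleteEdge nv) => i ∈ A),
      completeP nv A * (fun _ : CompleteEdge nv => 1/n) i ^ α / (∑ j ∈ A, (fun _ : CompleteEdge nv => 1/n) j ^ α)
      = completeP nv A * (c / ∑ _j ∈ A, (1/n) ^ α) := by
    intro A _; rw [mul_div_assoc]
  rw [Finset.sum_congr rfl this, sum_completeP (fun A => i ∈ A) (fun A => c / ∑ _j ∈ A, (1/n)^α)]
  have heq : ∀ x ∈ univ.filter (fun x : Fin nv => i ∈ incidentEdges nv x),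
      (c / ∑ _j ∈ incidentEdges nv x, (1/n)^α) / (nv:ℝ) = c / (((nv:ℝ)-1) * c) / nv := by
    intro x _; rw [sum_incident hnv]
  rw [Finset.sum_congr rfl heq, Finset.sum_const]
  have hfc : (univ.filter (fun x : Fin nv => i ∈ incidentEdges nv x)).card = 2 := by
    have : univ.filter (fun x : Fin nv => i ∈ incidentEdges nv x)
        = univ.filter (fun x : Fin nv => x ∈ i.1) := by
      apply Finset.filter_congr
      intro x _
      simp [incidentEdges]
    rw [this]
    exact edge_card_two i
  rw [hfc, nsmul_eq_mul]
  have hcc : c / (((nv:ℝ) - 1) * c) = 1 / ((nv:ℝ) - 1) := by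
    rw [mul_comm, ← div_div, div_self hcpos.ne']
  rw [hcc]
  have h2n := ncast hnv
  rw [← hn] at h2n
  field_simp
  push_cast
  nlinarith [hnpos]

/-- Vertex–edge incidence matrix of the complete graph. -/
def Nmat (nv : ℕ) : Matrix (Fin nv) (CompleteEdge nv) ℝ :=
  Matrix.of fun x e => if x ∈ e.1 then 1 else 0

lemma NtN_apply {nv : ℕ} (i k : CompleteEdge nv) :
    ((Nmat nv)ᵀ * Nmat nv) i k
      = ((univ.filter fun x : Fin nv => x ∈ i.1 ∧ x ∈ k.1).card : ℝ) := by
  classical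
  rw [Matrix.mul_apply, Finset.card_filter]
  push_cast
  apply Finset.sum_congr rfl
  intro x _
  simp only [Matrix.transpose_apply, Nmat, Matrix.of_apply]
  split <;> split <;> simp_all

lemma NtN_diag {nv : ℕ} (i : CompleteEdge nv) :
    ((Nmat nv)ᵀ * Nmat nv) i i = 2 := by
  rw [NtN_apply]
  have : (univ.filter fun x : Fin nv => x ∈ i.1 ∧ x ∈ i.1)
      = univ.filter fun x : Fin nv => x ∈ i.1 := by
    apply Finset.filter_congr; intro x _; simp
  rw [this, edge_card_two]
  norm_num

theorem warmD_eq {nv : ℕ} (hnv : 3 ≤ nv) (α : ℝ) :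
    warmD α (completeP nv) (fun _ => 1 / (Fintype.card (CompleteEdge nv) : ℝ))
      = (α - 1) • (1 : Matrix (CompleteEdge nv) (CompleteEdge nv) ℝ)
        - (α / (2 * ((nv:ℝ) - 1))) • ((Nmat nv)ᵀ * Nmat nv) := by
  classical
  set n : ℝ := (Fintype.card (CompleteEdge nv) : ℝ) with hn
  have hnpos : 0 < n := npos hnv
  set c : ℝ := (1/n) ^ α with hc
  have hcpos : 0 < c := Real.rpow_pos_of_pos (by positivity) _
  have hnv1 : (0:ℝ) < (nv:ℝ) - 1 := by
    have : (3:ℝ) ≤ (nv:ℝ) := by exact_mod_cast hnv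
    linarith
  have hnvpos : (0:ℝ) < (nv:ℝ) := by linarith
  have h2n := ncast hnv
  have hpow : (1/n) ^ (α - 1) = c * n := by
    rw [Real.rpow_sub (by positivity), Real.rpow_one, hc]
    field_simp
  ext i k
  by_cases hik : i = k
  · subst hik
    simp only [warmD, Matrix.of_apply, if_pos rfl, Matrix.sub_apply, Matrix.smul_apply,
      Matrix.one_apply_eq, smul_eq_mul, mul_one, NtN_diag, eq_self_iff_true, if_true]
    have hsummand : ∀ A ∈ univ.filter (fun A : Finset (CompleteEdge nv) => i ∈ A),
        completeP nv A * ((∑ j ∈ A, (fun _ : CompleteEdge nv => 1/n) j ^ α) - (fun _ : CompleteEdge nv => 1/n) i ^ α) / (∑ j ∈ A, (fun _ : CompleteEdge nv => 1/n) j ^ α) ^ 2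
        = completeP nv A * (((∑ _j ∈ A, (1/n) ^ α) - c) / (∑ _j ∈ A, (1/n) ^ α) ^ 2) := by
      intro A _; rw [mul_div_assoc]
    rw [Finset.sum_congr rfl hsummand,
      sum_completeP (fun A => i ∈ A) (fun A => ((∑ _j ∈ A, (1/n)^α) - c) / (∑ _j ∈ A, (1/n)^α) ^ 2)]
    have heq : ∀ x ∈ univ.filter (fun x : Fin nv => i ∈ incidentEdges nv x),
        (((∑ _j ∈ incidentEdges nv x, (1/n)^α) - c) / (∑ _j ∈ incidentEdges nv x, (1/n)^α) ^ 2) / (nv:ℝ)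
          = ((((nv:ℝ)-1) * c - c) / ((((nv:ℝ)-1) * c) ^ 2)) / nv := by
      intro x _; rw [sum_incident hnv]
    rw [Finset.sum_congr rfl heq, Finset.sum_const]
    have hfc : (univ.filter (fun x : Fin nv => i ∈ incidentEdges nv x)).card = 2 := by
      have : univ.filter (fun x : Fin nv => i ∈ incidentEdges nv x)
          = univ.filter (fun x : Fin nv => x ∈ i.1) := by
        apply Finset.filter_congr; intro x _; simp [incidentEdges]
      rw [this]; exact edge_card_two i
    rw [hfc, nsmul_eq_mul]
    rw [hpow]
    clear_value n c
    have hnval : n = (nv:ℝ) * ((nv:ℝ) - 1) / 2 := by linarith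
    subst hnval
    field_simp
    ring
  · simp only [warmD, Matrix.of_apply, if_neg hik, Matrix.sub_apply, Matrix.smul_apply,
      Matrix.one_apply_ne hik, smul_eq_mul, mul_zero, zero_sub, NtN_apply]
    have hsummand : ∀ A ∈ univ.filter (fun A : Finset (CompleteEdge nv) => i ∈ A ∧ k ∈ A),
        completeP nv A / (∑ j ∈ A, (fun _ : CompleteEdge nv => 1/n) j ^ α) ^ 2
        = completeP nv A * (1 / (∑ _j ∈ A, (1/n) ^ α) ^ 2) := by
      intro A _; rw [mul_one_div]
    rw [Finset.sum_congr rfl hsummand,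
      sum_completeP (fun A => i ∈ A ∧ k ∈ A) (fun A => 1 / (∑ _j ∈ A, (1/n)^α) ^ 2)]
    have heq : ∀ x ∈ univ.filter (fun x : Fin nv => i ∈ incidentEdges nv x ∧ k ∈ incidentEdges nv x),
        (1 / (∑ _j ∈ incidentEdges nv x, (1/n)^α) ^ 2) / (nv:ℝ)
          = (1 / ((((nv:ℝ)-1) * c) ^ 2)) / nv := by
      intro x _; rw [sum_incident hnv]
    rw [Finset.sum_congr rfl heq, Finset.sum_const]
    have hfc : (univ.filter (fun x : Fin nv => i ∈ incidentEdges nv x ∧ k ∈ incidentEdges nv x))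
        = (univ.filter fun x : Fin nv => x ∈ i.1 ∧ x ∈ k.1) := by
      apply Finset.filter_congr; intro x _
      simp [incidentEdges]
    rw [hfc, nsmul_eq_mul]
    rw [hpow, ← hc]
    clear_value n c
    have hnval : n = (nv:ℝ) * ((nv:ℝ) - 1) / 2 := by linarith
    subst hnval
    field_simp

lemma eval_charpoly'_s7 {ι : Type*} [Fintype ι] [DecidableEq ι] (M : Matrix ι ι ℝ) (x : ℝ) :
    (M.charpoly).eval x = (x • (1 : Matrix ι ι ℝ) - M).det := by
  rw [Matrix.charpoly, ← Polynomial.coe_evalRingHom, RingHom.map_det]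
  congr 1
  ext i j
  by_cases h : i = j
  · subst h
    simp [charmatrix_apply_eq, Matrix.one_apply_eq]
  · simp [charmatrix_apply_ne _ _ _ h, Matrix.one_apply_ne h]

lemma NNt {nv : ℕ} (hnv : 3 ≤ nv) :
    Nmat nv * (Nmat nv)ᵀ
      = ((nv:ℝ) - 2) • (1 : Matrix (Fin nv) (Fin nv) ℝ) + Matrix.of (fun _ _ => (1:ℝ)) := by
  classical
  ext x y
  rw [Matrix.mul_apply]
  have key : ∀ z w : Fin nv, (∑ e : CompleteEdge nv, Nmat nv z e * (Nmat nv)ᵀ e w)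
      = ((univ.filter fun e : CompleteEdge nv => z ∈ e.1 ∧ w ∈ e.1).card : ℝ) := by
    intro z w
    rw [Finset.card_filter]
    push_cast
    apply Finset.sum_congr rfl
    intro e _
    simp only [Nmat, Matrix.transpose_apply, Matrix.of_apply]
    split <;> split <;> simp_all
  rw [key]
  by_cases h : x = y
  · subst h
    have : (univ.filter fun e : CompleteEdge nv => x ∈ e.1 ∧ x ∈ e.1)
        = incidentEdges nv x := by
      apply Finset.filter_congr; intro e _; simp [incidentEdges]
    rw [this, card_incident]
    have h1 : (1:ℕ) ≤ nv := by omega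
    simp only [Matrix.add_apply, Matrix.smul_apply, Matrix.one_apply_eq, Matrix.of_apply,
      smul_eq_mul, mul_one]
    push_cast [Nat.cast_sub h1]
    ring
  · rw [edge_card_pair h]
    simp only [Matrix.add_apply, Matrix.smul_apply, Matrix.one_apply_ne h, Matrix.of_apply,
      smul_eq_mul, mul_zero, zero_add, Nat.cast_one]

lemma det_aux {nv : ℕ} (hnv : 3 ≤ nv) (α x : ℝ) (hy : x - (α - 1) ≠ 0)
    (hz : x - (α * (nv:ℝ) / (2 * ((nv:ℝ) - 1)) - 1) ≠ 0) :
    (x • (1 : Matrix (CompleteEdge nv) (CompleteEdge nv) ℝ)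
      - ((α - 1) • 1 - (α / (2 * ((nv:ℝ) - 1))) • ((Nmat nv)ᵀ * Nmat nv))).det
    = (x - (α - 1)) ^ (Fintype.card (CompleteEdge nv) - nv)
      * (x - (α * (nv:ℝ) / (2 * ((nv:ℝ) - 1)) - 1)) ^ (nv - 1) * (x + 1) := by
  classical
  have hnv1 : (0:ℝ) < (nv:ℝ) - 1 := by
    have : (3:ℝ) ≤ (nv:ℝ) := by exact_mod_cast hnv
    linarith
  set β := α / (2 * ((nv:ℝ) - 1)) with hβ
  set y := x - (α - 1) with hydef
  set z := x - (α * (nv:ℝ) / (2 * ((nv:ℝ) - 1)) - 1) with hzdef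
  have hzy : z = y + β * ((nv:ℝ) - 2) := by
    rw [hzdef, hydef, hβ]; field_simp; ring
  have hzb : z = (x + 1) - (nv:ℝ) * β := by
    rw [hzdef, hβ]; field_simp; ring
  have step0 : x • (1 : Matrix (CompleteEdge nv) (CompleteEdge nv) ℝ)
      - ((α - 1) • 1 - β • ((Nmat nv)ᵀ * Nmat nv))
      = y • 1 + β • ((Nmat nv)ᵀ * Nmat nv) := by
    rw [hydef]; module
  rw [step0]
  have step1 : y • (1 : Matrix (CompleteEdge nv) (CompleteEdge nv) ℝ)
        + β • ((Nmat nv)ᵀ * Nmat nv)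
      = y • (1 + (β/y) • ((Nmat nv)ᵀ * Nmat nv)) := by
    rw [smul_add, smul_smul]
    congr 2
    field_simp
  rw [step1, det_smul]
  have step2 : (β/y) • ((Nmat nv)ᵀ * Nmat nv) = ((β/y) • (Nmat nv)ᵀ) * Nmat nv :=
    (Matrix.smul_mul _ _ _).symm
  rw [step2, det_one_add_mul_comm]
  have step3 : Nmat nv * ((β/y) • (Nmat nv)ᵀ) = (β/y) • (Nmat nv * (Nmat nv)ᵀ) :=
    Matrix.mul_smul _ _ _
  rw [step3, NNt hnv]
  have step4 : (1 : Matrix (Fin nv) (Fin nv) ℝ)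
        + (β/y) • (((nv:ℝ)-2) • 1 + Matrix.of fun _ _ => (1:ℝ))
      = y⁻¹ • (z • 1 + β • Matrix.of fun _ _ => (1:ℝ)) := by
    ext i j
    by_cases h : i = j
    · subst h
      simp only [Matrix.add_apply, Matrix.smul_apply, Matrix.one_apply_eq, Matrix.of_apply,
        smul_eq_mul, mul_one]
      rw [hzy]
      field_simp
      ring
    · simp only [Matrix.add_apply, Matrix.smul_apply, Matrix.one_apply_ne h, Matrix.of_apply,
        smul_eq_mul, mul_zero, zero_add]
      rw [div_eq_inv_mul]
      ring
  rw [step4, det_smul]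
  have step5 : z • (1 : Matrix (Fin nv) (Fin nv) ℝ) + β • (Matrix.of fun _ _ => (1:ℝ))
      = z • (1 + (β/z) • (Matrix.of fun _ _ => (1:ℝ))) := by
    rw [smul_add, smul_smul]
    congr 2
    field_simp
  rw [step5, det_smul]
  have step6 : (β/z) • (Matrix.of fun _ _ => (1:ℝ) : Matrix (Fin nv) (Fin nv) ℝ)
      = (Matrix.of fun _ _ => β/z : Matrix (Fin nv) Unit ℝ)
        * (Matrix.of fun _ _ => (1:ℝ) : Matrix Unit (Fin nv) ℝ) := by
    ext i j; simp [Matrix.mul_apply]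
  rw [step6, det_one_add_mul_comm]
  have step7 : ((Matrix.of fun _ _ => (1:ℝ) : Matrix Unit (Fin nv) ℝ)
        * (Matrix.of fun _ _ => β/z : Matrix (Fin nv) Unit ℝ))
      = Matrix.of fun _ _ => (nv:ℝ) * (β/z) := by
    ext i j; simp [Matrix.mul_apply, Finset.sum_const, Fintype.card_fin]
  rw [step7]
  have step8 : ((1 : Matrix Unit Unit ℝ) + Matrix.of fun _ _ => (nv:ℝ)*(β/z)).det
      = 1 + (nv:ℝ) * (β/z) := by
    rw [det_unique]
    simp [Matrix.one_apply]
  rw [step8, Fintype.card_fin]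
  have hcard := card_ge hnv
  have hz1 : z * (1 + (nv:ℝ) * (β/z)) = x + 1 := by
    field_simp
    linarith [hzb]
  have hyy : y ^ (Fintype.card (CompleteEdge nv)) * y⁻¹ ^ nv
      = y ^ (Fintype.card (CompleteEdge nv) - nv) := by
    nth_rewrite 1 [← Nat.sub_add_cancel hcard]
    rw [pow_add, mul_assoc, ← mul_pow, mul_inv_cancel₀ hy, one_pow, mul_one]
  have hzz : z ^ nv * (1 + (nv:ℝ) * (β/z)) = z ^ (nv-1) * (x + 1) := by
    nth_rewrite 1 [show nv = (nv - 1) + 1 by omega]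
    rw [pow_add, pow_one, mul_assoc, hz1]
  calc y ^ Fintype.card (CompleteEdge nv) * (y⁻¹ ^ nv * (z ^ nv * (1 + ↑nv * (β / z))))
      = (y ^ Fintype.card (CompleteEdge nv) * y⁻¹ ^ nv) * (z ^ nv * (1 + ↑nv * (β / z))) := by
        ring
    _ = y ^ (Fintype.card (CompleteEdge nv) - nv) * (z ^ (nv-1) * (x+1)) := by rw [hyy, hzz]
    _ = _ := by ring

lemma charpoly_eq {nv : ℕ} (hnv : 3 ≤ nv) (α : ℝ) :
    (warmD α (completeP nv) (fun _ => 1 / (Fintype.card (CompleteEdge nv) : ℝ))).charpoly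
      = (X - C (α - 1)) ^ (Fintype.card (CompleteEdge nv) - nv)
        * ((X - C (α * (nv:ℝ) / (2 * ((nv:ℝ) - 1)) - 1)) ^ (nv - 1) * (X - C (-1))) := by
  apply Polynomial.eq_of_infinite_eval_eq
  apply Set.Infinite.mono
    (s := ({α - 1, α * (nv:ℝ) / (2 * ((nv:ℝ) - 1)) - 1} : Set ℝ)ᶜ)
  · intro x hx
    simp only [Set.mem_compl_iff, Set.mem_insert_iff, Set.mem_singleton_iff, not_or] at hx
    obtain ⟨h1, h2⟩ := hx
    simp only [Set.mem_setOf_eq]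
    rw [eval_charpoly'_s7, warmD_eq hnv α,
      det_aux hnv α x (sub_ne_zero.2 h1) (sub_ne_zero.2 h2)]
    simp only [eval_mul, eval_pow, eval_sub, eval_X, eval_C]
    ring
  · exact Set.Finite.infinite_compl (Set.toFinite _)

lemma eig_iff {nv : ℕ} (hnv : 3 ≤ nv) (α : ℝ) (μ : ℂ) :
    IsEigenvalue (warmD α (completeP nv)
        (fun _ => 1 / (Fintype.card (CompleteEdge nv) : ℝ))) μ
    ↔ ((4 ≤ nv ∧ μ = ((α - 1 : ℝ) : ℂ))
        ∨ μ = ((α * (nv:ℝ) / (2 * ((nv:ℝ) - 1)) - 1 : ℝ) : ℂ) ∨ μ = -1) := by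
  rw [IsEigenvalue, charpoly_eq hnv α]
  simp only [Polynomial.map_mul, Polynomial.map_pow, Polynomial.map_sub, Polynomial.map_X,
    map_C, IsRoot.def, eval_mul, eval_pow, eval_sub, eval_X, eval_C, mul_eq_zero,
    pow_eq_zero_iff', sub_eq_zero]
  have h1 : (Fintype.card (CompleteEdge nv) - nv ≠ 0) ↔ 4 ≤ nv := by
    rw [ne_eq, card_sub_eq_zero_iff hnv]; omega
  have h2 : nv - 1 ≠ 0 := by omega
  have h3 : (algebraMap ℝ ℂ) (α - 1) = ((α - 1 : ℝ) : ℂ) := by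
    simp [Complex.coe_algebraMap]
  have h4 : (algebraMap ℝ ℂ) (α * (nv:ℝ) / (2 * ((nv:ℝ) - 1)) - 1)
      = ((α * (nv:ℝ) / (2 * ((nv:ℝ) - 1)) - 1 : ℝ) : ℂ) := by
    simp [Complex.coe_algebraMap]
  have h5 : (algebraMap ℝ ℂ) (-1 : ℝ) = (-1 : ℂ) := by simp
  rw [h3, h4, h5, h1]
  tauto

end Aux

/-- **The barycentre of the WARM complete graph.**
With `n = nv(nv−1)/2` colours, `(1/n,…,1/n)` is an equilibrium; it is linearly stable
iff `nv = 3` and `α < 4/3`, critical iff `nv = 3` and `α = 4/3`, and linearly unstable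
in all other cases.  For `nv ≥ 4`, `α − 1 > 0` is an eigenvalue of the Jacobian with
multiplicity at least `n − nv`, so the barycentre is linearly unstable. -/
theorem complete_graph_barycentre (nv : ℕ) (hnv : 3 ≤ nv) (α : ℝ) (hα : 1 < α) :
    Fintype.card (CompleteEdge nv) = nv * (nv - 1) / 2 ∧
    (∀ i, warmF α (completeP nv)
        (fun _ => 1 / (Fintype.card (CompleteEdge nv) : ℝ)) i = 0) ∧
    (LinStable (warmD α (completeP nv)
        (fun _ => 1 / (Fintype.card (CompleteEdge nv) : ℝ))) ↔ nv = 3 ∧ α < 4 / 3) ∧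
    (CriticalPt (warmD α (completeP nv)
        (fun _ => 1 / (Fintype.card (CompleteEdge nv) : ℝ))) ↔ nv = 3 ∧ α = 4 / 3) ∧
    (LinUnstable (warmD α (completeP nv)
        (fun _ => 1 / (Fintype.card (CompleteEdge nv) : ℝ))) ↔ ¬ (nv = 3 ∧ α ≤ 4 / 3)) ∧
    (4 ≤ nv →
      ((Polynomial.X - Polynomial.C (α - 1)) ^ (Fintype.card (CompleteEdge nv) - nv) ∣
        (warmD α (completeP nv)
          (fun _ => 1 / (Fintype.card (CompleteEdge nv) : ℝ))).charpoly) ∧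
      LinUnstable (warmD α (completeP nv)
        (fun _ => 1 / (Fintype.card (CompleteEdge nv) : ℝ)))) := by
  have hnvR : (3:ℝ) ≤ (nv:ℝ) := by exact_mod_cast hnv
  have hS : LinStable (warmD α (completeP nv)
      (fun _ => 1 / (Fintype.card (CompleteEdge nv) : ℝ))) ↔ nv = 3 ∧ α < 4 / 3 := by
    constructor
    · intro hS
      have hlam := hS _ ((eig_iff hnv α _).2 (Or.inr (Or.inl rfl)))
      rw [Complex.ofReal_re] at hlam
      have hnv3 : nv = 3 := by
        by_contra hne
        have h4 : 4 ≤ nv := by omega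
        have := hS _ ((eig_iff hnv α _).2 (Or.inl ⟨h4, rfl⟩))
        rw [Complex.ofReal_re] at this
        linarith
      subst hnv3
      refine ⟨rfl, ?_⟩
      norm_num at hlam
      linarith
    · rintro ⟨rfl, h43⟩
      intro μ hμ
      rcases (eig_iff hnv α μ).1 hμ with ⟨h4, _⟩ | rfl | rfl
      · omega
      · rw [Complex.ofReal_re]
        norm_num
        linarith
      · norm_num
  have hU : LinUnstable (warmD α (completeP nv)
      (fun _ => 1 / (Fintype.card (CompleteEdge nv) : ℝ))) ↔ ¬ (nv = 3 ∧ α ≤ 4 / 3) := by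
    constructor
    · rintro ⟨μ, hμ, hpos⟩ ⟨rfl, hle⟩
      rcases (eig_iff hnv α μ).1 hμ with ⟨h4, rfl⟩ | rfl | rfl
      · omega
      · rw [Complex.ofReal_re] at hpos
        norm_num at hpos
        linarith
      · norm_num at hpos
    · intro hnot
      by_cases h3 : nv = 3
      · subst h3
        have h43 : 4 / 3 < α := by
          by_contra hle
          exact hnot ⟨rfl, by linarith⟩
        refine ⟨_, (eig_iff hnv α _).2 (Or.inr (Or.inl rfl)), ?_⟩
        rw [Complex.ofReal_re]
        norm_num
        linarith
      · have h4 : 4 ≤ nv := by omega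
        refine ⟨_, (eig_iff hnv α _).2 (Or.inl ⟨h4, rfl⟩), ?_⟩
        rw [Complex.ofReal_re]
        linarith
  refine ⟨card_edge nv, warmF_zero hnv α, hS, ?_, hU, ?_⟩
  · rw [CriticalPt, hS, hU, not_not]
    constructor
    · rintro ⟨hns, h3, hle⟩
      refine ⟨h3, le_antisymm hle ?_⟩
      by_contra hlt
      exact hns ⟨h3, by linarith⟩
    · rintro ⟨rfl, rfl⟩
      exact ⟨fun h => absurd h.2 (lt_irrefl _), ⟨rfl, le_refl _⟩⟩
  · intro h4
    constructor
    · rw [charpoly_eq hnv α]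
      exact dvd_mul_right _ _
    · exact hU.2 (fun h => by omega)

end
end

section
/- Let n ≥ 2 and let p be a WARM weight on [n] with p({n}) = 0. Define a WARM weight p' on [n−1] by p'(A') = p(A') + p(A' ∪ {n}) for nonempty A' ⊆ [n−1] (and p'(∅) = 0). Then a vector v = (v_1, …, v_{n−1}, 0) ∈ Δ_n is an equilibrium (respectively, a linearly stable equilibrium) for the WARM weight p if and only if v' = (v_1, …, v_{n−1}) ∈ Δ_{n−1} is an equilibrium (respectively, a linearly stable equilibrium) for the WARM weight p'. -/
open Finset

noncomputable section

/-- The reduced WARM weight on `[n−1]` obtained by deleting the last colour: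
`p'(A') = p(A') + p(A' ∪ {n})` for nonempty `A'`, and `p'(∅) = 0`. -/
def reduceP (n : ℕ) (p : Finset (Fin (n + 1)) → ℝ) : Finset (Fin n) → ℝ :=
  fun A' =>
    if A' = ∅ then 0
    else p (A'.map Fin.castSuccEmb) + p (insert (Fin.last n) (A'.map Fin.castSuccEmb))

section Aux
open Polynomial

variable {n : ℕ}

lemma last_not_mem_map (A' : Finset (Fin n)) :
    Fin.last n ∉ A'.map Fin.castSuccEmb := by
  simp only [Finset.mem_map, Fin.coe_castSuccEmb]
  rintro ⟨a, -, ha⟩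
  exact (Fin.castSucc_lt_last a).ne ha

lemma castSucc_mem_map (i : Fin n) (A' : Finset (Fin n)) :
    Fin.castSucc i ∈ A'.map Fin.castSuccEmb ↔ i ∈ A' :=
  Finset.mem_map' _

lemma castSucc_mem_insert (i : Fin n) (A' : Finset (Fin n)) :
    Fin.castSucc i ∈ insert (Fin.last n) (A'.map Fin.castSuccEmb) ↔ i ∈ A' := by
  rw [Finset.mem_insert, castSucc_mem_map]
  simp [(Fin.castSucc_lt_last i).ne]

/-- Subsets of `Fin (n+1)` correspond to pairs (subset of `Fin n`, contains last?). -/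
def lastEquiv (n : ℕ) : Finset (Fin n) × Bool ≃ Finset (Fin (n + 1)) where
  toFun x := cond x.2 (insert (Fin.last n) (x.1.map Fin.castSuccEmb))
             (x.1.map Fin.castSuccEmb)
  invFun A := (Finset.univ.filter (fun i : Fin n => Fin.castSucc i ∈ A), decide (Fin.last n ∈ A))
  left_inv := by
    rintro ⟨A', b⟩
    cases b
    · refine Prod.ext ?_ ?_
      · ext i
        simp only [Bool.cond_false, Finset.mem_filter, Finset.mem_univ, true_and,
          castSucc_mem_map]
      · exact decide_eq_false (last_not_mem_map A')
    · refine Prod.ext ?_ ?_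
      · ext i
        simp only [Bool.cond_true, Finset.mem_filter, Finset.mem_univ, true_and,
          castSucc_mem_insert]
      · exact decide_eq_true (Finset.mem_insert_self _ _)
  right_inv := by
    intro A
    by_cases hl : Fin.last n ∈ A
    · dsimp only
      rw [decide_eq_true hl, Bool.cond_true]
      ext x
      refine Fin.lastCases ?_ (fun i => ?_) x
      · simp [hl]
      · rw [castSucc_mem_insert]
        simp only [Finset.mem_filter, Finset.mem_univ, true_and]
    · dsimp only
      rw [decide_eq_false hl, Bool.cond_false]
      ext x
      refine Fin.lastCases ?_ (fun i => ?_) x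
      · exact iff_of_false (last_not_mem_map _) hl
      · rw [castSucc_mem_map]
        simp only [Finset.mem_filter, Finset.mem_univ, true_and]

lemma sum_split (f : Finset (Fin (n + 1)) → ℝ) :
    ∑ A : Finset (Fin (n + 1)), f A
      = ∑ A' : Finset (Fin n),
          (f (A'.map Fin.castSuccEmb) + f (insert (Fin.last n) (A'.map Fin.castSuccEmb))) := by
  rw [← Equiv.sum_comp (lastEquiv n) f, Fintype.sum_prod_type]
  refine Finset.sum_congr rfl fun A' _ => ?_
  rw [Fintype.sum_bool]
  simp [lastEquiv, add_comm]

variable (α : ℝ) (v : Fin n → ℝ)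

lemma sum_rpow_map (A' : Finset (Fin n)) :
    ∑ j ∈ A'.map Fin.castSuccEmb, (Fin.snoc v 0 : Fin (n + 1) → ℝ) j ^ α
      = ∑ j ∈ A', v j ^ α := by
  rw [Finset.sum_map]
  refine Finset.sum_congr rfl fun j _ => ?_
  rw [show (Fin.castSuccEmb j : Fin (n + 1)) = Fin.castSucc j from rfl, Fin.snoc_castSucc]

lemma sum_rpow_insert (hα : α ≠ 0) (A' : Finset (Fin n)) :
    ∑ j ∈ insert (Fin.last n) (A'.map Fin.castSuccEmb),
        (Fin.snoc v 0 : Fin (n + 1) → ℝ) j ^ α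
      = ∑ j ∈ A', v j ^ α := by
  rw [Finset.sum_insert (last_not_mem_map A'), Fin.snoc_last, Real.zero_rpow hα,
    zero_add, sum_rpow_map]

lemma key_sum (hα : α ≠ 0) (p : Finset (Fin (n + 1)) → ℝ)
    (P : Finset (Fin (n + 1)) → Prop) [DecidablePred P]
    (P' : Finset (Fin n) → Prop) [DecidablePred P']
    (hmap : ∀ A', P (A'.map Fin.castSuccEmb) ↔ P' A')
    (hins : ∀ A', P (insert (Fin.last n) (A'.map Fin.castSuccEmb)) ↔ P' A')
    (hne : ∀ A', P' A' → A' ≠ ∅)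
    (c : ℝ → ℝ) :
    ∑ A ∈ Finset.univ.filter P,
        p A * c (∑ j ∈ A, (Fin.snoc v 0 : Fin (n + 1) → ℝ) j ^ α)
      = ∑ A' ∈ Finset.univ.filter P', reduceP n p A' * c (∑ j ∈ A', v j ^ α) := by
  rw [Finset.sum_filter, Finset.sum_filter,
    sum_split (fun A => if P A then p A * c (∑ j ∈ A, (Fin.snoc v 0 : Fin (n + 1) → ℝ) j ^ α) else 0)]
  refine Finset.sum_congr rfl fun A' _ => ?_
  rw [sum_rpow_map α v A', sum_rpow_insert α v hα A']
  by_cases h : P' A'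
  · rw [if_pos ((hmap A').mpr h), if_pos ((hins A').mpr h), if_pos h]
    simp only [reduceP, if_neg (hne A' h)]
    ring
  · rw [if_neg (fun hh => h ((hmap A').mp hh)), if_neg (fun hh => h ((hins A').mp hh)),
      if_neg h, add_zero]


variable (p : Finset (Fin (n + 1)) → ℝ)

lemma warmF_castSucc (hα : α ≠ 0) (i : Fin n) :
    warmF α p (Fin.snoc v 0) (Fin.castSucc i) = warmF α (reduceP n p) v i := by
  unfold warmF
  rw [Fin.snoc_castSucc]
  congr 1
  have h := key_sum α v hα p (fun A => Fin.castSucc i ∈ A) (fun A' => i ∈ A')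
      (fun A' => castSucc_mem_map i A') (fun A' => castSucc_mem_insert i A')
      (fun A' h => Finset.ne_empty_of_mem h) (fun S => v i ^ α / S)
  simp only [mul_div_assoc] at h ⊢
  exact h

lemma warmF_last (hα : α ≠ 0) :
    warmF α p (Fin.snoc v 0) (Fin.last n) = 0 := by
  unfold warmF
  rw [Fin.snoc_last, Real.zero_rpow hα]
  simp

lemma warmD_diag (hα : α ≠ 0) (i : Fin n) :
    warmD α p (Fin.snoc v 0) (Fin.castSucc i) (Fin.castSucc i)
      = warmD α (reduceP n p) v i i := by
  simp only [warmD, Matrix.of_apply]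
  rw [if_pos trivial, if_pos trivial, Fin.snoc_castSucc]
  congr 1
  congr 1
  have h := key_sum α v hα p (fun A => Fin.castSucc i ∈ A) (fun A' => i ∈ A')
      (fun A' => castSucc_mem_map i A') (fun A' => castSucc_mem_insert i A')
      (fun A' h => Finset.ne_empty_of_mem h) (fun S => (S - v i ^ α) / S ^ 2)
  simp only [mul_div_assoc] at h ⊢
  exact h

lemma warmD_off (hα : α ≠ 0) {i k : Fin n} (hik : i ≠ k) :
    warmD α p (Fin.snoc v 0) (Fin.castSucc i) (Fin.castSucc k)
      = warmD α (reduceP n p) v i k := by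
  simp only [warmD, Matrix.of_apply]
  rw [if_neg (fun hh => hik (Fin.castSucc_injective n hh)), if_neg hik,
    Fin.snoc_castSucc, Fin.snoc_castSucc]
  congr 1
  congr 1
  have h := key_sum α v hα p (fun A => Fin.castSucc i ∈ A ∧ Fin.castSucc k ∈ A)
      (fun A' => i ∈ A' ∧ k ∈ A')
      (fun A' => and_congr (castSucc_mem_map i A') (castSucc_mem_map k A'))
      (fun A' => and_congr (castSucc_mem_insert i A') (castSucc_mem_insert k A'))
      (fun A' h => Finset.ne_empty_of_mem h.1) (fun S => (S ^ 2)⁻¹)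
  simp only [div_eq_mul_inv] at h ⊢
  exact h

lemma warmD_row_last (hα : α ≠ 0) (k : Fin n) :
    warmD α p (Fin.snoc v 0) (Fin.last n) (Fin.castSucc k) = 0 := by
  simp only [warmD, Matrix.of_apply]
  rw [if_neg (fun h => (Fin.castSucc_lt_last k).ne h.symm), Fin.snoc_last,
    Real.zero_rpow hα]
  ring

lemma warmD_col_last (hα1 : α - 1 ≠ 0) (i : Fin n) :
    warmD α p (Fin.snoc v 0) (Fin.castSucc i) (Fin.last n) = 0 := by
  simp only [warmD, Matrix.of_apply]
  rw [if_neg (fun h => (Fin.castSucc_lt_last i).ne h), Fin.snoc_last,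
    Real.zero_rpow hα1]
  ring

lemma warmD_last_last (hα1 : α - 1 ≠ 0) :
    warmD α p (Fin.snoc v 0) (Fin.last n) (Fin.last n) = -1 := by
  simp only [warmD, Matrix.of_apply]
  rw [if_pos trivial, Fin.snoc_last, Real.zero_rpow hα1]
  ring

lemma warmD_block (hα : α ≠ 0) (hα1 : α - 1 ≠ 0) :
    warmD α p (Fin.snoc v 0)
      = Matrix.reindex finSumFinEquiv finSumFinEquiv
          (Matrix.fromBlocks (warmD α (reduceP n p) v) 0 0
            (Matrix.of fun _ _ : Fin 1 => (-1 : ℝ))) := by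
  have hl : ∀ j : Fin n, finSumFinEquiv (Sum.inl j) = Fin.castSucc j := fun j => rfl
  have hr : ∀ j : Fin 1, finSumFinEquiv (Sum.inr j) = Fin.last n := by
    intro j
    have h0 : j = 0 := Subsingleton.elim _ _
    subst h0
    rfl
  ext a b
  obtain ⟨x, rfl⟩ := finSumFinEquiv.surjective a
  obtain ⟨y, rfl⟩ := finSumFinEquiv.surjective b
  rw [Matrix.reindex_apply, Matrix.submatrix_apply, Equiv.symm_apply_apply,
    Equiv.symm_apply_apply]
  cases x with
  | inl i =>
    cases y with
    | inl k =>
      rw [hl, hl, Matrix.fromBlocks_apply₁₁]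
      by_cases hik : i = k
      · subst hik; exact warmD_diag α v p hα i
      · exact warmD_off α v p hα hik
    | inr k =>
      rw [hl, hr, Matrix.fromBlocks_apply₁₂, Matrix.zero_apply]
      exact warmD_col_last α v p hα1 i
  | inr i =>
    cases y with
    | inl k =>
      rw [hr, hl, Matrix.fromBlocks_apply₂₁, Matrix.zero_apply]
      exact warmD_row_last α v p hα k
    | inr k =>
      rw [hr, hr, Matrix.fromBlocks_apply₂₂, Matrix.of_apply]
      exact warmD_last_last α v p hα1

lemma charpoly_snoc (hα : α ≠ 0) (hα1 : α - 1 ≠ 0) :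
    (warmD α p (Fin.snoc v 0)).charpoly
      = (warmD α (reduceP n p) v).charpoly * (X + 1) := by
  rw [warmD_block α v p hα hα1, Matrix.charpoly_reindex,
    Matrix.charpoly_fromBlocks_zero₁₂]
  congr 1
  rw [Matrix.charpoly, Matrix.det_fin_one, Matrix.charmatrix_apply_eq, Matrix.of_apply]
  simp [sub_neg_eq_add]

lemma eigen_snoc_iff (hα : α ≠ 0) (hα1 : α - 1 ≠ 0) (μ : ℂ) :
    IsEigenvalue (warmD α p (Fin.snoc v 0)) μ
      ↔ IsEigenvalue (warmD α (reduceP n p) v) μ ∨ μ = -1 := by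
  unfold IsEigenvalue
  rw [charpoly_snoc α v p hα hα1, Polynomial.map_mul]
  simp only [Polynomial.IsRoot, Polynomial.eval_mul, mul_eq_zero, Polynomial.map_add,
    Polynomial.map_X, Polynomial.map_one, Polynomial.eval_add, Polynomial.eval_X,
    Polynomial.eval_one, add_eq_zero_iff_eq_neg]

lemma linStable_snoc_iff (hα : α ≠ 0) (hα1 : α - 1 ≠ 0) :
    LinStable (warmD α p (Fin.snoc v 0)) ↔ LinStable (warmD α (reduceP n p) v) := by
  constructor
  · intro h μ hμ
    exact h μ ((eigen_snoc_iff α v p hα hα1 μ).mpr (Or.inl hμ))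
  · intro h μ hμ
    rcases (eigen_snoc_iff α v p hα hα1 μ).mp hμ with h' | rfl
    · exact h μ h'
    · norm_num

lemma reduceP_warm (hp : IsWarmWeight p) (hlast : p {Fin.last n} = 0) :
    IsWarmWeight (reduceP n p) := by
  obtain ⟨h0, hb, hs⟩ := hp
  refine ⟨if_pos rfl, fun A' => ?_, ?_⟩
  · by_cases h : A' = ∅
    · simp [reduceP, h]
    · simp only [reduceP, if_neg h]
      constructor
      · exact add_nonneg (hb _).1 (hb _).1
      · have hne : A'.map Fin.castSuccEmb
            ≠ insert (Fin.last n) (A'.map Fin.castSuccEmb) :=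
          fun hh => last_not_mem_map A' (hh ▸ Finset.mem_insert_self _ _)
        calc p (A'.map Fin.castSuccEmb) + p (insert (Fin.last n) (A'.map Fin.castSuccEmb))
            = ∑ A ∈ ({A'.map Fin.castSuccEmb,
                insert (Fin.last n) (A'.map Fin.castSuccEmb)} : Finset _), p A :=
              (Finset.sum_pair hne).symm
          _ ≤ ∑ A : Finset (Fin (n + 1)), p A :=
              Finset.sum_le_sum_of_subset_of_nonneg (Finset.subset_univ _)
                (fun A _ _ => (hb A).1)
          _ = 1 := hs
  · have he : ∀ A' : Finset (Fin n), reduceP n p A'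
        = p (A'.map Fin.castSuccEmb) + p (insert (Fin.last n) (A'.map Fin.castSuccEmb)) := by
      intro A'
      by_cases h : A' = ∅
      · subst h
        simp [reduceP, Finset.map_empty, h0, hlast]
      · simp [reduceP, h]
    rw [Finset.sum_congr rfl (fun A' _ => he A'), ← sum_split p]
    exact hs

end Aux

/-- **Stability reduction.** If `p` gives no mass to the singleton of the last colour,
then a vector with last coordinate `0` is an equilibrium (resp. a linearly stable
equilibrium) for `p` iff the truncated vector is one for the reduced weight `p'`. -/
theorem warm_stability_reduction (n : ℕ) (hn : 1 ≤ n) (α : ℝ) (hα : 1 < α)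
    (p : Finset (Fin (n + 1)) → ℝ) (hp : IsWarmWeight p)
    (hlast : p {Fin.last n} = 0)
    (v : Fin n → ℝ) (hv : InSimplex v) :
    IsWarmWeight (reduceP n p) ∧
    ((∀ i, warmF α p (Fin.snoc v 0) i = 0) ↔ (∀ i, warmF α (reduceP n p) v i = 0)) ∧
    (((∀ i, warmF α p (Fin.snoc v 0) i = 0) ∧ LinStable (warmD α p (Fin.snoc v 0))) ↔
      ((∀ i, warmF α (reduceP n p) v i = 0) ∧ LinStable (warmD α (reduceP n p) v))) := by
  have hα0 : α ≠ 0 := (zero_lt_one.trans hα).ne'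
  have hα1 : α - 1 ≠ 0 := sub_ne_zero.mpr (ne_of_gt hα)
  have hFiff : (∀ i, warmF α p (Fin.snoc v 0) i = 0)
      ↔ (∀ i, warmF α (reduceP n p) v i = 0) := by
    constructor
    · intro h i
      rw [← warmF_castSucc α v p hα0 i]
      exact h _
    · intro h i
      refine Fin.lastCases ?_ (fun j => ?_) i
      · exact warmF_last α v p hα0
      · rw [warmF_castSucc α v p hα0 j]
        exact h j
  exact ⟨reduceP_warm p hp hlast, hFiff,
    and_congr hFiff (linStable_snoc_iff α v p hα0 hα1)⟩

end
end

section
/- Let v ∈ Δ_n be an equilibrium (F(v) = 0) with v_i > 0 for every i ∈ [n]. Then: (1) for every A ⊆ [n], Σ_{k∈A} v_k ≥ p(A); and (2) for every i ∈ [n], v_i ≥ (Σ_{A ∋ i, p(A) > 0} (p(A)/|A|)^{1−α})^{1/(1−α)}. In particular, there exists ε > 0, depending only on n, α and p, such that every equilibrium with all coordinates positive satisfies v_i ≥ ε for all i. -/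
open Finset

noncomputable section

lemma warm_aux (n : ℕ) (α : ℝ) (hα : 1 < α)
    (p : Finset (Fin n) → ℝ) (hp : IsWarmWeight p)
    (v : Fin n → ℝ) (heq : ∀ i, warmF α p v i = 0) (hpos : ∀ i, 0 < v i) :
    (∀ A : Finset (Fin n), p A ≤ ∑ k ∈ A, v k) ∧
    (∀ i : Fin n,
      (0 < ∑ A ∈ Finset.univ.filter (fun A : Finset (Fin n) => i ∈ A ∧ 0 < p A),
          (p A / (A.card : ℝ)) ^ ((1 : ℝ) - α)) ∧
      ((∑ A ∈ Finset.univ.filter (fun A : Finset (Fin n) => i ∈ A ∧ 0 < p A),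
          (p A / (A.card : ℝ)) ^ ((1 : ℝ) - α)) ^ (1 / (1 - α))) ≤ v i) := by
  have hS : ∀ A : Finset (Fin n), A.Nonempty → 0 < ∑ j ∈ A, v j ^ α := fun A hA =>
    Finset.sum_pos (fun k _ => Real.rpow_pos_of_pos (hpos k) α) hA
  have hveq : ∀ i, v i = ∑ A ∈ Finset.univ.filter (fun A : Finset (Fin n) => i ∈ A),
      p A * v i ^ α / (∑ j ∈ A, v j ^ α) := by
    intro i
    have := heq i
    unfold warmF at this
    linarith
  have htermnn : ∀ (k : Fin n) (B : Finset (Fin n)),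
      0 ≤ p B * v k ^ α / (∑ j ∈ B, v j ^ α) := fun k B =>
    div_nonneg (mul_nonneg (hp.2.1 B).1 (Real.rpow_nonneg (hpos k).le α))
      (Finset.sum_nonneg fun j _ => Real.rpow_nonneg (hpos j).le α)
  have part1 : ∀ A : Finset (Fin n), p A ≤ ∑ k ∈ A, v k := by
    intro A
    rcases A.eq_empty_or_nonempty with rfl | hA
    · simp [hp.1]
    · have hsum : ∑ k ∈ A, p A * v k ^ α / (∑ j ∈ A, v j ^ α) = p A := by
        rw [← Finset.sum_div, ← Finset.mul_sum, mul_div_assoc, div_self (hS A hA).ne', mul_one]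
      rw [← hsum]
      refine Finset.sum_le_sum fun k hk => ?_
      conv_rhs => rw [hveq k]
      exact Finset.single_le_sum (f := fun B => p B * v k ^ α / (∑ j ∈ B, v j ^ α))
        (fun B _ => htermnn k B) (Finset.mem_filter.mpr ⟨Finset.mem_univ _, hk⟩)
  refine ⟨part1, fun i => ?_⟩
  set T : ℝ := ∑ A ∈ Finset.univ.filter (fun A : Finset (Fin n) => i ∈ A ∧ 0 < p A),
      (p A / (A.card : ℝ)) ^ ((1 : ℝ) - α) with hT
  have hviα : 0 < v i ^ α := Real.rpow_pos_of_pos (hpos i) α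
  -- restrict the equilibrium sum to sets with positive weight
  have hrestrict : v i = ∑ A ∈ Finset.univ.filter (fun A : Finset (Fin n) => i ∈ A ∧ 0 < p A),
      p A * v i ^ α / (∑ j ∈ A, v j ^ α) := by
    refine (hveq i).trans (Finset.sum_subset ?_ ?_).symm
    · intro A hA
      simp only [Finset.mem_filter] at hA ⊢
      exact ⟨hA.1, hA.2.1⟩
    · intro A hA hA'
      simp only [Finset.mem_filter] at hA hA'
      have : p A = 0 := by
        by_contra h
        exact hA' ⟨hA.1, hA.2, lt_of_le_of_ne (hp.2.1 A).1 (Ne.symm h)⟩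
      simp [this]
  -- bound each term
  have hterm : ∀ A ∈ Finset.univ.filter (fun A : Finset (Fin n) => i ∈ A ∧ 0 < p A),
      p A * v i ^ α / (∑ j ∈ A, v j ^ α) ≤ (p A / (A.card : ℝ)) ^ ((1 : ℝ) - α) * v i ^ α := by
    intro A hA
    simp only [Finset.mem_filter] at hA
    obtain ⟨-, hiA, hpA⟩ := hA
    have hAne : A.Nonempty := ⟨i, hiA⟩
    have hSA : 0 < ∑ j ∈ A, v j ^ α := hS A hAne
    have hcard : (0 : ℝ) < (A.card : ℝ) := by
      exact_mod_cast Finset.card_pos.mpr hAne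
    -- power mean: (∑ v)^α ≤ card^(α-1) * ∑ v^α
    have hpm : (∑ j ∈ A, v j) ^ α ≤ (A.card : ℝ) ^ (α - 1) * ∑ j ∈ A, v j ^ α :=
      Real.rpow_sum_le_const_mul_sum_rpow_of_nonneg A hα.le (fun j _ => (hpos j).le)
    have hkey : p A ^ α ≤ (A.card : ℝ) ^ (α - 1) * ∑ j ∈ A, v j ^ α :=
      le_trans (Real.rpow_le_rpow hpA.le (part1 A) (by linarith)) hpm
    have e1 : (p A / (A.card : ℝ)) ^ ((1 : ℝ) - α)
        = p A ^ ((1 : ℝ) - α) * (A.card : ℝ) ^ (α - 1) := by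
      rw [Real.div_rpow hpA.le hcard.le, div_eq_iff (Real.rpow_pos_of_pos hcard _).ne',
        mul_assoc, ← Real.rpow_add hcard]
      have : α - 1 + (1 - α) = 0 := by ring
      rw [this, Real.rpow_zero, mul_one]
    have claim : p A ≤ (p A / (A.card : ℝ)) ^ ((1 : ℝ) - α) * ∑ j ∈ A, v j ^ α := by
      have h2 : p A ^ ((1 : ℝ) - α) * p A ^ α = p A := by
        rw [← Real.rpow_add hpA]
        norm_num
      calc p A = p A ^ ((1 : ℝ) - α) * p A ^ α := h2.symm
        _ ≤ p A ^ ((1 : ℝ) - α) * ((A.card : ℝ) ^ (α - 1) * ∑ j ∈ A, v j ^ α) :=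
            mul_le_mul_of_nonneg_left hkey (Real.rpow_nonneg hpA.le _)
        _ = (p A / (A.card : ℝ)) ^ ((1 : ℝ) - α) * ∑ j ∈ A, v j ^ α := by rw [e1]; ring
    rw [div_le_iff₀ hSA]
    have := mul_le_mul_of_nonneg_right claim hviα.le
    ring_nf at this ⊢
    linarith
  -- so v i ≤ T * v i ^ α
  have hviT : v i ≤ T * v i ^ α := by
    calc v i = ∑ A ∈ Finset.univ.filter (fun A : Finset (Fin n) => i ∈ A ∧ 0 < p A),
        p A * v i ^ α / (∑ j ∈ A, v j ^ α) := hrestrict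
      _ ≤ ∑ A ∈ Finset.univ.filter (fun A : Finset (Fin n) => i ∈ A ∧ 0 < p A),
        (p A / (A.card : ℝ)) ^ ((1 : ℝ) - α) * v i ^ α := Finset.sum_le_sum hterm
      _ = T * v i ^ α := by rw [hT, Finset.sum_mul]
  have h2 : v i ^ ((1 : ℝ) - α) * v i ^ α = v i := by
    rw [← Real.rpow_add (hpos i)]
    norm_num
  have hTi : v i ^ ((1 : ℝ) - α) ≤ T := by
    have h3 : v i ^ ((1 : ℝ) - α) * v i ^ α ≤ T * v i ^ α := by rw [h2]; exact hviT
    exact (mul_le_mul_iff_of_pos_right hviα).mp h3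
  have hTpos : 0 < T := lt_of_lt_of_le (Real.rpow_pos_of_pos (hpos i) _) hTi
  refine ⟨hTpos, ?_⟩
  have hexp : (1 : ℝ) / (1 - α) ≤ 0 :=
    le_of_lt (div_neg_of_pos_of_neg one_pos (by linarith))
  have h4 : T ^ ((1:ℝ) / (1 - α)) ≤ (v i ^ ((1 : ℝ) - α)) ^ ((1:ℝ) / (1 - α)) :=
    Real.rpow_le_rpow_of_nonpos (Real.rpow_pos_of_pos (hpos i) _) hTi hexp
  have h5 : (v i ^ ((1 : ℝ) - α)) ^ ((1:ℝ) / (1 - α)) = v i := by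
    rw [← Real.rpow_mul (hpos i).le]
    rw [mul_one_div_cancel (by linarith : (1:ℝ) - α ≠ 0), Real.rpow_one]
  rw [← h5]
  exact h4

/-- **Lower bounds for fully supported equilibria.** If `v` is an equilibrium with all
coordinates positive, then `Σ_{k∈A} v_k ≥ p(A)` for every `A`, and
`v_i ≥ (Σ_{A∋i, p(A)>0} (p(A)/|A|)^{1−α})^{1/(1−α)}`; in particular there is
`ε > 0`, depending only on `n`, `α`, `p`, bounding all fully supported equilibria
below. -/
theorem equilibrium_coordinate_lower_bounds (n : ℕ) (hn : 1 ≤ n) (α : ℝ) (hα : 1 < α)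
    (p : Finset (Fin n) → ℝ) (hp : IsWarmWeight p)
    (v : Fin n → ℝ) (hv : InSimplex v)
    (heq : ∀ i, warmF α p v i = 0) (hpos : ∀ i, 0 < v i) :
    (∀ A : Finset (Fin n), p A ≤ ∑ k ∈ A, v k) ∧
    (∀ i : Fin n,
      ((∑ A ∈ Finset.univ.filter (fun A : Finset (Fin n) => i ∈ A ∧ 0 < p A),
          (p A / (A.card : ℝ)) ^ ((1 : ℝ) - α)) ^ (1 / (1 - α))) ≤ v i) ∧
    (∃ ε : ℝ, 0 < ε ∧ ∀ w : Fin n → ℝ, InSimplex w → (∀ i, warmF α p w i = 0) →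
      (∀ i, 0 < w i) → ∀ i, ε ≤ w i) := by
  obtain ⟨P1, P2⟩ := warm_aux n α hα p hp v heq hpos
  refine ⟨P1, fun i => (P2 i).2, ?_⟩
  have hne : (Finset.univ : Finset (Fin n)).Nonempty := ⟨⟨0, hn⟩, Finset.mem_univ _⟩
  refine ⟨Finset.univ.inf' hne (fun i =>
    ((∑ A ∈ Finset.univ.filter (fun A : Finset (Fin n) => i ∈ A ∧ 0 < p A),
      (p A / (A.card : ℝ)) ^ ((1 : ℝ) - α)) ^ (1 / (1 - α)))), ?_, ?_⟩
  · rw [Finset.lt_inf'_iff]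
    intro i _
    exact Real.rpow_pos_of_pos (P2 i).1 _
  · intro w _ hweq hwpos i
    exact le_trans (Finset.inf'_le _ (Finset.mem_univ i))
      (((warm_aux n α hα p hp w hweq hwpos).2 i).2)


end
end

section
/- Let v ∈ Δ_n be an equilibrium of the WARM star graph with n ≥ 2 edges. Then 1/(n+1) < v_i < 2/(n+1) for every i ∈ [n], and the set of values {v_1, …, v_n} has at most two distinct elements; i.e., either all coordinates of v are equal (to 1/n), or there exist reals v > u and an integer 1 ≤ k ≤ n−1 such that, after permuting coordinates, v = (v, …, v, u, …, u) with v appearing k times and u appearing n−k times. -/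
open Finset

noncomputable section

lemma no_three_roots (α C S : ℝ) (hα : 1 < α) {x y z : ℝ}
    (hx : 0 ≤ x) (hxy : x < y) (hyz : y < z)
    (hfx : x ^ α = C * x - S) (hfy : y ^ α = C * y - S) (hfz : z ^ α = C * z - S) :
    False := by
  have hz0 : 0 ≤ z := le_of_lt (hx.trans_lt (hxy.trans hyz))
  have hzx : 0 < z - x := by linarith
  set a : ℝ := (z - y) / (z - x) with ha
  set b : ℝ := (y - x) / (z - x) with hb
  have ha0 : 0 < a := div_pos (by linarith) hzx
  have hb0 : 0 < b := div_pos (by linarith) hzx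
  have hab : a + b = 1 := by rw [ha, hb]; field_simp; ring
  have hcomb : a • x + b • z = y := by
    simp only [smul_eq_mul, ha, hb]
    field_simp
    ring
  have key := (strictConvexOn_rpow hα).2 (Set.mem_Ici.mpr hx) (Set.mem_Ici.mpr hz0)
    (ne_of_lt (hxy.trans hyz)) ha0 hb0 hab
  rw [hcomb] at key
  simp only [smul_eq_mul] at key
  rw [hfx, hfy, hfz] at key
  have hax : a * x + b * z = y := by simpa [smul_eq_mul] using hcomb
  have hlin : a * (C * x - S) + b * (C * z - S) = C * (a * x + b * z) - S * (a + b) := by ring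
  rw [hax, hab] at hlin
  rw [hlin] at key
  linarith

lemma star_sum_eq (n : ℕ) (hn : 2 ≤ n) (α : ℝ) (v : Fin n → ℝ) (i : Fin n) :
    ∑ A ∈ Finset.univ.filter (fun A : Finset (Fin n) => i ∈ A),
      starP n A * v i ^ α / (∑ j ∈ A, v j ^ α)
    = (1 / ((n : ℝ) + 1)) * v i ^ α / v i ^ α
      + (1 / ((n : ℝ) + 1)) * v i ^ α / (∑ j, v j ^ α) := by
  have hne : ({i} : Finset (Fin n)) ≠ Finset.univ := by
    intro h
    have h2 : (({i} : Finset (Fin n))).card = (Finset.univ : Finset (Fin n)).card := by rw [h]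
    rw [Finset.card_singleton, Finset.card_univ, Fintype.card_fin] at h2
    omega
  have hsub : ({({i} : Finset (Fin n)), Finset.univ} : Finset (Finset (Fin n)))
      ⊆ Finset.univ.filter (fun A => i ∈ A) := by
    intro A hA
    simp only [Finset.mem_insert, Finset.mem_singleton] at hA
    rcases hA with rfl | rfl <;> simp
  rw [← Finset.sum_subset hsub ?_]
  · rw [Finset.sum_pair hne]
    have h1 : starP n ({i} : Finset (Fin n)) = 1 / ((n : ℝ) + 1) := by
      simp [starP, hne]
    have h2 : starP n (Finset.univ : Finset (Fin n)) = 1 / ((n : ℝ) + 1) := by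
      simp [starP]
    rw [h1, h2, Finset.sum_singleton]
  · intro A hA hA'
    simp only [Finset.mem_filter, Finset.mem_univ, true_and] at hA
    simp only [Finset.mem_insert, Finset.mem_singleton] at hA'
    push_neg at hA'
    have hz : starP n A = 0 := by
      unfold starP
      rw [if_neg hA'.2, if_neg]
      intro hc
      obtain ⟨c, rfl⟩ := Finset.card_eq_one.mp hc
      rw [Finset.mem_singleton] at hA
      exact hA'.1 (by rw [hA])
    simp [hz]

/-- **Structure of star-graph equilibria.** Every equilibrium of the WARM star graph
with `n ≥ 2` edges has all coordinates in `(1/(n+1), 2/(n+1))`, and takes at most two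
distinct values: either all coordinates equal `1/n`, or after a permutation it equals
`(v,…,v,u,…,u)` with `v > u`, `v` occurring `k` times for some `1 ≤ k ≤ n−1`. -/
theorem star_equilibria_structure (n : ℕ) (hn : 2 ≤ n) (α : ℝ) (hα : 1 < α)
    (v : Fin n → ℝ) (hv : InSimplex v) (heq : ∀ i, warmF α (starP n) v i = 0) :
    (∀ i, 1 / ((n : ℝ) + 1) < v i ∧ v i < 2 / ((n : ℝ) + 1)) ∧
    ((∀ i, v i = 1 / (n : ℝ)) ∨
      ∃ (a b : ℝ) (k : ℕ) (σ : Equiv.Perm (Fin n)), b < a ∧ 1 ≤ k ∧ k ≤ n - 1 ∧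
        ∀ i : Fin n, v (σ i) = if (i : ℕ) < k then a else b) := by
  classical
  obtain ⟨hv0, hv1⟩ := hv
  have hn1 : (0:ℝ) < (n : ℝ) + 1 := by positivity
  set c : ℝ := 1 / ((n : ℝ) + 1) with hc
  have hc0 : 0 < c := by rw [hc]; positivity
  set S : ℝ := ∑ j, v j ^ α with hS
  have heq' : ∀ i, v i = c * v i ^ α / v i ^ α + c * v i ^ α / S := by
    intro i
    have h := heq i
    unfold warmF at h
    rw [star_sum_eq n hn α v i] at h
    linarith
  have hα0 : α ≠ 0 := by linarith
  have hexp : ∃ j, 0 < v j := by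
    by_contra h
    push_neg at h
    have hzz : ∀ j, v j = 0 := fun j => le_antisymm (h j) (hv0 j)
    rw [Finset.sum_congr rfl (fun j _ => hzz j)] at hv1
    simp at hv1
  obtain ⟨j0, hj0⟩ := hexp
  have hS0 : 0 < S := by
    rw [hS]
    apply Finset.sum_pos' (fun j _ => Real.rpow_nonneg (hv0 j) α)
    exact ⟨j0, Finset.mem_univ _, Real.rpow_pos_of_pos hj0 α⟩
  have heqp : ∀ i, 0 < v i → v i = c + c * v i ^ α / S := by
    intro i hi
    have h := heq' i
    have hpow : v i ^ α ≠ 0 := ne_of_gt (Real.rpow_pos_of_pos hi α)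
    rwa [mul_div_assoc c, div_self hpow, mul_one] at h
  set P : Finset (Fin n) := Finset.univ.filter (fun i => 0 < v i) with hP
  have hzero : ∀ i, i ∉ P → v i = 0 := by
    intro i hi
    simp only [hP, Finset.mem_filter, Finset.mem_univ, true_and, not_lt] at hi
    exact le_antisymm hi (hv0 i)
  have hsum1 : ∑ i ∈ P, v i = 1 := by
    rw [← hv1]
    exact Finset.sum_subset (Finset.subset_univ P) (fun i _ hi => hzero i hi)
  have hsumS : ∑ i ∈ P, v i ^ α = S := by
    rw [hS]
    exact Finset.sum_subset (Finset.subset_univ P) (fun i _ hi => by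
      rw [hzero i hi, Real.zero_rpow hα0])
  have hcard : (P.card : ℝ) * c + c = 1 := by
    have hcongr : ∑ i ∈ P, v i = ∑ i ∈ P, (c + c * v i ^ α / S) := by
      apply Finset.sum_congr rfl
      intro i hi
      simp only [hP, Finset.mem_filter] at hi
      exact heqp i hi.2
    rw [hcongr, Finset.sum_add_distrib, Finset.sum_const, nsmul_eq_mul] at hsum1
    have h2 : ∑ i ∈ P, c * v i ^ α / S = c := by
      rw [← Finset.sum_div, ← Finset.mul_sum, hsumS, mul_div_assoc,
        div_self (ne_of_gt hS0), mul_one]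
    rw [h2] at hsum1
    linarith
  have hPuniv : P = Finset.univ := by
    apply Finset.eq_univ_of_card
    rw [Fintype.card_fin]
    have hcR : (P.card : ℝ) = n := by
      rw [hc] at hcard
      field_simp at hcard
      have h' : (P.card : ℝ) + 1 = (n : ℝ) + 1 := by exact_mod_cast hcard
      linarith
    exact_mod_cast hcR
  have hpos : ∀ i, 0 < v i := by
    intro i
    have hmem : i ∈ P := hPuniv ▸ Finset.mem_univ i
    simp only [hP, Finset.mem_filter, Finset.mem_univ, true_and] at hmem
    exact hmem
  have eqn : ∀ i, v i = c + c * v i ^ α / S := fun i => heqp i (hpos i)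
  -- strict bounds
  have hlow : ∀ i, c < v i := by
    intro i
    have h := eqn i
    have hpow : 0 < v i ^ α := Real.rpow_pos_of_pos (hpos i) α
    nlinarith [mul_pos (mul_pos hc0 hpow) (inv_pos.mpr hS0),
      div_pos (mul_pos hc0 hpow) hS0]
  have hfrac : ∀ i, v i ^ α < S := by
    intro i
    have hsplit : v i ^ α + ∑ j ∈ Finset.univ.erase i, v j ^ α = S :=
      Finset.add_sum_erase Finset.univ (fun j => v j ^ α) (Finset.mem_univ i)
    have hne : (Finset.univ.erase i).Nonempty := by
      rw [← Finset.card_pos, Finset.card_erase_of_mem (Finset.mem_univ i),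
        Finset.card_univ, Fintype.card_fin]
      omega
    have hpos2 : 0 < ∑ j ∈ Finset.univ.erase i, v j ^ α :=
      Finset.sum_pos (fun j _ => Real.rpow_pos_of_pos (hpos j) α) hne
    linarith
  have hup : ∀ i, v i < 2 / ((n : ℝ) + 1) := by
    intro i
    have h := eqn i
    have h2 : c * v i ^ α / S < c := by
      rw [mul_div_assoc]
      nlinarith [(div_lt_one hS0).mpr (hfrac i)]
    have h3 : c + c = 2 / ((n : ℝ) + 1) := by rw [hc]; ring
    linarith
  refine ⟨fun i => ⟨hlow i, hup i⟩, ?_⟩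
  -- linear relation: each coordinate is a root of x^α = C x - S
  set C : ℝ := ((n : ℝ) + 1) * S with hCdef
  have hroot : ∀ i, v i ^ α = C * v i - S := by
    intro i
    have h := eqn i
    rw [hc] at h
    have hS0' : S ≠ 0 := ne_of_gt hS0
    field_simp at h
    rw [hCdef]
    nlinarith [h]
  haveI : NeZero n := ⟨by omega⟩
  obtain ⟨ia, -, hmax⟩ := Finset.exists_max_image Finset.univ v Finset.univ_nonempty
  obtain ⟨ib, -, hmin⟩ := Finset.exists_min_image Finset.univ v Finset.univ_nonempty
  by_cases hab : v ia = v ib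
  · left
    intro i
    have hi : v i = v ia :=
      le_antisymm (hmax i (Finset.mem_univ i)) (hab ▸ hmin i (Finset.mem_univ i))
    have hsum : (n : ℝ) * v ia = 1 := by
      rw [← hv1, Finset.sum_congr rfl (fun j _ =>
        le_antisymm (hmax j (Finset.mem_univ j)) (hab ▸ hmin j (Finset.mem_univ j)))]
      rw [Finset.sum_const, Finset.card_univ, Fintype.card_fin, nsmul_eq_mul]
    have hn0 : (n : ℝ) ≠ 0 := by positivity
    rw [hi, eq_div_iff hn0]
    linarith
  · right
    have hba : v ib < v ia :=
      lt_of_le_of_ne (hmin ia (Finset.mem_univ ia)) (fun h => hab h.symm)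
    have htwo : ∀ i, v i = v ia ∨ v i = v ib := by
      intro i
      by_contra h
      push_neg at h
      have h1 : v i < v ia := lt_of_le_of_ne (hmax i (Finset.mem_univ i)) h.1
      have h2 : v ib < v i := lt_of_le_of_ne (hmin i (Finset.mem_univ i)) (Ne.symm h.2)
      exact no_three_roots α C S hα (le_of_lt (hpos ib)) h2 h1
        (hroot ib) (hroot i) (hroot ia)
    set k := (Finset.univ.filter (fun i => v i = v ia)).card with hk
    have hk1 : 1 ≤ k := by
      rw [hk]
      exact Finset.card_pos.mpr ⟨ia, by simp⟩
    have hkn : k ≤ n - 1 := by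
      have hss : (Finset.univ.filter (fun i => v i = v ia)) ⊂ Finset.univ := by
        rw [Finset.ssubset_univ_iff]
        intro h
        have hmem : ib ∈ Finset.univ.filter (fun i => v i = v ia) := by
          rw [h]; exact Finset.mem_univ ib
        simp only [Finset.mem_filter, Finset.mem_univ, true_and] at hmem
        exact absurd hmem (ne_of_lt hba)
      have := Finset.card_lt_card hss
      rw [Finset.card_univ, Fintype.card_fin] at this
      omega
    set σ := Tuple.sort (fun i => -v i) with hσ
    have hmono := Tuple.monotone_sort (fun i => -v i)
    have hanti : ∀ {i j : Fin n}, i ≤ j → v (σ j) ≤ v (σ i) := by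
      intro i j hij
      have := hmono hij
      simpa using this
    have hcards : (Finset.univ.filter (fun i => v (σ i) = v ia)).card = k := by
      rw [hk]
      apply Finset.card_bij' (fun i _ => σ i) (fun i _ => σ.symm i)
      · intro i hi
        simp only [Finset.mem_filter, Finset.mem_univ, true_and] at hi ⊢
        exact hi
      · intro i hi
        simp only [Finset.mem_filter, Finset.mem_univ, true_and] at hi ⊢
        rw [Equiv.apply_symm_apply]
        exact hi
      · intro i hi; simp
      · intro i hi; simp
    refine ⟨v ia, v ib, k, σ, hba, hk1, hkn, ?_⟩
    intro i
    by_cases hik : (i : ℕ) < k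
    · rw [if_pos hik]
      by_contra h
      have hb' : v (σ i) = v ib := (htwo (σ i)).resolve_left h
      have hsubset : (Finset.univ.filter (fun j => v (σ j) = v ia)) ⊆ Finset.Iio i := by
        intro j hj
        simp only [Finset.mem_filter, Finset.mem_univ, true_and] at hj
        rw [Finset.mem_Iio]
        by_contra hji
        push_neg at hji
        have hle := hanti hji
        rw [hj, hb'] at hle
        exact absurd hle (not_le.mpr hba)
      have hcard2 := Finset.card_le_card hsubset
      rw [hcards, Fin.card_Iio] at hcard2
      omega
    · rw [if_neg hik]
      push_neg at hik
      by_contra h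
      have ha' : v (σ i) = v ia := (htwo (σ i)).resolve_right h
      have hsubset : Finset.Iic i ⊆ (Finset.univ.filter (fun j => v (σ j) = v ia)) := by
        intro j hj
        rw [Finset.mem_Iic] at hj
        simp only [Finset.mem_filter, Finset.mem_univ, true_and]
        have hge := hanti hj
        rw [ha'] at hge
        exact le_antisymm (hmax (σ j) (Finset.mem_univ _)) hge
      have hcard2 := Finset.card_le_card hsubset
      rw [hcards, Fin.card_Iic] at hcard2
      omega

end
end

section
/- Consider the WARM star graph with n ≥ 2 edges, and suppose that the vector w = (v, …, v, u, …, u) (with v in the first k coordinates and u in the remaining n−k coordinates, 1 ≤ k ≤ n−1, v > u > 0, k·v + (n−k)·u = 1) is an equilibrium. Let η = k·v^α + (n−k)·u^α and ξ = α/((n+1)·η²). Then w is linearly stable if and only if either (k = 1 and ξ·(u·v)^{α−1} < 1) or (k ≥ 2 and v < α/((α−1)(n+1))); and w is critical if equality holds in the corresponding condition. -/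
open Finset

noncomputable section

/-- `ξ = α/((n+1)η²)` where `η = k aᵅ + (n−k) bᵅ`. -/
def starXi (n : ℕ) (α a b : ℝ) (k : ℕ) : ℝ :=
  α / (((n : ℝ) + 1) * ((k : ℝ) * a ^ α + ((n : ℝ) - (k : ℝ)) * b ^ α) ^ 2)

/- ### Auxiliary lemmas -/

open Polynomial in
lemma warm_aux_cardlem (n k : ℕ) (hk : k ≤ n) :
    ((univ : Finset (Fin n)).filter fun i : Fin n => (i:ℕ) < k).card = k := by
  rw [show ((univ : Finset (Fin n)).filter fun i : Fin n => (i:ℕ) < k) = (Finset.range k).attachFin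
    (fun m hm => lt_of_lt_of_le (Finset.mem_range.mp hm) hk) from by
      ext i; simp [Finset.mem_attachFin]]
  simp

lemma warm_aux_sumlem {M : Type*} [NonAssocSemiring M] (n k : ℕ) (hk : k ≤ n) (x y : M) :
    ∑ i : Fin n, (if (i:ℕ) < k then x else y) = (k : M) * x + ((n - k : ℕ) : M) * y := by
  rw [Finset.sum_ite, Finset.sum_const, Finset.sum_const, nsmul_eq_mul, nsmul_eq_mul,
    warm_aux_cardlem n k hk, Finset.filter_not, Finset.card_sdiff_of_subset (Finset.filter_subset _ _),
    warm_aux_cardlem n k hk, Finset.card_univ, Fintype.card_fin]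

lemma warm_aux_prodlem {M : Type*} [CommMonoid M] (n k : ℕ) (hk : k ≤ n) (x y : M) :
    ∏ i : Fin n, (if (i:ℕ) < k then x else y) = x ^ k * y ^ (n - k) := by
  rw [Finset.prod_ite, Finset.prod_const, Finset.prod_const,
    warm_aux_cardlem n k hk, Finset.filter_not, Finset.card_sdiff_of_subset (Finset.filter_subset _ _),
    warm_aux_cardlem n k hk, Finset.card_univ, Fintype.card_fin]

lemma warm_aux_starP_sum_one (n : ℕ) (hn : 2 ≤ n) (i : Fin n) (g : Finset (Fin n) → ℝ) :
    ∑ A ∈ Finset.univ.filter (fun A : Finset (Fin n) => i ∈ A), starP n A * g A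
      = (1/((n:ℝ)+1)) * g {i} + (1/((n:ℝ)+1)) * g Finset.univ := by
  have hne : ({i} : Finset (Fin n)) ≠ Finset.univ := by
    intro h
    have := Finset.card_univ (α := Fin n)
    rw [← h] at this
    simp at this; omega
  have hsub : ({({i} : Finset (Fin n)), Finset.univ} : Finset (Finset (Fin n)))
      ⊆ Finset.univ.filter (fun A : Finset (Fin n) => i ∈ A) := by
    intro A hA
    simp only [Finset.mem_insert, Finset.mem_singleton] at hA
    rcases hA with h | h <;> subst h <;> simp
  rw [← Finset.sum_subset hsub ?_]
  · rw [Finset.sum_pair hne]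
    have h1 : starP n {i} = 1/((n:ℝ)+1) := by simp [starP, hne]
    have h2 : starP n (Finset.univ : Finset (Fin n)) = 1/((n:ℝ)+1) := by simp [starP]
    rw [h1, h2]
  · intro A hA hA2
    simp only [Finset.mem_insert, Finset.mem_singleton, not_or] at hA2
    simp only [Finset.mem_filter] at hA
    have : starP n A = 0 := by
      unfold starP
      rw [if_neg hA2.2, if_neg ?_]
      intro hc
      obtain ⟨x, hx⟩ := Finset.card_eq_one.mp hc
      apply hA2.1
      rw [hx] at hA ⊢
      simp only [Finset.mem_singleton] at hA
      rw [hA.2]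
    rw [this, zero_mul]

lemma warm_aux_starP_sum_two (n : ℕ) (i j : Fin n) (hij : i ≠ j) (g : Finset (Fin n) → ℝ) :
    ∑ A ∈ Finset.univ.filter (fun A : Finset (Fin n) => i ∈ A ∧ j ∈ A), starP n A * g A
      = (1/((n:ℝ)+1)) * g Finset.univ := by
  have hsub : ({(Finset.univ : Finset (Fin n))} : Finset (Finset (Fin n)))
      ⊆ Finset.univ.filter (fun A : Finset (Fin n) => i ∈ A ∧ j ∈ A) := by
    intro A hA; simp only [Finset.mem_singleton] at hA; subst hA; simp
  rw [← Finset.sum_subset hsub ?_]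
  · rw [Finset.sum_singleton]; simp [starP]
  · intro A hA hA2
    simp only [Finset.mem_singleton] at hA2
    simp only [Finset.mem_filter] at hA
    have : starP n A = 0 := by
      unfold starP
      rw [if_neg hA2, if_neg ?_]
      intro hc
      obtain ⟨x, hx⟩ := Finset.card_eq_one.mp hc
      rw [hx] at hA
      simp only [Finset.mem_singleton] at hA
      exact hij (hA.2.1.trans hA.2.2.symm)
    rw [this, zero_mul]

lemma warm_aux_warmD_eq (n : ℕ) (hn : 2 ≤ n) (α : ℝ) (w : Fin n → ℝ)
    (η ξ : ℝ) (hη : 0 < η) (hξ : ξ = α/(((n:ℝ)+1)*η^2)) (hηs : ∑ j, w j ^ α = η) :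
    warmD α (starP n) w = Matrix.of (fun i j =>
      (if i = j then ξ*η*(w i)^(α-1) - 1 else 0) - ξ * (w i)^α * (w j)^(α-1)) := by
  have hn1 : ((n:ℝ)+1) ≠ 0 := by positivity
  subst hξ
  ext i j
  simp only [warmD, Matrix.of_apply]
  by_cases hij : i = j
  · subst hij
    rw [if_pos rfl, if_pos rfl]
    have hrw : ∀ A ∈ Finset.univ.filter (fun A : Finset (Fin n) => i ∈ A),
        starP n A * ((∑ j ∈ A, w j ^ α) - w i ^ α) / (∑ j ∈ A, w j ^ α) ^ 2
          = starP n A * (((∑ j ∈ A, w j ^ α) - w i ^ α) / (∑ j ∈ A, w j ^ α) ^ 2) := by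
      intro A _; rw [mul_div_assoc]
    rw [Finset.sum_congr rfl hrw, warm_aux_starP_sum_one n hn i
      (fun A => ((∑ j ∈ A, w j ^ α) - w i ^ α) / (∑ j ∈ A, w j ^ α) ^ 2)]
    simp only [Finset.sum_singleton, sub_self, zero_div, mul_zero, zero_add, hηs]
    field_simp
    ring
  · rw [if_neg hij, if_neg hij]
    have hrw : ∀ A ∈ Finset.univ.filter (fun A : Finset (Fin n) => i ∈ A ∧ j ∈ A),
        starP n A / (∑ l ∈ A, w l ^ α) ^ 2
          = starP n A * (1 / (∑ l ∈ A, w l ^ α) ^ 2) := by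
      intro A _; rw [mul_one_div]
    rw [Finset.sum_congr rfl hrw, warm_aux_starP_sum_two n i j hij
      (fun A => 1 / (∑ l ∈ A, w l ^ α) ^ 2), hηs]
    field_simp
    ring

lemma warm_aux_warmF_eq (n : ℕ) (hn : 2 ≤ n) (α : ℝ) (w : Fin n → ℝ) (i : Fin n) (hwi : 0 < w i)
    (η : ℝ) (hη : 0 < η) (hηs : ∑ j, w j ^ α = η) (h0 : warmF α (starP n) w i = 0) :
    (w i) ^ α = η * (((n:ℝ)+1) * w i - 1) := by
  have hn1 : ((n:ℝ)+1) ≠ 0 := by positivity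
  have hp : (0:ℝ) < w i ^ α := Real.rpow_pos_of_pos hwi α
  unfold warmF at h0
  have hrw : ∀ A ∈ Finset.univ.filter (fun A : Finset (Fin n) => i ∈ A),
      starP n A * w i ^ α / (∑ j ∈ A, w j ^ α)
        = starP n A * (w i ^ α / (∑ j ∈ A, w j ^ α)) := by
    intro A _; rw [mul_div_assoc]
  rw [Finset.sum_congr rfl hrw, warm_aux_starP_sum_one n hn i
    (fun A => w i ^ α / (∑ j ∈ A, w j ^ α)), Finset.sum_singleton, div_self hp.ne', hηs] at h0
  field_simp at h0
  nlinarith [h0]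

open Polynomial in
lemma warm_aux_charpoly_eval {n : ℕ} (M : Matrix (Fin n) (Fin n) ℝ) (z : ℂ) :
    eval z (M.charpoly.map (algebraMap ℝ ℂ))
      = (Matrix.of fun i j => (if i = j then z else 0) - ((M i j : ℝ) : ℂ)).det := by
  rw [Polynomial.eval_map, Matrix.charpoly]
  rw [show Polynomial.eval₂ (algebraMap ℝ ℂ) z (Matrix.charmatrix M).det
    = (Polynomial.eval₂RingHom (algebraMap ℝ ℂ) z) (Matrix.charmatrix M).det from rfl]
  rw [RingHom.map_det]
  congr 1
  ext i j
  by_cases hij : i = j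
  · subst hij
    simp [Matrix.charmatrix_apply_eq, Complex.coe_algebraMap]
  · simp [Matrix.charmatrix_apply_ne _ _ _ hij, hij, Complex.coe_algebraMap]

lemma warm_aux_detlem (n k : ℕ) (hk : k ≤ n) (da db ua ub va vb : ℂ)
    (hda : da ≠ 0) (hdb : db ≠ 0) :
    (Matrix.of fun i j : Fin n =>
        (if i = j then (if (i:ℕ) < k then da else db) else 0)
          + (if (i:ℕ) < k then ua else ub) * (if (j:ℕ) < k then va else vb)).det
      = da ^ k * db ^ (n - k)
        * (1 + ((k:ℂ) * (va * (ua / da)) + ((n-k:ℕ):ℂ) * (vb * (ub / db)))) := by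
  set d : Fin n → ℂ := fun i => if (i:ℕ) < k then da else db with hd
  set u : Fin n → ℂ := fun i => if (i:ℕ) < k then ua else ub with hu
  set v : Fin n → ℂ := fun j => if (j:ℕ) < k then va else vb with hv
  set x : Fin n → ℂ := fun i => u i / d i with hx
  have hdi : ∀ i, d i ≠ 0 := by intro i; rw [hd]; dsimp only; split <;> assumption
  have key : (Matrix.of fun i j : Fin n => (if i = j then d i else 0) + u i * v j)
      = Matrix.diagonal d * (1 + Matrix.replicateCol Unit x * Matrix.replicateRow Unit v) := by
    ext i j
    rw [Matrix.diagonal_mul, Matrix.of_apply, Matrix.add_apply, Matrix.one_apply,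
      show (Matrix.replicateCol Unit x * Matrix.replicateRow Unit v) i j = x i * v j from by
        simp [Matrix.mul_apply]]
    have h2 : d i * (x i * v j) = u i * v j := by
      rw [hx]; dsimp only; field_simp
      rw [mul_comm]
      rw [mul_left_comm, mul_div_cancel_left₀ _ (hdi i), mul_comm]
    rw [mul_add]
    by_cases hij : i = j
    · subst hij; rw [if_pos rfl, if_pos rfl, mul_one, h2]
    · rw [if_neg hij, if_neg hij, mul_zero, zero_add, zero_add, h2]
  rw [show (Matrix.of fun i j : Fin n =>
        (if i = j then (if (i:ℕ) < k then da else db) else 0)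
          + (if (i:ℕ) < k then ua else ub) * (if (j:ℕ) < k then va else vb))
      = (Matrix.of fun i j : Fin n => (if i = j then d i else 0) + u i * v j) from rfl]
  rw [key, Matrix.det_mul, Matrix.det_diagonal, Matrix.det_one_add_replicateCol_mul_replicateRow]
  congr 1
  · rw [hd]; exact warm_aux_prodlem n k hk da db
  · congr 1
    rw [dotProduct]
    have : ∀ i : Fin n, v i * x i
        = if (i:ℕ) < k then va * (ua / da) else vb * (ub / db) := by
      intro i
      rw [hx, hv, hu, hd]
      dsimp only
      split <;> ring
    rw [Finset.sum_congr rfl (fun i _ => this i)]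
    exact warm_aux_sumlem n k hk _ _


set_option maxHeartbeats 1000000 in
/-- **Stability of two-valued star-graph equilibria.** Suppose
`w = (a,…,a,b,…,b)` (value `a` on the first `k` coordinates, `b` on the rest,
`1 ≤ k ≤ n−1`, `a > b > 0`, `k a + (n−k) b = 1`) is an equilibrium of the WARM star
graph.  Then `w` is linearly stable iff either `k = 1` and `ξ (b a)^{α−1} < 1`, or
`k ≥ 2` and `a < α/((α−1)(n+1))`; and `w` is critical if equality holds in the
corresponding condition. -/
theorem star_two_valued_stability (n : ℕ) (hn : 2 ≤ n) (α : ℝ) (hα : 1 < α)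
    (k : ℕ) (hk1 : 1 ≤ k) (hk2 : k ≤ n - 1)
    (a b : ℝ) (hba : b < a) (hb : 0 < b)
    (hsum : (k : ℝ) * a + ((n : ℝ) - (k : ℝ)) * b = 1)
    (heq : ∀ i, warmF α (starP n) (fun i => if (i : ℕ) < k then a else b) i = 0) :
    (LinStable (warmD α (starP n) (fun i => if (i : ℕ) < k then a else b)) ↔
      ((k = 1 ∧ starXi n α a b k * (b * a) ^ (α - 1) < 1) ∨
       (2 ≤ k ∧ a < α / ((α - 1) * ((n : ℝ) + 1))))) ∧
    (((k = 1 ∧ starXi n α a b k * (b * a) ^ (α - 1) = 1) ∨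
       (2 ≤ k ∧ a = α / ((α - 1) * ((n : ℝ) + 1)))) →
      CriticalPt (warmD α (starP n) (fun i => if (i : ℕ) < k then a else b))) := by
  have hkn : k ≤ n := by omega
  have ha : 0 < a := hb.trans hba
  have hα0 : 0 < α := by linarith
  set w : Fin n → ℝ := fun i => if (i : ℕ) < k then a else b with hw
  have hwa : ∀ i : Fin n, (i:ℕ) < k → w i = a := fun i h => if_pos h
  have hwb : ∀ i : Fin n, ¬((i:ℕ) < k) → w i = b := fun i h => if_neg h
  set η : ℝ := (k:ℝ) * a ^ α + ((n - k : ℕ) : ℝ) * b ^ α with hηdef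
  have hcast : ((n - k : ℕ) : ℝ) = (n:ℝ) - (k:ℝ) := Nat.cast_sub hkn
  have hsum' : (k:ℝ) * a + ((n - k : ℕ) : ℝ) * b = 1 := by rw [hcast]; exact hsum
  have hk0 : (0:ℝ) < (k:ℝ) := by exact_mod_cast hk1
  have hη : 0 < η := by
    have h1 : 0 < (k:ℝ) * a ^ α := by positivity
    have h2 : 0 ≤ ((n-k:ℕ):ℝ) * b ^ α := by positivity
    rw [hηdef]; linarith
  have hηs : ∑ j, w j ^ α = η := by
    have hsplit : ∀ j : Fin n, w j ^ α = if (j:ℕ) < k then a^α else b^α := by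
      intro j; rw [hw]; dsimp only; by_cases h : (j:ℕ) < k <;> simp [h]
    rw [Finset.sum_congr rfl (fun j _ => hsplit j), warm_aux_sumlem n k hkn, hηdef]
  set ξ : ℝ := α/(((n:ℝ)+1)*η^2) with hξdef
  have hξ : 0 < ξ := by rw [hξdef]; apply div_pos hα0; positivity
  clear_value w η ξ
  -- equilibrium identities
  have hea : a ^ α = η * (((n:ℝ)+1) * a - 1) := by
    have h0k : (0:ℕ) < k := hk1
    have hia : w ⟨0, by omega⟩ = a := hwa ⟨0, by omega⟩ h0k
    have h := warm_aux_warmF_eq n hn α w ⟨0, by omega⟩ (by rw [hia]; exact ha) η hη hηs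
      (heq ⟨0, by omega⟩)
    rwa [hia] at h
  have heb : b ^ α = η * (((n:ℝ)+1) * b - 1) := by
    have hkk : ¬ ((k:ℕ) < k) := lt_irrefl k
    have hib : w ⟨k, by omega⟩ = b := hwb ⟨k, by omega⟩ hkk
    have h := warm_aux_warmF_eq n hn α w ⟨k, by omega⟩ (by rw [hib]; exact hb) η hη hηs
      (heq ⟨k, by omega⟩)
    rwa [hib] at h
  -- mean value theorem
  obtain ⟨c, hcmem, hslope⟩ : ∃ c ∈ Set.Ioo b a,
      α * c^(α-1) = (a^α - b^α)/(a-b) := by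
    have hcont : ContinuousOn (fun x : ℝ => x ^ α) (Set.Icc b a) := by
      intro x hx
      exact (Real.continuousAt_rpow_const x α
        (Or.inl (ne_of_gt (lt_of_lt_of_le hb hx.1)))).continuousWithinAt
    have hderiv : ∀ x ∈ Set.Ioo b a, HasDerivAt (fun x : ℝ => x ^ α) (α * x^(α-1)) x := by
      intro x hx
      exact Real.hasDerivAt_rpow_const (Or.inl (ne_of_gt (hb.trans hx.1)))
    exact exists_hasDerivAt_eq_slope (fun x : ℝ => x ^ α) (fun x => α * x^(α-1))
      hba hcont hderiv
  have hcb : b < c := hcmem.1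
  have hca : c < a := hcmem.2
  have hc0 : 0 < c := hb.trans hcb
  have hab0 : a - b ≠ 0 := by intro h; nlinarith
  have hslope' : α * c^(α-1) * (a - b) = a^α - b^α := by
    rw [eq_div_iff hab0] at hslope; exact hslope
  have hkey : α * c^(α-1) = ((n:ℝ)+1)*η := by
    have h2 : α * c^(α-1) * (a-b) = ((n:ℝ)+1)*η*(a-b) := by
      rw [hslope', hea, heb]; ring
    exact mul_right_cancel₀ hab0 h2
  have hA1 : ((n:ℝ)+1)*η < α * a^(α-1) := by
    have h1 : c^(α-1) < a^(α-1) := Real.rpow_lt_rpow hc0.le hca (by linarith)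
    nlinarith [hkey]
  have hB1 : α * b^(α-1) < ((n:ℝ)+1)*η := by
    have h1 : b^(α-1) < c^(α-1) := Real.rpow_lt_rpow hb.le hcb (by linarith)
    nlinarith [hkey]
  have haa : a ^ α = a^(α-1) * a := by
    have h := Real.rpow_add_one ha.ne' (α-1)
    rw [sub_add_cancel] at h
    exact h
  have hbb : b ^ α = b^(α-1) * b := by
    have h := Real.rpow_add_one hb.ne' (α-1)
    rw [sub_add_cancel] at h
    exact h
  have hth : α/((α-1)*((n:ℝ)+1)) < a := by
    have hpos : (0:ℝ) < (α-1)*((n:ℝ)+1) := by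
      have : (0:ℝ) < (n:ℝ)+1 := by positivity
      nlinarith
    rw [div_lt_iff₀ hpos]
    have hstep : η*(a*((n:ℝ)+1)) < η*(α*(((n:ℝ)+1)*a-1)) := by
      nlinarith [mul_lt_mul_of_pos_right hA1 ha, hea, haa]
    have hstep2 : a*((n:ℝ)+1) < α*(((n:ℝ)+1)*a-1) := (mul_lt_mul_iff_right₀ hη).mp hstep
    nlinarith [hstep2]
  have hA' : 1 < ξ*η*a^(α-1) := by
    have hrw : ξ*η*a^(α-1) = (α*a^(α-1))/(((n:ℝ)+1)*η) := by
      rw [hξdef]; field_simp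
    rw [hrw, lt_div_iff₀ (by positivity)]
    linarith [hA1]
  have hB' : ξ*η*b^(α-1) < 1 := by
    have hrw : ξ*η*b^(α-1) = (α*b^(α-1))/(((n:ℝ)+1)*η) := by
      rw [hξdef]; field_simp
    rw [hrw, div_lt_one (by positivity)]
    linarith [hB1]
  have hestat : starXi n α a b k * (b*a)^(α-1) = ξ*(a^(α-1)*b^(α-1)) := by
    rw [starXi, ← hcast, ← hηdef, ← hξdef, Real.mul_rpow hb.le ha.le]
    ring
  have hη' : η = (k:ℝ)*(a^(α-1)*a) + ((n-k:ℕ):ℝ)*(b^(α-1)*b) := by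
    rw [hηdef, haa, hbb]
  have hI1 : ξ*η*a^(α-1) + ξ*η*b^(α-1)
      - ((k:ℝ)*(a^(α-1)*(ξ*a^α)) + ((n-k:ℕ):ℝ)*(b^(α-1)*(ξ*b^α))) = ξ*(a^(α-1)*b^(α-1)) := by
    rw [haa, hbb, hη']
    linear_combination (ξ*(a^(α-1))*(b^(α-1))) * hsum'
  have hI2 : (ξ*η*a^(α-1)) * (ξ*η*b^(α-1))
      = ((k:ℝ)*(a^(α-1)*(ξ*a^α))) * (ξ*η*b^(α-1))
        + (((n-k:ℕ):ℝ)*(b^(α-1)*(ξ*b^α))) * (ξ*η*a^(α-1)) := by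
    rw [haa, hbb, hη']
    ring

  have hD := warm_aux_warmD_eq n hn α w η ξ hη hξdef hηs
  have hdet : ∀ z : ℂ, z ≠ ((ξ*η*a^(α-1) : ℝ) : ℂ) - 1 → z ≠ ((ξ*η*b^(α-1) : ℝ) : ℂ) - 1 →
      Polynomial.eval z ((warmD α (starP n) w).charpoly.map (algebraMap ℝ ℂ))
        = (z - (((ξ*η*a^(α-1) : ℝ) : ℂ) - 1))^(k-1)
          * ((z - (((ξ*η*b^(α-1) : ℝ) : ℂ) - 1))^(n-k-1)
            * ((z - (-1)) * (z - (((ξ*(a^(α-1)*b^(α-1)) : ℝ) : ℂ) - 1)))) := by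
    intro z hzA hzB
    have hda : z - (((ξ*η*a^(α-1) : ℝ) : ℂ) - 1) ≠ 0 := sub_ne_zero.mpr hzA
    have hdb : z - (((ξ*η*b^(α-1) : ℝ) : ℂ) - 1) ≠ 0 := sub_ne_zero.mpr hzB
    rw [warm_aux_charpoly_eval]
    have hmat : (Matrix.of fun i j => (if i = j then z else 0)
          - (((warmD α (starP n) w) i j : ℝ) : ℂ))
        = Matrix.of (fun i j : Fin n =>
          (if i = j then (if (i:ℕ) < k then z - (((ξ*η*a^(α-1) : ℝ) : ℂ) - 1)
              else z - (((ξ*η*b^(α-1) : ℝ) : ℂ) - 1)) else 0)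
            + (if (i:ℕ) < k then ((ξ*a^α : ℝ) : ℂ) else ((ξ*b^α : ℝ) : ℂ))
              * (if (j:ℕ) < k then ((a^(α-1) : ℝ) : ℂ) else ((b^(α-1) : ℝ) : ℂ))) := by
      ext i j
      rw [hD]
      simp only [Matrix.of_apply]
      by_cases hij : i = j
      · subst hij
        rw [if_pos rfl, if_pos rfl]
        by_cases hik : (i:ℕ) < k
        · rw [hwa i hik, if_pos hik, if_pos hik, if_pos hik]
          push_cast
          simp only [if_true]
          ring
        · rw [hwb i hik, if_neg hik, if_neg hik, if_neg hik]
          push_cast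
          simp only [if_true]
          ring
      · by_cases hik : (i:ℕ) < k <;> by_cases hjk : (j:ℕ) < k
        · simp only [hwa i hik, hwa j hjk, hij, hik, hjk, if_true, if_false, ite_true, ite_false]
          push_cast; ring
        · simp only [hwa i hik, hwb j hjk, hij, hik, hjk, if_true, if_false, ite_true, ite_false]
          push_cast; ring
        · simp only [hwb i hik, hwa j hjk, hij, hik, hjk, if_true, if_false, ite_true, ite_false]
          push_cast; ring
        · simp only [hwb i hik, hwb j hjk, hij, hik, hjk, if_true, if_false, ite_true, ite_false]
          push_cast; ring
    rw [hmat, warm_aux_detlem n k hkn _ _ _ _ _ _ hda hdb]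
    have hcore : (z - (((ξ*η*a^(α-1) : ℝ) : ℂ) - 1)) * (z - (((ξ*η*b^(α-1) : ℝ) : ℂ) - 1)) *
        (1 + ((k:ℂ) * (((a^(α-1):ℝ):ℂ) * (((ξ*a^α:ℝ):ℂ) / (z - (((ξ*η*a^(α-1):ℝ):ℂ) - 1)))) +
          ((n-k:ℕ):ℂ) * (((b^(α-1):ℝ):ℂ) * (((ξ*b^α:ℝ):ℂ) / (z - (((ξ*η*b^(α-1):ℝ):ℂ) - 1))))))
        = (z - (-1)) * (z - (((ξ*(a^(α-1)*b^(α-1)):ℝ):ℂ) - 1)) := by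
      have cI1 := congrArg (fun r : ℝ => (r:ℂ)) hI1
      have cI2 := congrArg (fun r : ℝ => (r:ℂ)) hI2
      push_cast [Nat.cast_sub hkn] at cI1 cI2
      have hda' := hda
      have hdb' := hdb
      push_cast at hda' hdb'
      push_cast [Nat.cast_sub hkn]
      field_simp
      linear_combination (-(z+1)) * cI1 + cI2
    have hpa : ∀ t : ℂ, t^k = t^(k-1) * t := by
      intro t; rw [← pow_succ]; congr 1; omega
    have hpb : ∀ t : ℂ, t^(n-k) = t^(n-k-1) * t := by
      intro t; rw [← pow_succ]; congr 1; omega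
    rw [hpa, hpb]
    linear_combination ((z - (((ξ*η*a^(α-1) : ℝ) : ℂ) - 1))^(k-1)
      * (z - (((ξ*η*b^(α-1) : ℝ) : ℂ) - 1))^(n-k-1)) * hcore

  have hq : (warmD α (starP n) w).charpoly.map (algebraMap ℝ ℂ)
      = (Polynomial.X - Polynomial.C (((ξ*η*a^(α-1):ℝ):ℂ) - 1))^(k-1)
        * ((Polynomial.X - Polynomial.C (((ξ*η*b^(α-1):ℝ):ℂ) - 1))^(n-k-1)
          * ((Polynomial.X - Polynomial.C (-1:ℂ))
            * (Polynomial.X - Polynomial.C (((ξ*(a^(α-1)*b^(α-1)):ℝ):ℂ) - 1)))) := by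
    apply Polynomial.eq_of_infinite_eval_eq
    have hinf := (Set.toFinite ({((ξ*η*a^(α-1):ℝ):ℂ) - 1,
      ((ξ*η*b^(α-1):ℝ):ℂ) - 1} : Set ℂ)).infinite_compl
    apply hinf.mono
    intro z hz
    simp only [Set.mem_compl_iff, Set.mem_insert_iff, Set.mem_singleton_iff, not_or] at hz
    simp only [Set.mem_setOf_eq]
    rw [hdet z hz.1 hz.2]
    simp only [Polynomial.eval_mul, Polynomial.eval_pow, Polynomial.eval_sub,
      Polynomial.eval_X, Polynomial.eval_C]
  have hroot : ∀ μ : ℂ, IsEigenvalue (warmD α (starP n) w) μ ↔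
      ((μ = ((ξ*η*a^(α-1):ℝ):ℂ) - 1 ∧ k-1 ≠ 0) ∨
        ((μ = ((ξ*η*b^(α-1):ℝ):ℂ) - 1 ∧ n-k-1 ≠ 0) ∨
          (μ = -1 ∨ μ = ((ξ*(a^(α-1)*b^(α-1)):ℝ):ℂ) - 1))) := by
    intro μ
    rw [IsEigenvalue, hq]
    simp only [Polynomial.IsRoot, Polynomial.eval_mul, Polynomial.eval_pow,
      Polynomial.eval_sub, Polynomial.eval_X, Polynomial.eval_C, mul_eq_zero,
      pow_eq_zero_iff', sub_eq_zero]
  have hrea : ∀ r : ℝ, ((r:ℂ) - 1).re = r - 1 := by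
    intro r; simp
  constructor
  · constructor
    · intro hstab
      have he := hstab (((ξ*(a^(α-1)*b^(α-1)):ℝ):ℂ) - 1)
        ((hroot _).mpr (Or.inr (Or.inr (Or.inr rfl))))
      rw [hrea] at he
      by_cases hk : k = 1
      · left
        refine ⟨hk, ?_⟩
        rw [hestat]
        linarith
      · exfalso
        have hA := hstab (((ξ*η*a^(α-1):ℝ):ℂ) - 1)
          ((hroot _).mpr (Or.inl ⟨rfl, by omega⟩))
        rw [hrea] at hA
        linarith
    · rintro (⟨hk, he⟩ | ⟨hk2', hath⟩)
      · intro μ hμ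
        rcases (hroot μ).mp hμ with ⟨rfl, hne⟩ | (⟨rfl, hne⟩ | (rfl | rfl))
        · exact absurd (by omega : k - 1 = 0) hne
        · rw [hrea]; linarith [hB']
        · simp only [Complex.neg_re, Complex.one_re]; norm_num
        · rw [hrea]
          rw [hestat] at he
          linarith
      · exfalso; linarith [hth]
  · rintro (⟨hk, he⟩ | ⟨hk2', haeq⟩)
    · rw [hestat] at he
      constructor
      · intro hstab
        have h0 := hstab (((ξ*(a^(α-1)*b^(α-1)):ℝ):ℂ) - 1)
          ((hroot _).mpr (Or.inr (Or.inr (Or.inr rfl))))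
        rw [hrea] at h0
        linarith
      · rintro ⟨μ, hμ, hpos⟩
        rcases (hroot μ).mp hμ with ⟨rfl, hne⟩ | (⟨rfl, hne⟩ | (rfl | rfl))
        · exact hne (by omega)
        · rw [hrea] at hpos; linarith [hB']
        · simp only [Complex.neg_re, Complex.one_re] at hpos; linarith
        · rw [hrea] at hpos; linarith
    · exfalso; linarith [hth]


end
end
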